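/- arXiv:1603.07708 — 6 statements merged into one kernel-verified Lean document; each statement's English description precedes it below -/
import Mathlib

section
/- Let p be a prime. Every coefficient of the Artin–Hasse exponential E_p(x) = exp(∑_{n≥0} x^{p^n}/p^n) ∈ ℚ[[x]] is p-integral, i.e., lies in the localization ℤ_(p) of ℤ at p; consequently E_p may be regarded as a formal power series with coefficients in ℤ_p. -/
open scoped Classical

/-- The formal power series `∑_{n≥0} x^{p^n}/p^n ∈ ℚ[[x]]`; its coefficient at
exponent `N = p^m` is `1/p^m = 1/N`, and all other coefficients vanish. -/
noncomputable def artinHasseLog (p : ℕ) : PowerSeries ℚ :=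
  PowerSeries.mk fun N => if ∃ m : ℕ, N = p ^ m then (N : ℚ)⁻¹ else 0

/-- The `n`-th coefficient of the Artin--Hasse exponential
`E_p(x) = exp(∑_{n≥0} x^{p^n}/p^n) = ∑_{k≥0} (∑_{n≥0} x^{p^n}/p^n)^k / k!`.
Since `artinHasseLog p` has zero constant term, only the terms with `k ≤ n`
contribute to the coefficient of `x^n`. -/
noncomputable def artinHasseCoeff (p n : ℕ) : ℚ :=
  ∑ k ∈ Finset.range (n + 1),
    (Nat.factorial k : ℚ)⁻¹ * PowerSeries.coeff (R := ℚ) n (artinHasseLog p ^ k)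

/-- The Artin--Hasse exponential `E_p(x) ∈ ℚ[[x]]`. -/
noncomputable def artinHasse (p : ℕ) : PowerSeries ℚ :=
  PowerSeries.mk (artinHasseCoeff p)

namespace AH

open PowerSeries Finset

variable (p : ℕ)

lemma constantCoeff_log : constantCoeff (R := ℚ) (artinHasseLog p) = 0 := by
  rw [← coeff_zero_eq_constantCoeff_apply]
  simp only [artinHasseLog, coeff_mk]
  split <;> simp

lemma coeff_log_pow_eq_zero {k n : ℕ} (h : n < k) :
    coeff (R := ℚ) n (artinHasseLog p ^ k) = 0 := by
  have hX : (X : ℚ⟦X⟧) ^ k ∣ artinHasseLog p ^ k :=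
    pow_dvd_pow_of_dvd (X_dvd_iff.mpr (constantCoeff_log p)) k
  have := ((X_pow_dvd_iff).mp hX) n h
  exact this

lemma coeff_artinHasse (n : ℕ) : coeff (R := ℚ) n (artinHasse p) = artinHasseCoeff p n :=
  coeff_mk _ _

lemma artinHasseCoeff_eq (n M : ℕ) (h : n < M) :
    artinHasseCoeff p n = ∑ k ∈ range M,
      (Nat.factorial k : ℚ)⁻¹ * coeff (R := ℚ) n (artinHasseLog p ^ k) := by
  rw [artinHasseCoeff]
  apply Finset.sum_subset
  · exact Finset.range_subset_range.mpr h
  · intro k _ hk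
    rw [Finset.mem_range, not_lt] at hk
    rw [coeff_log_pow_eq_zero p (Nat.lt_of_succ_le hk), mul_zero]

lemma artinHasseCoeff_zero : artinHasseCoeff p 0 = 1 := by
  simp [artinHasseCoeff]

end AH

namespace AH
open PowerSeries Finset

variable (p : ℕ)

lemma deriv_artinHasse :
    d⁄dX ℚ (artinHasse p) = d⁄dX ℚ (artinHasseLog p) * artinHasse p := by
  set L := artinHasseLog p with hL
  ext n
  have key : ∀ k : ℕ, coeff (R := ℚ) (n+1) (L ^ k) * ((n:ℚ)+1)
      = (k:ℚ) * coeff (R := ℚ) n (L ^ (k-1) * d⁄dX ℚ L) := by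
    intro k
    have h1 : coeff (R := ℚ) n (d⁄dX ℚ (L ^ k)) = coeff (R := ℚ) (n+1) (L^k) * ((n:ℚ)+1) := by
      rw [coeff_derivative]
    rw [← h1, Derivation.leibniz_pow, smul_eq_mul, map_nsmul, nsmul_eq_mul]
  -- LHS
  rw [coeff_derivative, coeff_artinHasse, artinHasseCoeff_eq p (n+1) (n+2) (by omega),
    Finset.sum_mul]
  have lhs_eq : ∀ k ∈ range (n+2),
      (Nat.factorial k : ℚ)⁻¹ * coeff (R := ℚ) (n+1) (L ^ k) * ((n:ℚ)+1)
      = (Nat.factorial k : ℚ)⁻¹ * ((k:ℚ) * coeff (R := ℚ) n (L ^ (k-1) * d⁄dX ℚ L)) := by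
    intro k _
    rw [mul_assoc, key k]
  rw [Finset.sum_congr rfl lhs_eq, Finset.sum_range_succ']
  simp only [Nat.cast_zero, zero_mul, mul_zero, add_zero]
  have step : ∀ j : ℕ, (Nat.factorial (j+1) : ℚ)⁻¹ * (((j:ℚ)+1) * coeff (R := ℚ) n (L ^ j * d⁄dX ℚ L))
      = (Nat.factorial j : ℚ)⁻¹ * coeff (R := ℚ) n (L ^ j * d⁄dX ℚ L) := by
    intro j
    rw [Nat.factorial_succ]
    have h0 : ((j:ℚ)+1) ≠ 0 := by positivity
    have h1 : (Nat.factorial j : ℚ) ≠ 0 := Nat.cast_ne_zero.mpr (Nat.factorial_ne_zero j)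
    push_cast
    field_simp
  have lhs2 : ∑ j ∈ range (n+1),
      (Nat.factorial (j+1) : ℚ)⁻¹ * (((j:ℚ)+1) * coeff (R := ℚ) n (L ^ j * d⁄dX ℚ L))
      = ∑ j ∈ range (n+1), (Nat.factorial j : ℚ)⁻¹ * coeff (R := ℚ) n (L ^ j * d⁄dX ℚ L) := by
    refine Finset.sum_congr rfl fun j _ => ?_
    exact step j
  simp only [Nat.cast_add, Nat.cast_one, Nat.add_sub_cancel] at *
  rw [lhs2]
  -- RHS
  have rhs_eq : coeff (R := ℚ) n (d⁄dX ℚ L * artinHasse p)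
      = ∑ k ∈ range (n+1), (Nat.factorial k : ℚ)⁻¹ * coeff (R := ℚ) n (d⁄dX ℚ L * L ^ k) := by
    rw [coeff_mul]
    have hx : ∀ x ∈ antidiagonal n,
        coeff (R := ℚ) x.1 (d⁄dX ℚ L) * coeff (R := ℚ) x.2 (artinHasse p)
        = ∑ k ∈ range (n+1),
            (Nat.factorial k : ℚ)⁻¹ * (coeff (R := ℚ) x.1 (d⁄dX ℚ L) * coeff (R := ℚ) x.2 (L ^ k)) := by
      intro x hx
      have hx2 : x.2 ≤ n := by
        have := Finset.HasAntidiagonal.antidiagonal.fst_le hx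
        have h2 := Finset.HasAntidiagonal.antidiagonal.snd_le hx
        exact h2
      rw [coeff_artinHasse, artinHasseCoeff_eq p x.2 (n+1) (by omega), Finset.mul_sum]
      refine Finset.sum_congr rfl fun k _ => ?_
      ring
    rw [Finset.sum_congr rfl hx, Finset.sum_comm]
    refine Finset.sum_congr rfl fun k _ => ?_
    rw [coeff_mul, Finset.mul_sum]
  rw [rhs_eq]
  refine Finset.sum_congr rfl fun k _ => ?_
  rw [mul_comm (L ^ k) (d⁄dX ℚ L)]

end AH

namespace AH
open PowerSeries Finset

variable (p : ℕ)

noncomputable def plug (p : ℕ) (f : PowerSeries ℚ) : PowerSeries ℚ :=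
  PowerSeries.mk fun N => if p ∣ N then coeff (R := ℚ) (N / p) f else 0

lemma coeff_plug (f : PowerSeries ℚ) (N : ℕ) :
    coeff (R := ℚ) N (plug p f) = if p ∣ N then coeff (R := ℚ) (N / p) f else 0 :=
  coeff_mk _ _

lemma plug_mul (hp : 0 < p) (f g : PowerSeries ℚ) :
    plug p (f * g) = plug p f * plug p g := by
  ext N
  rw [coeff_plug]
  by_cases h : p ∣ N
  · obtain ⟨M, rfl⟩ := h
    rw [if_pos (dvd_mul_right p M), Nat.mul_div_cancel_left M hp, coeff_mul, coeff_mul]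
    symm
    rw [← Finset.sum_filter_of_ne (p := fun x => p ∣ x.1 ∧ p ∣ x.2)]
    · refine Finset.sum_nbij' (fun x => (x.1 / p, x.2 / p)) (fun y => (p * y.1, p * y.2))
        ?_ ?_ ?_ ?_ ?_
      · rintro ⟨x1, x2⟩ hx
        simp only [Finset.mem_filter, Finset.HasAntidiagonal.mem_antidiagonal] at hx
        obtain ⟨hsum, ⟨a, rfl⟩, ⟨b, rfl⟩⟩ := hx
        have hab : a + b = M :=
          Nat.eq_of_mul_eq_mul_left hp (by rw [Nat.mul_add]; exact hsum)
        simp [Nat.mul_div_cancel_left _ hp, Finset.HasAntidiagonal.mem_antidiagonal, hab]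
      · rintro ⟨y1, y2⟩ hy
        rw [Finset.HasAntidiagonal.mem_antidiagonal] at hy
        simp only [Finset.mem_filter, Finset.HasAntidiagonal.mem_antidiagonal]
        exact ⟨by rw [← Nat.mul_add, hy], dvd_mul_right p _, dvd_mul_right p _⟩
      · rintro ⟨x1, x2⟩ hx
        simp only [Finset.mem_filter, Finset.HasAntidiagonal.mem_antidiagonal] at hx
        obtain ⟨hsum, ⟨a, rfl⟩, ⟨b, rfl⟩⟩ := hx
        simp [Nat.mul_div_cancel_left _ hp]
      · rintro ⟨y1, y2⟩ hy
        simp [Nat.mul_div_cancel_left _ hp]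
      · rintro ⟨x1, x2⟩ hx
        simp only [Finset.mem_filter, Finset.HasAntidiagonal.mem_antidiagonal] at hx
        obtain ⟨hsum, ⟨a, rfl⟩, ⟨b, rfl⟩⟩ := hx
        rw [coeff_plug, coeff_plug, if_pos (dvd_mul_right p a), if_pos (dvd_mul_right p b),
          Nat.mul_div_cancel_left _ hp, Nat.mul_div_cancel_left _ hp]
    · rintro ⟨x1, x2⟩ hx hne
      by_contra hcon
      apply hne
      by_cases h1 : p ∣ x1
      · have h2 : ¬ p ∣ x2 := fun h2 => hcon ⟨h1, h2⟩
        rw [coeff_plug, coeff_plug, if_neg h2, mul_zero]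
      · rw [coeff_plug, if_neg h1, zero_mul]
  · rw [if_neg h, coeff_mul]
    symm
    apply Finset.sum_eq_zero
    rintro ⟨x1, x2⟩ hx
    rw [Finset.HasAntidiagonal.mem_antidiagonal] at hx
    by_cases h1 : p ∣ x1
    · have h2 : ¬ p ∣ x2 := fun h2 => h (hx ▸ dvd_add h1 h2)
      rw [coeff_plug, coeff_plug, if_neg h2, mul_zero]
    · rw [coeff_plug, if_neg h1, zero_mul]

end AH

namespace AH
open PowerSeries Finset

variable (p : ℕ)

lemma plug_deriv (hp : 1 < p) (f : PowerSeries ℚ) :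
    d⁄dX ℚ (plug p f) = (p : ℚ) • (X ^ (p - 1) * plug p (d⁄dX ℚ f)) := by
  have hp0 : 0 < p := by omega
  ext n
  rw [coeff_derivative, coeff_plug, map_smul, smul_eq_mul, coeff_X_pow_mul']
  by_cases h : p ∣ (n + 1)
  · obtain ⟨m, hm⟩ := h
    obtain ⟨m', rfl⟩ : ∃ m', m = m' + 1 :=
      ⟨m - 1, by cases m with
        | zero => rw [Nat.mul_zero] at hm; omega
        | succ m'' => simp⟩
    have hnn : n + 1 = p * m' + p := by rw [hm, Nat.mul_succ]
    rw [if_pos (show p ∣ n + 1 from ⟨m' + 1, hm⟩),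
      if_pos (show p - 1 ≤ n by omega)]
    have hsub : n - (p - 1) = p * m' := by omega
    rw [hsub, coeff_plug, if_pos (dvd_mul_right p m'),
      Nat.mul_div_cancel_left _ hp0, coeff_derivative, hm,
      Nat.mul_div_cancel_left _ hp0]
    have hcast : ((n : ℚ) + 1) = (p : ℚ) * ((m' : ℚ) + 1) := by
      have h9 : ((n + 1 : ℕ) : ℚ) = ((p * (m' + 1) : ℕ) : ℚ) := by rw [hm]
      push_cast at h9
      linarith
    rw [hcast]
    push_cast
    ring
  · rw [if_neg h, zero_mul]
    by_cases h2 : p - 1 ≤ n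
    · rw [if_pos h2, coeff_plug, if_neg, mul_zero]
      intro hd
      apply h
      obtain ⟨k, hk⟩ := hd
      exact ⟨k + 1, by rw [Nat.mul_succ]; omega⟩
    · rw [if_neg h2, mul_zero]

lemma coeff_deriv_log (N : ℕ) :
    coeff (R := ℚ) N (d⁄dX ℚ (artinHasseLog p)) = if ∃ m, N + 1 = p ^ m then 1 else 0 := by
  rw [coeff_derivative, artinHasseLog, coeff_mk]
  split
  · have hne : ((N : ℚ) + 1) ≠ 0 := by positivity
    push_cast
    field_simp
  · rw [zero_mul]

lemma deriv_log_eq (hp : p.Prime) :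
    d⁄dX ℚ (artinHasseLog p) =
      1 + X ^ (p - 1) * plug p (d⁄dX ℚ (artinHasseLog p)) := by
  have hp1 : 1 < p := hp.one_lt
  have hp0 : 0 < p := by omega
  ext n
  rw [map_add, coeff_deriv_log, coeff_one, coeff_X_pow_mul']
  by_cases hn : n = 0
  · subst hn
    rw [if_pos ⟨0, by simp⟩, if_pos rfl, if_neg (by omega : ¬ p - 1 ≤ 0), add_zero]
  · have hlz : ¬ p ∣ n + 1 → ¬ ∃ m, n + 1 = p ^ m := by
      rintro hnd ⟨m, hm⟩
      match m with
      | 0 => simp at hm; omega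
      | Nat.succ m' => exact hnd (hm ▸ dvd_pow_self p (Nat.succ_ne_zero m'))
    rw [if_neg hn, zero_add]
    by_cases h2 : p - 1 ≤ n
    · rw [if_pos h2, coeff_plug]
      by_cases h3 : p ∣ n - (p - 1)
      · obtain ⟨k, hk⟩ := h3
        have hnp : n + 1 = p * (k + 1) := by rw [Nat.mul_succ]; omega
        rw [if_pos (show p ∣ n - (p - 1) from ⟨k, hk⟩), hk,
          Nat.mul_div_cancel_left _ hp0, coeff_deriv_log]
        have hiff : (∃ m, n + 1 = p ^ m) ↔ (∃ m, k + 1 = p ^ m) := by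
          constructor
          · rintro ⟨m, hm⟩
            match m with
            | 0 => simp at hm; omega
            | Nat.succ m' =>
              refine ⟨m', ?_⟩
              have hpm : p * (k + 1) = p * p ^ m' := by
                rw [← hnp, hm, pow_succ, mul_comm]
              exact Nat.eq_of_mul_eq_mul_left hp0 hpm
          · rintro ⟨m, hm⟩
            exact ⟨m + 1, by rw [hnp, hm, pow_succ, mul_comm]⟩
        by_cases h4 : ∃ m, k + 1 = p ^ m
        · rw [if_pos (show (∃ m, n + 1 = p ^ m) from hiff.mpr h4),
            if_pos (show (∃ m, k + 1 = p ^ m) from h4)]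
        · rw [if_neg (show ¬ (∃ m, n + 1 = p ^ m) from fun h => h4 (hiff.mp h)),
            if_neg (show ¬ (∃ m, k + 1 = p ^ m) from h4)]
      · have hnd : ¬ p ∣ n + 1 := by
          intro hd
          apply h3
          obtain ⟨k, hk⟩ := hd
          obtain ⟨k', rfl⟩ : ∃ k', k = k' + 1 :=
            ⟨k - 1, by cases k with
              | zero => rw [Nat.mul_zero] at hk; omega
              | succ k'' => simp⟩
          rw [Nat.mul_succ] at hk
          exact ⟨k', by omega⟩
        rw [if_neg h3, if_neg (hlz hnd)]
    · rw [if_neg h2]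
      rw [if_neg]
      rintro ⟨m, hm⟩
      match m with
      | 0 => simp at hm; omega
      | Nat.succ m' =>
        have hle : p ≤ p ^ (m' + 1) := Nat.le_self_pow (Nat.succ_ne_zero m') p
        simp only [Nat.succ_eq_add_one] at hm
        omega

lemma deriv_rescale_exp :
    d⁄dX ℚ (rescale (p : ℚ) (exp ℚ)) = (p : ℚ) • rescale (p : ℚ) (exp ℚ) := by
  ext n
  rw [coeff_derivative, map_smul, smul_eq_mul, coeff_rescale, coeff_rescale, coeff_exp, coeff_exp]
  have h1 : (Nat.factorial n : ℚ) ≠ 0 := Nat.cast_ne_zero.mpr (Nat.factorial_ne_zero n)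
  have h2 : (Nat.factorial (n + 1) : ℚ) ≠ 0 := Nat.cast_ne_zero.mpr (Nat.factorial_ne_zero _)
  simp only [Algebra.algebraMap_self, RingHom.id_apply] at *
  rw [Nat.factorial_succ] at *
  push_cast at *
  field_simp
  ring

lemma ode_unique (g f h : PowerSeries ℚ) (hf : d⁄dX ℚ f = g * f) (hh : d⁄dX ℚ h = g * h)
    (h0 : coeff (R := ℚ) 0 f = coeff (R := ℚ) 0 h) : f = h := by
  ext n
  induction n using Nat.strong_induction_on with
  | _ n ih =>
    match n with
    | 0 => exact h0
    | Nat.succ m =>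
      have e1 : coeff (R := ℚ) m (d⁄dX ℚ f) = coeff (R := ℚ) m (d⁄dX ℚ h) := by
        rw [hf, hh, coeff_mul, coeff_mul]
        refine Finset.sum_congr rfl fun x hx => ?_
        rw [Finset.HasAntidiagonal.mem_antidiagonal] at hx
        rw [ih x.2 (by omega : x.2 < m + 1)]
      rw [coeff_derivative, coeff_derivative] at e1
      have hm1 : ((m : ℚ) + 1) ≠ 0 := by positivity
      exact mul_right_cancel₀ hm1 e1

end AH

namespace AH
open PowerSeries Finset

variable (p : ℕ)

lemma constantCoeff_artinHasse : coeff (R := ℚ) 0 (artinHasse p) = 1 := by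
  rw [coeff_artinHasse, artinHasseCoeff_zero]

lemma main_identity (hp : p.Prime) :
    artinHasse p ^ p = rescale (p : ℚ) (exp ℚ) * plug p (artinHasse p) := by
  have hp1 : 1 < p := hp.one_lt
  have hp0 : 0 < p := by omega
  set L := artinHasseLog p with hLdef
  set E := artinHasse p with hEdef
  apply ode_unique ((p : ℚ) • d⁄dX ℚ L)
  · -- d(E^p) = (p • dL) * E^p
    rw [Derivation.leibniz_pow, smul_eq_mul, deriv_artinHasse]
    rw [← Nat.cast_smul_eq_nsmul ℚ]
    have hpow : E ^ (p - 1) * E = E ^ p := by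
      rw [← pow_succ]
      congr 1
      omega
    rw [smul_mul_assoc]
    rw [show E ^ (p - 1) * (d⁄dX ℚ L * E) = d⁄dX ℚ L * (E ^ (p - 1) * E) by ring, hpow]
  · -- d(G) = (p • dL) * G
    rw [Derivation.leibniz, deriv_rescale_exp, plug_deriv p hp1, deriv_artinHasse,
      plug_mul p hp0]
    have hrw : (p : ℚ) • d⁄dX ℚ L
        = (p : ℚ) • (1 : PowerSeries ℚ) + (p : ℚ) • (X ^ (p - 1) * plug p (d⁄dX ℚ L)) := by
      rw [← smul_add, ← deriv_log_eq p hp]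
    rw [hrw]
    simp only [smul_eq_mul, smul_eq_C_mul]
    ring
  · have h1 : constantCoeff (R := ℚ) E = 1 := by
      have := constantCoeff_artinHasse p
      rwa [coeff_zero_eq_constantCoeff_apply] at this
    have h2 : constantCoeff (R := ℚ) (rescale (p : ℚ) (exp ℚ)) = 1 := by
      rw [← coeff_zero_eq_constantCoeff_apply, coeff_rescale, coeff_exp]
      simp
    have h3 : constantCoeff (R := ℚ) (plug p E) = 1 := by
      rw [← coeff_zero_eq_constantCoeff_apply, coeff_plug, if_pos (dvd_zero p),
        Nat.zero_div, coeff_zero_eq_constantCoeff_apply, h1]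
    rw [coeff_zero_eq_constantCoeff_apply, coeff_zero_eq_constantCoeff_apply,
      map_pow, map_mul, h1, h2, h3, one_pow, one_mul]

end AH

namespace AH
open PowerSeries Finset

variable (p : ℕ)

lemma coeff_pow_eq (hp : p.Prime) (n : ℕ) (hn : 1 ≤ n) :
    coeff (R := ℚ) n (artinHasse p ^ p)
      = coeff (R := ℚ) n ((↑(trunc n (artinHasse p)) : PowerSeries ℚ) ^ p)
        + p * artinHasseCoeff p n := by
  obtain ⟨q, hq⟩ : ∃ q, p = q + 1 := ⟨p - 1, by have := hp.one_lt; omega⟩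
  subst hq
  set E := artinHasse (q + 1) with hE
  set T : PowerSeries ℚ := ↑(trunc n E) with hT
  set S : PowerSeries ℚ := PowerSeries.mk fun k => artinHasseCoeff (q + 1) (n + k) with hS
  have hccT : constantCoeff (R := ℚ) T = 1 := by
    rw [← coeff_zero_eq_constantCoeff_apply, hT, Polynomial.coeff_coe, coeff_trunc,
      if_pos (by omega : 0 < n), coeff_artinHasse, artinHasseCoeff_zero]
  have hES : E = T + X ^ n * S := by
    ext j
    rw [map_add, hT, Polynomial.coeff_coe, coeff_trunc, coeff_X_pow_mul']
    by_cases hj : j < n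
    · rw [if_pos hj, if_neg (by omega), add_zero, coeff_artinHasse]
    · rw [if_neg hj, if_pos (by omega), zero_add, hS, coeff_mk, coeff_artinHasse]
      congr 1
      omega
  rw [hES, add_pow, map_sum]
  rw [Finset.sum_range_succ, Finset.sum_range_succ]
  have hzero : ∀ k ∈ range q,
      coeff (R := ℚ) n (T ^ k * (X ^ n * S) ^ (q + 1 - k) * ((q + 1).choose k : ℚ⟦X⟧)) = 0 := by
    intro k hk
    rw [Finset.mem_range] at hk
    have h2 : 2 ≤ q + 1 - k := by omega
    have hterm : T ^ k * (X ^ n * S) ^ (q + 1 - k) * ((q + 1).choose k : ℚ⟦X⟧)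
        = X ^ (n * (q + 1 - k)) * (T ^ k * S ^ (q + 1 - k) * ((q + 1).choose k : ℚ⟦X⟧)) := by
      rw [mul_pow, ← pow_mul]
      ring
    rw [hterm, coeff_X_pow_mul', if_neg]
    have h3 : n * 2 ≤ n * (q + 1 - k) := Nat.mul_le_mul_left n h2
    omega
  rw [Finset.sum_eq_zero hzero, zero_add]
  -- remaining : f q + f (q+1)
  have hterm1 : T ^ q * (X ^ n * S) ^ (q + 1 - q) * ((q + 1).choose q : ℚ⟦X⟧)
      = X ^ n * (T ^ q * S * ((q + 1).choose q : ℚ⟦X⟧)) := by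
    rw [show q + 1 - q = 1 by omega, pow_one]
    ring
  have hterm2 : T ^ (q + 1) * (X ^ n * S) ^ (q + 1 - (q + 1)) * ((q + 1).choose (q + 1) : ℚ⟦X⟧)
      = T ^ (q + 1) := by
    rw [Nat.sub_self, pow_zero, Nat.choose_self]
    simp
  rw [hterm1, hterm2, coeff_X_pow_mul', if_pos (le_refl n), Nat.sub_self,
    coeff_zero_eq_constantCoeff_apply, map_mul, map_mul, map_pow, hccT, one_pow, one_mul,
    hS]
  have hccS : constantCoeff (R := ℚ) (PowerSeries.mk fun k => artinHasseCoeff (q + 1) (n + k)) =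
      artinHasseCoeff (q + 1) n := by
    rw [← coeff_zero_eq_constantCoeff_apply, coeff_mk]
    congr 1
  rw [hccS, map_natCast, Nat.choose_succ_self_right]
  push_cast
  ring

end AH

namespace AH
open PowerSeries Finset

variable (p : ℕ) [hp : Fact p.Prime]

lemma padicValNat_factorial_succ_le (i : ℕ) (hi : 1 ≤ i) :
    padicValNat p (Nat.factorial i) + 1 ≤ i := by
  have hp1 : 1 < p := hp.out.one_lt
  have hleg := sub_one_mul_padicValNat_factorial (p := p) i
  have hm0 : i ≠ 0 := by omega
  have hs : 1 ≤ (p.digits i).sum := by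
    have hlast := Nat.getLast_digit_ne_zero p hm0
    have hmem : (Nat.digits p i).getLast (Nat.digits_ne_nil_iff_ne_zero.mpr hm0)
        ∈ Nat.digits p i := List.getLast_mem _
    have hle := List.single_le_sum (fun x (_ : x ∈ Nat.digits p i) => Nat.zero_le x) _ hmem
    omega
  have hsle := Nat.digit_sum_le p i
  have hv : padicValNat p (Nat.factorial i) ≤ (p - 1) * padicValNat p (Nat.factorial i) :=
    Nat.le_mul_of_pos_left _ (by omega)
  omega

lemma norm_exp_term_le (i : ℕ) (hi : 1 ≤ i) :
    ‖(((p : ℚ) ^ i / (Nat.factorial i : ℚ) : ℚ) : ℚ_[p])‖ ≤ (p : ℝ)⁻¹ := by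
  have hp1 : 1 < p := hp.out.one_lt
  have hpR : (1 : ℝ) < (p : ℝ) := by exact_mod_cast hp1
  set v := padicValNat p (Nat.factorial i) with hv
  have hvi : v + 1 ≤ i := padicValNat_factorial_succ_le p i hi
  have hfne : Nat.factorial i ≠ 0 := Nat.factorial_ne_zero i
  obtain ⟨m, hm⟩ : p ^ v ∣ Nat.factorial i := pow_padicValNat_dvd
  have hpm : ¬ p ∣ m := by
    intro ⟨k, hk⟩
    have : p ^ (v + 1) ∣ Nat.factorial i := ⟨k, by rw [hm, hk, pow_succ]; ring⟩
    exact pow_succ_padicValNat_not_dvd hfne this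
  have hnm : ‖((m : ℤ) : ℚ_[p])‖ = 1 := by
    refine le_antisymm (Padic.norm_int_le_one m) ?_
    by_contra hlt
    push_neg at hlt
    have := (Padic.norm_intCast_lt_one_iff (k := (m : ℤ))).mp hlt
    exact hpm (by exact_mod_cast this)
  have hcast : (((p : ℚ) ^ i / (Nat.factorial i : ℚ) : ℚ) : ℚ_[p])
      = (p : ℚ_[p]) ^ i / ((p : ℚ_[p]) ^ v * (m : ℚ_[p])) := by
    push_cast [hm]
    ring_nf
  rw [hcast]
  rw [norm_div, norm_mul, norm_pow, norm_pow, Padic.norm_p]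
  have hm1 : ‖((m : ℚ_[p]))‖ = 1 := by
    have : ((m : ℤ) : ℚ_[p]) = (m : ℚ_[p]) := by push_cast; ring
    rwa [this] at hnm
  rw [hm1, mul_one]
  have hppos : (0 : ℝ) < (p : ℝ)⁻¹ := by positivity
  have hppow : ((p : ℝ)⁻¹) ^ i / ((p : ℝ)⁻¹) ^ v = ((p : ℝ)⁻¹) ^ (i - v) :=
    (pow_sub₀ _ (ne_of_gt hppos) (by omega)).symm
  rw [hppow]
  calc ((p : ℝ)⁻¹) ^ (i - v) ≤ ((p : ℝ)⁻¹) ^ 1 :=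
        pow_le_pow_of_le_one (le_of_lt hppos) (by
          rw [inv_le_one_iff₀]; right; linarith) (by omega)
    _ = (p : ℝ)⁻¹ := pow_one _

lemma norm_sum_le_of_le {α : Type*} (s : Finset α) (f : α → ℚ_[p]) (c : ℝ) (hc : 0 ≤ c)
    (h : ∀ x ∈ s, ‖f x‖ ≤ c) : ‖∑ x ∈ s, f x‖ ≤ c := by
  classical
  induction s using Finset.induction_on with
  | empty => simpa using hc
  | insert _ _ hx ih =>
    rename_i a s'
    rw [Finset.sum_insert hx]
    refine le_trans (Padic.nonarchimedean _ _) (max_le ?_ ?_)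
    · exact h _ (Finset.mem_insert_self _ _)
    · exact ih fun x hxx => h x (Finset.mem_insert_of_mem hxx)

end AH

namespace AH
open PowerSeries Finset

variable (p : ℕ) [hp : Fact p.Prime]

lemma coeff_sum_C_X_pow {R : Type*} [CommRing R] (n : ℕ) (A : ℕ → R) (m : ℕ) :
    (∑ j ∈ range n, Polynomial.C (A j) * Polynomial.X ^ j).coeff m
      = if m < n then A m else 0 := by
  rw [Polynomial.finset_sum_coeff]
  simp only [Polynomial.coeff_C_mul, Polynomial.coeff_X_pow, mul_ite, mul_one, mul_zero]
  rw [Finset.sum_ite_eq (range n) m A]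
  simp [Finset.mem_range]

lemma key_congruence (n : ℕ) (hn : 1 ≤ n) (A : ℕ → ℤ_[p]) :
    ‖((∑ j ∈ range n, Polynomial.C (A j) * Polynomial.X ^ j) ^ p).coeff n
      - (if p ∣ n then A (n / p) else 0)‖ ≤ (p : ℝ)⁻¹ := by
  have hp1 : 1 < p := hp.out.one_lt
  set Tz : Polynomial ℤ_[p] := ∑ j ∈ range n, Polynomial.C (A j) * Polynomial.X ^ j with hTz
  set f : Polynomial (ZMod p) := Tz.map (PadicInt.toZMod) with hf
  have hfrob : f ^ p = Polynomial.expand (ZMod p) p f := by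
    have h1 := Polynomial.map_frobenius_expand p f
    rw [ZMod.frobenius_zmod, Polynomial.map_id] at h1
    exact h1.symm
  have htoz : PadicInt.toZMod ((Tz ^ p).coeff n)
      = if p ∣ n then PadicInt.toZMod (A (n / p)) else 0 := by
    have h2 : PadicInt.toZMod ((Tz ^ p).coeff n) = ((Tz ^ p).map PadicInt.toZMod).coeff n :=
      (Polynomial.coeff_map _ _).symm
    rw [h2, Polynomial.map_pow, ← hf, hfrob, Polynomial.coeff_expand (by omega : 0 < p)]
    split
    · rw [hf, Polynomial.coeff_map, hTz, coeff_sum_C_X_pow,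
        if_pos (Nat.div_lt_self (by omega) hp1)]
    · rfl
  set z : ℤ_[p] := (Tz ^ p).coeff n - (if p ∣ n then A (n / p) else 0) with hz
  have hz0 : PadicInt.toZMod z = 0 := by
    rw [hz, map_sub, htoz]
    split <;> simp
  have hker : z ∈ RingHom.ker (PadicInt.toZMod : ℤ_[p] →+* ZMod p) := hz0
  rw [PadicInt.ker_toZMod, PadicInt.maximalIdeal_eq_span_p, Ideal.mem_span_singleton] at hker
  obtain ⟨w, hw⟩ := hker
  rw [hw, norm_mul, PadicInt.norm_p]
  calc (p : ℝ)⁻¹ * ‖w‖ ≤ (p : ℝ)⁻¹ * 1 := by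
        have := PadicInt.norm_le_one w
        have hpos : (0:ℝ) < (p : ℝ)⁻¹ := by positivity
        nlinarith
    _ = (p : ℝ)⁻¹ := mul_one _

end AH

namespace AH
open PowerSeries Finset

variable (p : ℕ) [hp : Fact p.Prime]

lemma norm_coeff_le_one (n : ℕ) : ‖((artinHasseCoeff p n : ℚ) : ℚ_[p])‖ ≤ 1 := by
  have hp1 : 1 < p := hp.out.one_lt
  induction n using Nat.strong_induction_on with
  | _ n ih =>
    rcases Nat.eq_zero_or_pos n with rfl | hn
    · rw [artinHasseCoeff_zero]; simp
    · set E := artinHasse p with hE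
      have hEq : (p : ℚ) * artinHasseCoeff p n
          = coeff (R := ℚ) n (rescale (p:ℚ) (exp ℚ) * plug p E)
            - coeff (R := ℚ) n ((↑(trunc n E) : ℚ⟦X⟧) ^ p) := by
        have h1 := coeff_pow_eq p hp.out n hn
        rw [main_identity p hp.out] at h1
        linarith
      set B : ℚ_[p] := ((coeff (R := ℚ) n (rescale (p:ℚ) (exp ℚ) * plug p E) : ℚ) : ℚ_[p]) with hB
      set C : ℚ_[p] := ((coeff (R := ℚ) n ((↑(trunc n E) : ℚ⟦X⟧) ^ p) : ℚ) : ℚ_[p]) with hC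
      have hpa : (p : ℚ_[p]) * ((artinHasseCoeff p n : ℚ) : ℚ_[p]) = B - C := by
        rw [hB, hC]
        have h2 := congrArg (fun q : ℚ => (q : ℚ_[p])) hEq
        push_cast at h2 ⊢
        exact h2
      set H : ℚ_[p] := if p ∣ n then ((artinHasseCoeff p (n / p) : ℚ) : ℚ_[p]) else 0 with hH
      have hBH : ‖B - H‖ ≤ (p:ℝ)⁻¹ := by
        have hmem : ((0 : ℕ), n) ∈ antidiagonal n := by
          rw [Finset.HasAntidiagonal.mem_antidiagonal]
          simp
        have hBsum : B = ∑ x ∈ antidiagonal n,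
            ((coeff (R := ℚ) x.1 (rescale (p:ℚ) (exp ℚ)) * coeff (R := ℚ) x.2 (plug p E) : ℚ) : ℚ_[p]) := by
          rw [hB, coeff_mul, Rat.cast_sum]
        have hf0 : ((coeff (R := ℚ) (0:ℕ) (rescale (p:ℚ) (exp ℚ)) * coeff (R := ℚ) n (plug p E) : ℚ) : ℚ_[p])
            = H := by
          rw [hH, hE, coeff_rescale, coeff_exp, coeff_plug]
          by_cases hd : p ∣ n
          · rw [if_pos hd, if_pos hd, coeff_artinHasse]
            push_cast
            simp
          · rw [if_neg hd, if_neg hd]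
            push_cast
            simp
        have hsplit := Finset.add_sum_erase (antidiagonal n) (fun x =>
          ((coeff (R := ℚ) x.1 (rescale (p:ℚ) (exp ℚ)) * coeff (R := ℚ) x.2 (plug p E) : ℚ) : ℚ_[p])) hmem
        have hBH' : B - H = ∑ x ∈ (antidiagonal n).erase ((0 : ℕ), n),
            ((coeff (R := ℚ) x.1 (rescale (p:ℚ) (exp ℚ)) * coeff (R := ℚ) x.2 (plug p E) : ℚ) : ℚ_[p]) := by
          rw [hBsum, ← hsplit]
          simp only [hf0]
          ring
        rw [hBH']
        refine norm_sum_le_of_le p _ _ _ (by positivity) ?_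
        rintro ⟨i, j⟩ hx
        have hij : i + j = n := Finset.HasAntidiagonal.mem_antidiagonal.mp (Finset.mem_of_mem_erase hx)
        have hi : 1 ≤ i := by
          rcases Nat.eq_zero_or_pos i with rfl | h
          · exfalso
            apply Finset.ne_of_mem_erase hx
            simp only [Prod.mk.injEq]
            exact ⟨trivial, by omega⟩
          · exact h
        rw [Rat.cast_mul, norm_mul]
        have h1 : ‖((coeff (R := ℚ) i (rescale (p:ℚ) (exp ℚ)) : ℚ) : ℚ_[p])‖ ≤ (p:ℝ)⁻¹ := by
          rw [coeff_rescale, coeff_exp]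
          have heq : (p:ℚ)^i * (algebraMap ℚ ℚ) (1 / (Nat.factorial i : ℚ))
              = (p:ℚ)^i / (Nat.factorial i : ℚ) := by
            simp
            ring
          rw [heq]
          exact norm_exp_term_le p i hi
        have h2 : ‖((coeff (R := ℚ) j (plug p E) : ℚ) : ℚ_[p])‖ ≤ 1 := by
          rw [coeff_plug]
          split
          · rw [coeff_artinHasse]
            refine ih (j / p) ?_
            have hj : j < n := by omega
            have := Nat.div_le_self j p
            omega
          · simp
        calc ‖((coeff (R := ℚ) i (rescale (p:ℚ) (exp ℚ)) : ℚ) : ℚ_[p])‖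
              * ‖((coeff (R := ℚ) j (plug p E) : ℚ) : ℚ_[p])‖
            ≤ (p:ℝ)⁻¹ * 1 := mul_le_mul h1 h2 (norm_nonneg _) (by positivity)
          _ = (p:ℝ)⁻¹ := mul_one _
      have hHC : ‖H - C‖ ≤ (p:ℝ)⁻¹ := by
        set A : ℕ → ℤ_[p] := fun j => if hj : j < n then
            ⟨((artinHasseCoeff p j : ℚ) : ℚ_[p]), ih j hj⟩ else 0 with hA
        have hAco : ∀ j, j < n → ((A j : ℚ_[p])) = ((artinHasseCoeff p j : ℚ) : ℚ_[p]) := by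
          intro j hj
          rw [hA]
          simp [hj]
        have hCeq : C = (((∑ j ∈ range n, Polynomial.C (A j) * Polynomial.X ^ j) ^ p).coeff n
            : ℚ_[p]) := by
          rw [hC, ← Polynomial.coe_pow, Polynomial.coeff_coe]
          have hmap : (((trunc n E ^ p).coeff n : ℚ) : ℚ_[p])
              = (((trunc n E).map (Rat.castHom ℚ_[p])) ^ p).coeff n := by
            rw [← Polynomial.map_pow, Polynomial.coeff_map]
            rfl
          rw [hmap]
          have hpoly : (trunc n E).map (Rat.castHom ℚ_[p])
              = (∑ j ∈ range n, Polynomial.C (A j) * Polynomial.X ^ j).map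
                  (PadicInt.Coe.ringHom (p := p)) := by
            ext m
            rw [Polynomial.coeff_map, Polynomial.coeff_map, coeff_sum_C_X_pow, coeff_trunc]
            by_cases hm : m < n
            · rw [if_pos hm, if_pos hm, coeff_artinHasse]
              have := hAco m hm
              exact this.symm
            · rw [if_neg hm, if_neg hm, map_zero, map_zero]
          rw [hpoly, ← Polynomial.map_pow, Polynomial.coeff_map]
          rfl
        have hHeq : H = ((if p ∣ n then A (n / p) else 0 : ℤ_[p]) : ℚ_[p]) := by
          rw [hH, apply_ite (fun z : ℤ_[p] => (z : ℚ_[p]))]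
          split
          · exact (hAco (n / p) (Nat.div_lt_self (by omega) hp1)).symm
          · simp
        have hkey := key_congruence p n hn A
        have hdiff : H - C
            = -((((∑ j ∈ range n, Polynomial.C (A j) * Polynomial.X ^ j) ^ p).coeff n
                - (if p ∣ n then A (n / p) else 0) : ℤ_[p]) : ℚ_[p]) := by
          rw [hCeq, hHeq]
          push_cast
          ring
        rw [hdiff, norm_neg, ← PadicInt.norm_def]
        exact hkey
      have hBC : ‖B - C‖ ≤ (p:ℝ)⁻¹ := by
        have hsplit2 : B - C = (B - H) + (H - C) := by ring
        rw [hsplit2]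
        exact le_trans (Padic.nonarchimedean _ _) (max_le hBH hHC)
      have hnorm : (p:ℝ)⁻¹ * ‖((artinHasseCoeff p n : ℚ) : ℚ_[p])‖ ≤ (p:ℝ)⁻¹ * 1 := by
        have h3 := congrArg (fun x : ℚ_[p] => ‖x‖) hpa
        simp only [norm_mul, Padic.norm_p] at h3
        rw [h3, mul_one]
        exact hBC
      exact le_of_mul_le_mul_left hnorm (by positivity)

end AH


/-- Every coefficient of the Artin--Hasse exponential is `p`-integral: its
denominator is prime to `p` (i.e. it lies in the localization `ℤ_(p)` of `ℤ` at `p`),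
and consequently it has `p`-adic norm at most `1`, so that `E_p` may be regarded as a
formal power series with coefficients in `ℤ_p`. -/
theorem artinHasse_coeff_p_integral (p : ℕ) [hp : Fact p.Prime] :
    ∀ n : ℕ, ¬ p ∣ (PowerSeries.coeff (R := ℚ) n (artinHasse p)).den ∧
      ‖((PowerSeries.coeff (R := ℚ) n (artinHasse p) : ℚ) : ℚ_[p])‖ ≤ 1 := by
  intro n
  have hp1 : 1 < p := hp.out.one_lt
  rw [AH.coeff_artinHasse]
  have hnorm := AH.norm_coeff_le_one p n
  refine ⟨?_, hnorm⟩
  intro hdvd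
  set q := artinHasseCoeff p n with hq
  have hq0 : q ≠ 0 := by
    intro h0
    rw [h0] at hdvd
    simp at hdvd
    omega
  have hnum : ¬ (p : ℤ) ∣ q.num := by
    intro hd
    have h1 : p ∣ q.num.natAbs := Int.natCast_dvd_natCast.mp (by
      rwa [Int.dvd_natAbs])
    have h3 : p ∣ Nat.gcd q.num.natAbs q.den := Nat.dvd_gcd h1 hdvd
    rw [q.reduced] at h3
    have := Nat.le_of_dvd one_pos h3
    omega
  have hvint : padicValInt p q.num = 0 := padicValInt.eq_zero_of_not_dvd hnum
  have hvden : 1 ≤ padicValNat p q.den := by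
    have hden0 : 0 < q.den := q.pos
    exact one_le_padicValNat_of_dvd hden0.ne' hdvd
  have hv : padicValRat p q ≤ -1 := by
    rw [padicValRat_def, hvint]
    omega
  have hpn : padicNorm p q = (p : ℚ) ^ (-padicValRat p q) := padicNorm.eq_zpow_of_nonzero hq0
  have hgt : (1 : ℚ) < padicNorm p q := by
    rw [hpn]
    have h1p : (1 : ℚ) < (p : ℚ) := by exact_mod_cast hp1
    calc (1 : ℚ) < (p : ℚ) ^ (1 : ℤ) := by rwa [zpow_one]
      _ ≤ (p : ℚ) ^ (-padicValRat p q) := by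
        apply zpow_le_zpow_right₀ (le_of_lt h1p)
        omega
  have heq := Padic.eq_padicNorm (p := p) q
  rw [heq] at hnorm
  have : (1 : ℝ) < ((padicNorm p q : ℚ) : ℝ) := by exact_mod_cast hgt
  linarith
end

section
/- Let p be a prime and l a finite field of characteristic p. For all a, b ∈ l, the power series E_p([a]x) · E_p([b]x) · E_p([a+b]x)^{−1} lies in (W(l)[[x]]^×)^p; equivalently, there exists a power series u ∈ W(l)[[x]] with unit constant term such that E_p([a]x) · E_p([b]x) = E_p([a+b]x) · u(x)^p in W(l)[[x]]. -/
open scoped Classical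

/-- The Artin--Hasse exponential regarded as a power series over a (commutative)
`ℤ_(p)`-algebra `R`: the `n`-th coefficient is the image of the `p`-integral rational
`artinHasseCoeff p n`, i.e. its numerator times the inverse of its denominator
(the denominator being a unit in rings like `ℤ_p` or `W(l)`). -/
noncomputable def artinHasseW (p : ℕ) (R : Type*) [CommRing R] : PowerSeries R :=
  PowerSeries.mk fun n =>
    ((artinHasseCoeff p n).num : R) * Ring.inverse (((artinHasseCoeff p n).den : ℕ) : R)

namespace AH
set_option linter.unusedSectionVars false
set_option linter.dupNamespace false
open PowerSeries Finset

open PowerSeries Finset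

variable {K : Type*} [Field K]

noncomputable def pexp (F : PowerSeries K) : PowerSeries K :=
  PowerSeries.mk fun n => ∑ k ∈ Finset.range (n + 1),
    ((k.factorial : K))⁻¹ * PowerSeries.coeff (R := K) n (F ^ k)

lemma coeff_pow_eq_zero {F : PowerSeries K} (hF : constantCoeff (R := K) F = 0)
    {n k : ℕ} (h : n < k) : coeff (R := K) n (F ^ k) = 0 :=
  PowerSeries.X_pow_dvd_iff.mp (pow_dvd_pow_of_dvd (PowerSeries.X_dvd_iff.mpr hF) k) n h

lemma coeff_pexp {F : PowerSeries K} (hF : constantCoeff (R := K) F = 0)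
    {n N : ℕ} (h : n ≤ N) :
    coeff (R := K) n (pexp F) =
      ∑ k ∈ Finset.range (N + 1), ((k.factorial : K))⁻¹ * coeff (R := K) n (F ^ k) := by
  rw [pexp, coeff_mk]
  refine Finset.sum_subset (by intro x hx; simp only [mem_range] at *; omega) ?_
  intro k hk hk'
  simp only [mem_range] at hk hk'
  rw [coeff_pow_eq_zero hF (by omega), mul_zero]

lemma constantCoeff_pexp {F : PowerSeries K} (hF : constantCoeff (R := K) F = 0) :
    constantCoeff (R := K) (pexp F) = 1 := by
  have := coeff_pexp hF (le_refl 0)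
  rw [← coeff_zero_eq_constantCoeff_apply, this]
  simp

lemma pexp_zero : pexp (0 : PowerSeries K) = 1 := by
  ext n
  rw [pexp, coeff_mk]
  rw [Finset.sum_eq_single 0]
  · simp
  · intro k hk hk0
    rw [zero_pow hk0, map_zero, mul_zero]
  · intro h; exact absurd (Finset.mem_range.mpr (Nat.succ_pos n)) h

lemma sum_triangle {M : Type*} [AddCommMonoid M] (n : ℕ) (t : ℕ → ℕ → M)
    (ht : ∀ a b, n < a + b → t a b = 0) :
    ∑ k ∈ range (n + 1), ∑ j ∈ range (k + 1), t j (k - j)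
      = ∑ a ∈ range (n + 1), ∑ b ∈ range (n + 1), t a b := by
  have h1 : ∀ k, ∑ j ∈ range (k + 1), t j (k - j) = ∑ x ∈ antidiagonal k, t x.1 x.2 :=
    fun k => (Finset.Nat.sum_antidiagonal_eq_sum_range_succ (fun a b => t a b) k).symm
  rw [Finset.sum_congr rfl fun k _ => h1 k]
  have hdisj : Set.PairwiseDisjoint ↑(range (n + 1)) (fun k : ℕ => antidiagonal k) := by
    intro a _ b _ hab
    refine Finset.disjoint_left.mpr ?_
    intro x hxa hxb
    rw [Finset.HasAntidiagonal.mem_antidiagonal] at hxa hxb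
    exact hab (hxa ▸ hxb ▸ rfl)
  rw [← Finset.sum_biUnion hdisj, ← Finset.sum_product']
  apply Finset.sum_subset
  · intro x hx
    simp only [Finset.mem_biUnion, mem_range] at hx
    obtain ⟨k, hk, hxk⟩ := hx
    rw [Finset.HasAntidiagonal.mem_antidiagonal] at hxk
    simp only [Finset.mem_product, mem_range]
    omega
  · intro x _ hnx
    apply ht
    by_contra h
    push_neg at h
    exact hnx (Finset.mem_biUnion.mpr ⟨x.1 + x.2, mem_range.mpr (by omega),
      Finset.HasAntidiagonal.mem_antidiagonal.mpr rfl⟩)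

lemma pexp_add [CharZero K] {F G : PowerSeries K} (hF : constantCoeff (R := K) F = 0)
    (hG : constantCoeff (R := K) G = 0) : pexp (F + G) = pexp F * pexp G := by
  ext n
  have hFX : (X : PowerSeries K) ∣ F := PowerSeries.X_dvd_iff.mpr hF
  have hGX : (X : PowerSeries K) ∣ G := PowerSeries.X_dvd_iff.mpr hG
  set t : ℕ → ℕ → K := fun a b =>
    (a.factorial : K)⁻¹ * ((b.factorial : K)⁻¹ * coeff (R := K) n (F ^ a * G ^ b)) with ht
  have hvan : ∀ a b : ℕ, n < a + b → t a b = 0 := by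
    intro a b hab
    have hdvd : (X : PowerSeries K) ^ (a + b) ∣ F ^ a * G ^ b := by
      rw [pow_add]
      exact mul_dvd_mul (pow_dvd_pow_of_dvd hFX a) (pow_dvd_pow_of_dvd hGX b)
    have : coeff (R := K) n (F ^ a * G ^ b) = 0 := PowerSeries.X_pow_dvd_iff.mp hdvd n hab
    simp [ht, this]
  have hrhs : coeff (R := K) n (pexp F * pexp G)
      = ∑ a ∈ range (n + 1), ∑ b ∈ range (n + 1), t a b := by
    rw [coeff_mul]
    rw [Finset.sum_congr rfl (fun x hx => by
      have hx1 : x.1 ≤ n := by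
        rw [Finset.HasAntidiagonal.mem_antidiagonal] at hx; omega
      have hx2 : x.2 ≤ n := by
        rw [Finset.HasAntidiagonal.mem_antidiagonal] at hx; omega
      rw [coeff_pexp hF hx1, coeff_pexp hG hx2, Finset.sum_mul_sum])]
    rw [Finset.sum_comm]
    refine Finset.sum_congr rfl fun a _ => ?_
    rw [Finset.sum_comm]
    refine Finset.sum_congr rfl fun b _ => ?_
    rw [ht]
    simp only
    rw [coeff_mul, Finset.mul_sum, Finset.mul_sum]
    exact Finset.sum_congr rfl fun x _ => by ring
  have hlhs : coeff (R := K) n (pexp (F + G))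
      = ∑ k ∈ range (n + 1), ∑ j ∈ range (k + 1), t j (k - j) := by
    rw [coeff_pexp (by rw [map_add, hF, hG, add_zero]) (le_refl n)]
    refine Finset.sum_congr rfl fun k _ => ?_
    rw [add_pow, map_sum, Finset.mul_sum]
    refine Finset.sum_congr rfl fun j hj => ?_
    have hj' : j ≤ k := Nat.lt_succ_iff.mp (mem_range.mp hj)
    rw [show ((k.choose j : ℕ) : PowerSeries K) = C (R := K) ((k.choose j : ℕ) : K) from by
      rw [map_natCast (C (R := K))]]
    rw [coeff_mul_C]
    have hj0 : (j.factorial : K) ≠ 0 := Nat.cast_ne_zero.mpr (Nat.factorial_ne_zero j)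
    have hkj0 : ((k - j).factorial : K) ≠ 0 := Nat.cast_ne_zero.mpr (Nat.factorial_ne_zero _)
    have hk0 : (k.factorial : K) ≠ 0 := Nat.cast_ne_zero.mpr (Nat.factorial_ne_zero k)
    have h1 : (k.choose j : K) * (j.factorial : K) * ((k - j).factorial : K)
        = (k.factorial : K) := by
      exact_mod_cast congrArg (Nat.cast : ℕ → K) (Nat.choose_mul_factorial_mul_factorial hj')
    have key : (k.factorial : K)⁻¹ * (k.choose j : K)
        = (j.factorial : K)⁻¹ * ((k - j).factorial : K)⁻¹ := by
      field_simp
      linear_combination h1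
    rw [ht]
    simp only
    linear_combination (coeff (R := K) n (F ^ j * G ^ (k - j))) * key
  rw [hlhs, hrhs, sum_triangle n t hvan]

lemma pexp_nsmul [CharZero K] {F : PowerSeries K} (hF : constantCoeff (R := K) F = 0) (m : ℕ) :
    pexp (m • F) = pexp F ^ m := by
  induction m with
  | zero => rw [zero_smul, pow_zero, pexp_zero]
  | succ m ih =>
      rw [succ_nsmul, pexp_add (by rw [map_nsmul, hF, smul_zero]) hF, ih, pow_succ]

lemma pexp_map {K' : Type*} [Field K'] (τ : K →+* K') (F : PowerSeries K) :
    PowerSeries.map τ (pexp F) = pexp (PowerSeries.map τ F) := by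
  ext n
  rw [coeff_map, pexp, pexp, coeff_mk, coeff_mk, map_sum]
  refine Finset.sum_congr rfl fun k _ => ?_
  rw [map_mul, map_inv₀, map_natCast, ← map_pow, coeff_map]

lemma pexp_rescale (a : K) (F : PowerSeries K) :
    PowerSeries.rescale a (pexp F) = pexp (PowerSeries.rescale a F) := by
  ext n
  rw [coeff_rescale, pexp, pexp, coeff_mk, coeff_mk, Finset.mul_sum]
  refine Finset.sum_congr rfl fun k _ => ?_
  rw [← map_pow, coeff_rescale]
  ring

lemma coeff_pexp_CX (c : K) (n : ℕ) :
    coeff (R := K) n (pexp (C (R := K) c * X)) = c ^ n * (n.factorial : K)⁻¹ := by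
  rw [pexp, coeff_mk]
  rw [Finset.sum_eq_single n]
  · rw [mul_pow, ← map_pow, coeff_C_mul, coeff_X_pow, if_pos rfl, mul_one]
    ring
  · intro k _ hkn
    rw [mul_pow, ← map_pow, coeff_C_mul, coeff_X_pow, if_neg (Ne.symm hkn), mul_zero, mul_zero]
  · intro h; exact absurd (Finset.self_mem_range_succ n) h

noncomputable def expandF (p : ℕ) (F : PowerSeries K) : PowerSeries K :=
  PowerSeries.mk fun n => if p ∣ n then coeff (R := K) (n / p) F else 0

lemma coeff_expandF (p : ℕ) (F : PowerSeries K) (n : ℕ) :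
    coeff (R := K) n (expandF p F) = if p ∣ n then coeff (R := K) (n / p) F else 0 := by
  rw [expandF, coeff_mk]

lemma constantCoeff_expandF (p : ℕ) (F : PowerSeries K) :
    constantCoeff (R := K) (expandF p F) = constantCoeff (R := K) F := by
  rw [← coeff_zero_eq_constantCoeff_apply, coeff_expandF, if_pos (dvd_zero p),
    Nat.zero_div, coeff_zero_eq_constantCoeff_apply]

lemma expandF_one {p : ℕ} (hp : 0 < p) : expandF p (1 : PowerSeries K) = 1 := by
  ext n
  rw [coeff_expandF]
  by_cases hn : n = 0
  · subst hn; simp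
  · simp only [PowerSeries.coeff_one, if_neg hn]
    by_cases hpn : p ∣ n
    · rw [if_pos hpn, if_neg]
      intro h
      have hple : p ≤ n := Nat.le_of_dvd (Nat.pos_of_ne_zero hn) hpn
      have hlt : n < p := (Nat.div_eq_zero_iff.mp h).resolve_left (by omega)
      omega
    · rw [if_neg hpn]

lemma expandF_mul {p : ℕ} (hp : 0 < p) (F G : PowerSeries K) :
    expandF p (F * G) = expandF p F * expandF p G := by
  ext n
  have hterm : ∀ x : ℕ × ℕ,
      coeff (R := K) x.1 (expandF p F) * coeff (R := K) x.2 (expandF p G)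
        = if p ∣ x.1 ∧ p ∣ x.2 then coeff (R := K) (x.1 / p) F * coeff (R := K) (x.2 / p) G else 0 := by
    intro x
    rw [coeff_expandF, coeff_expandF]
    by_cases h1 : p ∣ x.1
    · by_cases h2 : p ∣ x.2
      · rw [if_pos h1, if_pos h2, if_pos ⟨h1, h2⟩]
      · rw [if_pos h1, if_neg h2, if_neg (fun h : p ∣ x.1 ∧ p ∣ x.2 => h2 h.2), mul_zero]
    · rw [if_neg h1, if_neg (fun h : p ∣ x.1 ∧ p ∣ x.2 => h1 h.1), zero_mul]
  conv_rhs => rw [coeff_mul]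
  rw [Finset.sum_congr rfl fun x _ => hterm x, coeff_expandF]
  by_cases hpn : p ∣ n
  · rw [if_pos hpn]
    conv_lhs => rw [coeff_mul]
    rw [← Finset.sum_filter]
    refine Finset.sum_nbij' (fun y => (p * y.1, p * y.2)) (fun x => (x.1 / p, x.2 / p))
      ?_ ?_ ?_ ?_ ?_
    · intro y hy
      simp only [Finset.mem_filter, Finset.HasAntidiagonal.mem_antidiagonal] at hy ⊢
      refine ⟨?_, Dvd.intro _ rfl, Dvd.intro _ rfl⟩
      rw [← Nat.mul_add, hy, Nat.mul_div_cancel' hpn]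
    · intro x hx
      simp only [Finset.mem_filter, Finset.HasAntidiagonal.mem_antidiagonal] at hx ⊢
      obtain ⟨hsum, h1, h2⟩ := hx
      rw [← Nat.add_div_of_dvd_right h1, hsum]
    · intro y _
      ext
      · exact Nat.mul_div_cancel_left _ hp
      · exact Nat.mul_div_cancel_left _ hp
    · intro x hx
      simp only [Finset.mem_filter] at hx
      ext
      · exact Nat.mul_div_cancel' hx.2.1
      · exact Nat.mul_div_cancel' hx.2.2
    · intro y _
      rw [Nat.mul_div_cancel_left _ hp, Nat.mul_div_cancel_left _ hp]
  · rw [if_neg hpn]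
    refine (Finset.sum_eq_zero fun x hx => ?_).symm
    rw [Finset.HasAntidiagonal.mem_antidiagonal] at hx
    rw [if_neg]
    rintro ⟨h1, h2⟩
    exact hpn (hx ▸ Nat.dvd_add h1 h2)

lemma expandF_pow {p : ℕ} (hp : 0 < p) (F : PowerSeries K) (k : ℕ) :
    expandF p (F ^ k) = expandF p F ^ k := by
  induction k with
  | zero => rw [pow_zero, pow_zero, expandF_one hp]
  | succ k ih => rw [pow_succ, pow_succ, expandF_mul hp, ih]

lemma pexp_expandF {p : ℕ} (hp : 0 < p) {F : PowerSeries K} (hF : constantCoeff (R := K) F = 0) :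
    pexp (expandF p F) = expandF p (pexp F) := by
  ext n
  have h0 : constantCoeff (R := K) (expandF p F) = 0 := by rw [constantCoeff_expandF, hF]
  rw [coeff_expandF]
  by_cases hpn : p ∣ n
  · rw [if_pos hpn, coeff_pexp hF (Nat.div_le_self n p), coeff_pexp h0 (le_refl n)]
    refine Finset.sum_congr rfl fun k _ => ?_
    rw [← expandF_pow hp, coeff_expandF, if_pos hpn]
  · rw [if_neg hpn, coeff_pexp h0 (le_refl n)]
    refine Finset.sum_eq_zero fun k _ => ?_
    rw [← expandF_pow hp, coeff_expandF, if_neg hpn, mul_zero]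

lemma expandF_map {K' : Type*} [Field K'] (p : ℕ) (τ : K →+* K') (F : PowerSeries K) :
    PowerSeries.map τ (expandF p F) = expandF p (PowerSeries.map τ F) := by
  ext n
  rw [coeff_map, coeff_expandF, coeff_expandF, apply_ite τ, map_zero, coeff_map]

section Witt
variable (p : ℕ) [hp : Fact p.Prime] (l : Type*) [Field l] [Finite l] [CharP l p]

lemma constantCoeff_teichmuller (x : l) :
    WittVector.constantCoeff (WittVector.teichmuller p x) = x :=
  WittVector.teichmuller_coeff_zero p x

lemma natCast_ne_zero_W {n : ℕ} (hn : n ≠ 0) : (n : WittVector p l) ≠ 0 := by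
  have hv := Nat.ordProj_mul_ordCompl_eq_self n p
  set k := n.factorization p with hk
  set m := n / p ^ k with hm
  have hmd : ¬ p ∣ m := Nat.not_dvd_ordCompl hp.out hn
  have hcast : (n : WittVector p l) = ((p : WittVector p l)) ^ k * (m : WittVector p l) := by
    rw [← Nat.cast_pow, ← Nat.cast_mul, hv]
  have h1 : ((p : WittVector p l)) ^ k ≠ 0 := by
    intro h0
    have h2 := WittVector.coeff_p_pow p l k
    rw [h0] at h2
    simp at h2
  have h2 : (m : WittVector p l) ≠ 0 := by
    intro h0
    have h3 : ((m : ℕ) : l) = 0 := by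
      have h4 := congrArg (WittVector.constantCoeff (p := p) (R := l)) h0
      rwa [map_natCast, map_zero] at h4
    exact hmd ((CharP.cast_eq_zero_iff l p m).mp h3)
  rw [hcast]
  exact mul_ne_zero h1 h2

instance : CharP (WittVector p l) 0 := by
  constructor
  intro n
  rw [zero_dvd_iff]
  constructor
  · intro h
    by_contra hn
    exact natCast_ne_zero_W p l hn h
  · rintro rfl
    exact Nat.cast_zero

instance : CharZero (WittVector p l) := CharP.charP_to_charZero _

instance : CharZero (FractionRing (WittVector p l)) := by
  refine ⟨fun a b hab => ?_⟩
  have ha := map_natCast (algebraMap (WittVector p l) (FractionRing (WittVector p l))) a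
  have hb := map_natCast (algebraMap (WittVector p l) (FractionRing (WittVector p l))) b
  rw [← ha, ← hb] at hab
  exact Nat.cast_injective (IsFractionRing.injective (WittVector p l) _ hab)

lemma isUnit_natCast_W (m : ℕ) (hm : ¬ p ∣ m) : IsUnit (m : WittVector p l) := by
  apply WittVector.isUnit_of_coeff_zero_ne_zero
  have : ((m : WittVector p l)).coeff 0 = ((m : ℕ) : l) := by
    have := map_natCast (WittVector.constantCoeff (p := p) (R := l)) m
    exact this
  rw [this]
  exact fun h => hm ((CharP.cast_eq_zero_iff l p m).mp h)

lemma exists_mul_p (x : WittVector p l) (h0 : x.coeff 0 = 0) :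
    ∃ y : WittVector p l, x = (p : WittVector p l) * y := by
  have hx := WittVector.eq_iterate_verschiebung (x := x) (n := 1)
    (by intro i hi; interval_cases i; exact h0)
  rw [Function.iterate_one] at hx
  set z := x.shift 1 with hz
  refine ⟨(WittVector.frobeniusEquiv p l).symm z, ?_⟩
  have hfz : WittVector.frobenius ((WittVector.frobeniusEquiv p l).symm z) = z := by
    have h := (WittVector.frobeniusEquiv p l).apply_symm_apply z
    rwa [WittVector.frobeniusEquiv_apply] at h
  calc x = WittVector.verschiebung z := hx
  _ = WittVector.verschiebung (WittVector.frobenius ((WittVector.frobeniusEquiv p l).symm z)) := by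
        rw [hfz]
  _ = (WittVector.frobeniusEquiv p l).symm z * (p : WittVector p l) :=
        WittVector.verschiebung_frobenius _
  _ = (p : WittVector p l) * (WittVector.frobeniusEquiv p l).symm z := mul_comm _ _

lemma frob_congr (r : WittVector p l) :
    ∃ s : WittVector p l, WittVector.frobenius r = r ^ p + (p : WittVector p l) * s := by
  have h0 : (WittVector.frobenius r - r ^ p).coeff 0 = 0 := by
    have h1 : (WittVector.frobenius r - r ^ p).coeff 0
        = (WittVector.frobenius r).coeff 0 - (r ^ p).coeff 0 :=
      map_sub (WittVector.constantCoeff (p := p) (R := l)) _ _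
    have h2 : (r ^ p).coeff 0 = r.coeff 0 ^ p :=
      map_pow (WittVector.constantCoeff (p := p) (R := l)) r p
    rw [h1, h2, WittVector.coeff_frobenius_charP, sub_self]
  obtain ⟨y, hy⟩ := exists_mul_p p l _ h0
  exact ⟨y, by rw [← hy]; ring⟩

noncomputable def sigmaK :
    FractionRing (WittVector p l) →+* FractionRing (WittVector p l) :=
  ((IsFractionRing.ringEquivOfRingEquiv (K := FractionRing (WittVector p l))
    (L := FractionRing (WittVector p l)) (WittVector.frobeniusEquiv p l)) :
      FractionRing (WittVector p l) ≃+* FractionRing (WittVector p l)).toRingHom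

lemma sigmaK_algebraMap (x : WittVector p l) :
    sigmaK p l (algebraMap _ _ x) = algebraMap _ _ (WittVector.frobenius x) := by
  have h := IsFractionRing.ringEquivOfRingEquiv_algebraMap (K := FractionRing (WittVector p l))
    (L := FractionRing (WittVector p l)) (WittVector.frobeniusEquiv p l) x
  rw [WittVector.frobeniusEquiv_apply] at h
  exact h


noncomputable def Lser (w : WittVector p l) : PowerSeries (FractionRing (WittVector p l)) :=
  PowerSeries.mk fun N =>
    if N = p ^ Nat.log p N then
      algebraMap (WittVector p l) _
          ((⇑(WittVector.frobenius : WittVector p l →+* WittVector p l))^[Nat.log p N] w)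
        / (p : FractionRing (WittVector p l)) ^ Nat.log p N
    else 0

lemma coeff_Lser (w : WittVector p l) (N : ℕ) :
    PowerSeries.coeff (R := _) N (Lser p l w)
      = if N = p ^ Nat.log p N then
          algebraMap (WittVector p l) _
              ((⇑(WittVector.frobenius : WittVector p l →+* WittVector p l))^[Nat.log p N] w)
            / (p : FractionRing (WittVector p l)) ^ Nat.log p N
        else 0 :=
  PowerSeries.coeff_mk _ _

lemma coeff_Lser_pow (w : WittVector p l) (m : ℕ) :
    PowerSeries.coeff (R := _) (p ^ m) (Lser p l w)
      = algebraMap (WittVector p l) _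
          ((⇑(WittVector.frobenius : WittVector p l →+* WittVector p l))^[m] w)
        / (p : FractionRing (WittVector p l)) ^ m := by
  rw [Lser, PowerSeries.coeff_mk, Nat.log_pow hp.out.one_lt, if_pos rfl]

lemma coeff_Lser_not (w : WittVector p l) {N : ℕ} (hN : ¬ ∃ m, N = p ^ m) :
    PowerSeries.coeff (R := _) N (Lser p l w) = 0 := by
  rw [Lser, PowerSeries.coeff_mk, if_neg (fun h => hN ⟨_, h⟩)]

lemma constantCoeff_Lser (w : WittVector p l) :
    PowerSeries.constantCoeff (R := _) (Lser p l w) = 0 := by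
  rw [← PowerSeries.coeff_zero_eq_constantCoeff_apply]
  exact coeff_Lser_not p l w (by rintro ⟨m, hm⟩; exact (pow_pos hp.out.pos m).ne' hm.symm)

lemma Lser_zero : Lser p l 0 = 0 := by
  ext N
  rw [Lser, PowerSeries.coeff_mk, map_zero]
  split_ifs with h
  · rw [iterate_map_zero, map_zero, zero_div]
  · rfl

lemma Lser_add (v w : WittVector p l) : Lser p l (v + w) = Lser p l v + Lser p l w := by
  ext N
  rw [map_add, Lser, Lser, Lser, PowerSeries.coeff_mk, PowerSeries.coeff_mk,
    PowerSeries.coeff_mk]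
  split_ifs with h
  · rw [iterate_map_add, map_add, add_div]
  · rw [add_zero]

lemma Lser_nsmul (m : ℕ) (w : WittVector p l) : Lser p l (m • w) = m • Lser p l w := by
  induction m with
  | zero => rw [zero_smul, zero_smul, Lser_zero]
  | succ m ih => rw [succ_nsmul, succ_nsmul, Lser_add, ih]

lemma Lser_key (w : WittVector p l) :
    p • Lser p l w
      = PowerSeries.C (R := _) (algebraMap (WittVector p l) _ ((p : WittVector p l) * w))
            * PowerSeries.X
        + expandF p (PowerSeries.map (sigmaK p l) (Lser p l w)) := by
  have hpne : (p : FractionRing (WittVector p l)) ≠ 0 := Nat.cast_ne_zero.mpr hp.out.ne_zero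
  ext N
  rw [map_nsmul, map_add, coeff_expandF, PowerSeries.coeff_C_mul, PowerSeries.coeff_X]
  by_cases hpow : ∃ m, N = p ^ m
  · obtain ⟨m, rfl⟩ := hpow
    cases m with
    | zero =>
      have h1 := coeff_Lser_pow p l w 0
      rw [pow_zero] at h1 ⊢
      rw [h1, if_pos rfl, if_neg (fun hd : p ∣ 1 => by
        have := Nat.le_of_dvd Nat.one_pos hd
        have := hp.out.one_lt
        omega)]
      rw [Function.iterate_zero, id_eq, pow_zero, div_one, map_mul, map_natCast,
        nsmul_eq_mul, add_zero, mul_one]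
    | succ m =>
      have hNdvd : p ∣ p ^ (m + 1) := dvd_pow_self p (Nat.succ_ne_zero m)
      have hNdiv : p ^ (m + 1) / p = p ^ m := by
        rw [pow_succ]
        exact Nat.mul_div_cancel _ hp.out.pos
      have hN1 : p ^ (m + 1) ≠ 1 :=
        (Nat.one_lt_pow (Nat.succ_ne_zero m) hp.out.one_lt).ne'
      rw [if_neg hN1, if_pos hNdvd, hNdiv, coeff_Lser_pow, PowerSeries.coeff_map,
        coeff_Lser_pow, map_div₀ (sigmaK p l), sigmaK_algebraMap, map_pow, map_natCast,
        ← Function.iterate_succ_apply' (⇑(WittVector.frobenius :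
          WittVector p l →+* WittVector p l)) m w]
      rw [nsmul_eq_mul, mul_zero, zero_add]
      field_simp
      ring
  · have hN0 : ¬ N = p ^ Nat.log p N := fun h => hpow ⟨_, h⟩
    have hN1 : N ≠ 1 := fun h => hpow ⟨0, by rw [pow_zero]; exact h⟩
    rw [coeff_Lser, if_neg hN0]; simp only [smul_zero, nsmul_zero]; rw [if_neg hN1, mul_zero, zero_add]
    by_cases hd : p ∣ N
    · rw [if_pos hd, PowerSeries.coeff_map]
      have hnp : ¬ (N / p) = p ^ Nat.log p (N / p) := by
        intro h
        exact hpow ⟨Nat.log p (N / p) + 1, by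
          rw [pow_succ', ← h, Nat.mul_div_cancel' hd]⟩
      rw [coeff_Lser, if_neg hnp, map_zero]
    · rw [if_neg hd]

lemma Lser_teichmuller (a : l) :
    Lser p l (WittVector.teichmuller p a)
      = PowerSeries.rescale
          (algebraMap (WittVector p l) _ (WittVector.teichmuller p a))
          (PowerSeries.map (algebraMap ℚ (FractionRing (WittVector p l)))
            (artinHasseLog p)) := by
  ext N
  rw [PowerSeries.coeff_rescale, PowerSeries.coeff_map, artinHasseLog, PowerSeries.coeff_mk]
  by_cases hpow : ∃ m, N = p ^ m
  · obtain ⟨m, rfl⟩ := hpow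
    rw [if_pos ⟨m, rfl⟩, coeff_Lser_pow]
    have hiter : (⇑(WittVector.frobenius : WittVector p l →+* WittVector p l))^[m]
        (WittVector.teichmuller p a) = WittVector.teichmuller p a ^ p ^ m := by
      induction m with
      | zero => rw [Function.iterate_zero, id_eq, pow_zero, pow_one]
      | succ m ih =>
        rw [Function.iterate_succ_apply', ih, map_pow]
        have hfr : WittVector.frobenius (WittVector.teichmuller p a)
            = WittVector.teichmuller p a ^ p := by
          rw [WittVector.frobenius_eq_map_frobenius, WittVector.map_teichmuller,
            frobenius_def, map_pow]
        rw [hfr, ← pow_mul, ← pow_succ']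
    rw [hiter, map_pow, map_inv₀, map_natCast, Nat.cast_pow, div_eq_mul_inv]
  · rw [if_neg hpow, map_zero, mul_zero]
    exact coeff_Lser_not p l _ hpow


set_option maxHeartbeats 1000000 in
set_option synthInstance.maxHeartbeats 400000 in
lemma dwork (f g : PowerSeries (FractionRing (WittVector p l)))
    (hf0 : PowerSeries.constantCoeff (R := _) f = 1)
    (hg0 : PowerSeries.constantCoeff (R := _) g = 1)
    (hgn : ∀ n : ℕ, n ≠ 0 → ∃ s : WittVector p l,
      PowerSeries.coeff (R := _) n g = algebraMap (WittVector p l) _ ((p : WittVector p l) * s))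
    (heq : f ^ p = g * expandF p (PowerSeries.map (sigmaK p l) f)) :
    ∀ n, ∃ r : WittVector p l,
      PowerSeries.coeff (R := _) n f = algebraMap (WittVector p l) _ r := by
  intro n
  induction n using Nat.strong_induction_on with
  | _ n IH =>
  rcases eq_or_ne n 0 with rfl | hn
  · exact ⟨1, by rw [PowerSeries.coeff_zero_eq_constantCoeff_apply, hf0, map_one]⟩
  have hp1 : 1 < p := hp.out.one_lt
  have hn0 : 0 < n := Nat.pos_of_ne_zero hn
  have hι : Function.Injective (algebraMap (WittVector p l) (FractionRing (WittVector p l))) :=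
    IsFractionRing.injective _ _
  set r : ℕ → WittVector p l := fun i => if h : i < n then (IH i h).choose else 0 with hrdef
  have hr : ∀ i, i < n → PowerSeries.coeff (R := (FractionRing (WittVector p l))) i f = (algebraMap (WittVector p l) (FractionRing (WittVector p l))) (r i) := by
    intro i hi
    rw [hrdef]
    simp only [dif_pos hi]
    exact (IH i hi).choose_spec
  set F₀ : Polynomial (WittVector p l) :=
    ∑ i ∈ Finset.range n, Polynomial.C (r i) * Polynomial.X ^ i with hF₀def
  have hF₀ : ∀ i, F₀.coeff i = if i < n then r i else 0 := by
    intro i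
    rw [hF₀def, Polynomial.finset_sum_coeff]
    have hterm : ∀ j, (Polynomial.C (r j) * Polynomial.X ^ j).coeff i
        = if i = j then r j else 0 := by
      intro j
      rw [Polynomial.coeff_C_mul, Polynomial.coeff_X_pow]
      split_ifs <;> simp
    rw [Finset.sum_congr rfl fun j _ => hterm j, Finset.sum_ite_eq (Finset.range n) i r]
    simp [Finset.mem_range]
  set F : PowerSeries (FractionRing (WittVector p l)) := PowerSeries.map (algebraMap (WittVector p l) (FractionRing (WittVector p l))) (F₀ : PowerSeries (WittVector p l)) with hFdef
  have hFc : ∀ i, PowerSeries.coeff (R := (FractionRing (WittVector p l))) i F = if i < n then PowerSeries.coeff (R := (FractionRing (WittVector p l))) i f else 0 := by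
    intro i
    rw [hFdef, PowerSeries.coeff_map, Polynomial.coeff_coe, hF₀]
    split_ifs with h
    · exact (hr i h).symm
    · exact map_zero (algebraMap (WittVector p l) (FractionRing (WittVector p l)))
  set E := f - F with hEdef
  have hEdvd : (PowerSeries.X : PowerSeries (FractionRing (WittVector p l))) ^ n ∣ E := by
    rw [PowerSeries.X_pow_dvd_iff]
    intro m hm
    rw [hEdef, map_sub, hFc, if_pos hm, sub_self]
  have hEn : PowerSeries.coeff (R := (FractionRing (WittVector p l))) n E = PowerSeries.coeff (R := (FractionRing (WittVector p l))) n f := by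
    rw [hEdef, map_sub, hFc, if_neg (lt_irrefl n), sub_zero]
  have hF0 : PowerSeries.constantCoeff (R := (FractionRing (WittVector p l))) F = 1 := by
    rw [← PowerSeries.coeff_zero_eq_constantCoeff_apply, hFc, if_pos hn0,
      PowerSeries.coeff_zero_eq_constantCoeff_apply, hf0]
  -- Step 1
  have step1 : PowerSeries.coeff (R := (FractionRing (WittVector p l))) n (f ^ p)
      = PowerSeries.coeff (R := (FractionRing (WittVector p l))) n f * (p : (FractionRing (WittVector p l))) + (algebraMap (WittVector p l) (FractionRing (WittVector p l))) ((F₀ ^ p).coeff n) := by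
    have hf' : f = F + E := by rw [hEdef]; ring
    rw [hf', add_pow, map_sum]
    have hpp : p + 1 = (p - 1) + 1 + 1 := by omega
    rw [hpp, Finset.sum_range_succ, Finset.sum_range_succ]
    have hzero : ∀ k ∈ Finset.range (p - 1),
        PowerSeries.coeff (R := (FractionRing (WittVector p l))) n (F ^ k * E ^ (p - k) * ((p.choose k : ℕ) : PowerSeries (FractionRing (WittVector p l)))) = 0 := by
      intro k hk
      rw [Finset.mem_range] at hk
      have hk2 : 2 ≤ p - k := by omega
      have hle : n + 1 ≤ n * (p - k) :=
        le_trans (by omega) (Nat.mul_le_mul_left n hk2)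
      have hdvdE : (PowerSeries.X : PowerSeries (FractionRing (WittVector p l))) ^ (n + 1)
          ∣ E ^ (p - k) :=
        dvd_trans (pow_dvd_pow PowerSeries.X hle)
          (by rw [pow_mul]; exact pow_dvd_pow_of_dvd hEdvd (p - k))
      have hdvd : (PowerSeries.X : PowerSeries (FractionRing (WittVector p l))) ^ (n + 1)
          ∣ F ^ k * E ^ (p - k) * ((p.choose k : ℕ) : PowerSeries (FractionRing (WittVector p l))) :=
        (hdvdE.mul_left (F ^ k)).mul_right _
      exact PowerSeries.X_pow_dvd_iff.mp hdvd n (Nat.lt_succ_self n)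
    rw [Finset.sum_eq_zero hzero, zero_add]
    have hpm1 : p - 1 + 1 = p := by omega
    rw [hpm1]
    have hch : p.choose (p - 1) = p := by
      have h := Nat.choose_symm (Nat.sub_le p 1)
      rw [Nat.sub_sub_self (by omega : 1 ≤ p)] at h
      rw [← h, Nat.choose_one_right]
    have hterm1 : PowerSeries.coeff (R := (FractionRing (WittVector p l))) n (F ^ (p - 1) * E ^ (p - (p - 1))
        * ((p.choose (p - 1) : ℕ) : PowerSeries (FractionRing (WittVector p l)))) = PowerSeries.coeff (R := (FractionRing (WittVector p l))) n f * (p : (FractionRing (WittVector p l))) := by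
      have hsub : p - (p - 1) = 1 := by omega
      rw [hsub, pow_one, hch]
      rw [show ((p : ℕ) : PowerSeries (FractionRing (WittVector p l))) = PowerSeries.C (R := (FractionRing (WittVector p l))) ((p : ℕ) : (FractionRing (WittVector p l))) from
        (map_natCast (PowerSeries.C (R := (FractionRing (WittVector p l)))) p).symm]
      rw [PowerSeries.coeff_mul_C]
      congr 1
      rw [PowerSeries.coeff_mul]
      rw [Finset.sum_eq_single (0, n)]
      · have hc0 : PowerSeries.coeff (R := (FractionRing (WittVector p l))) 0 (F ^ (p - 1)) = 1 := by
          rw [PowerSeries.coeff_zero_eq_constantCoeff_apply, map_pow, hF0, one_pow]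
        rw [hc0, one_mul, hEn]
      · rintro ⟨i, j⟩ hij hne
        rw [Finset.HasAntidiagonal.mem_antidiagonal] at hij
        have hj : j < n := by
          rcases Nat.lt_or_ge j n with h | h
          · exact h
          · exfalso
            apply hne
            have hjn : j = n := by omega
            have hi0 : i = 0 := by omega
            rw [hjn, hi0]
        rw [PowerSeries.X_pow_dvd_iff.mp hEdvd j hj, mul_zero]
      · intro hmem
        exact absurd (Finset.HasAntidiagonal.mem_antidiagonal.mpr (by omega : (0 : ℕ) + n = n)) hmem
    have hterm2 : PowerSeries.coeff (R := (FractionRing (WittVector p l))) n (F ^ p * E ^ (p - p)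
        * ((p.choose p : ℕ) : PowerSeries (FractionRing (WittVector p l)))) = (algebraMap (WittVector p l) (FractionRing (WittVector p l))) ((F₀ ^ p).coeff n) := by
      rw [Nat.sub_self, pow_zero, mul_one, Nat.choose_self, Nat.cast_one, mul_one]
      have hFp : F ^ p = PowerSeries.map (algebraMap (WittVector p l) (FractionRing (WittVector p l))) ((F₀ ^ p : Polynomial (WittVector p l)) :
          PowerSeries (WittVector p l)) := by
        rw [hFdef, ← map_pow, Polynomial.coe_pow]
      rw [hFp, PowerSeries.coeff_map, Polynomial.coeff_coe]
    rw [hterm1, hterm2, ← hf']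
  -- Step 2
  have hΨ : ∀ j, j ≤ n → PowerSeries.coeff (R := (FractionRing (WittVector p l))) j (expandF p (PowerSeries.map (sigmaK p l) f))
      = if p ∣ j then (algebraMap (WittVector p l) (FractionRing (WittVector p l))) (WittVector.frobenius (r (j / p))) else 0 := by
    intro j hj
    rw [coeff_expandF, PowerSeries.coeff_map]
    split_ifs with hd
    · have hjp : j / p < n :=
        lt_of_le_of_lt (Nat.div_le_div_right hj) (Nat.div_lt_self hn0 hp1)
      rw [hr _ hjp, sigmaK_algebraMap]
    · rfl
  have step2 : ∃ t : WittVector p l,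
      PowerSeries.coeff (R := (FractionRing (WittVector p l))) n (g * expandF p (PowerSeries.map (sigmaK p l) f))
        = (if p ∣ n then (algebraMap (WittVector p l) (FractionRing (WittVector p l))) (WittVector.frobenius (r (n / p))) else 0)
          + (algebraMap (WittVector p l) (FractionRing (WittVector p l))) ((p : WittVector p l) * t) := by
    rw [PowerSeries.coeff_mul,
      ← Finset.add_sum_erase _ _
        (show ((0 : ℕ), n) ∈ Finset.HasAntidiagonal.antidiagonal n from Finset.HasAntidiagonal.mem_antidiagonal.mpr (by simp))]
    have h00 : PowerSeries.coeff (R := (FractionRing (WittVector p l))) 0 g = 1 := by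
      rw [PowerSeries.coeff_zero_eq_constantCoeff_apply, hg0]
    have hsum : ∃ t : WittVector p l, ∑ x ∈ (Finset.HasAntidiagonal.antidiagonal n).erase (0, n),
        PowerSeries.coeff (R := (FractionRing (WittVector p l))) x.1 g
          * PowerSeries.coeff (R := (FractionRing (WittVector p l))) x.2 (expandF p (PowerSeries.map (sigmaK p l) f))
        = (algebraMap (WittVector p l) (FractionRing (WittVector p l))) ((p : WittVector p l) * t) := by
      refine Finset.sum_induction _ (fun y => ∃ t, y = (algebraMap (WittVector p l) (FractionRing (WittVector p l))) ((p : WittVector p l) * t)) ?_ ?_ ?_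
      · rintro x y ⟨t1, rfl⟩ ⟨t2, rfl⟩
        exact ⟨t1 + t2, by rw [← map_add, ← mul_add]⟩
      · exact ⟨0, by rw [mul_zero, map_zero]⟩
      · rintro ⟨i, j⟩ hij
        rw [Finset.mem_erase, Finset.HasAntidiagonal.mem_antidiagonal] at hij
        obtain ⟨hne, hijn⟩ := hij
        have hi0 : i ≠ 0 := by
          rintro rfl
          have hjn : j = n := by omega
          exact hne (by rw [hjn])
        obtain ⟨s, hs⟩ := hgn i hi0
        have hj : j ≤ n := by omega
        refine ⟨s * (if p ∣ j then WittVector.frobenius (r (j / p)) else 0), ?_⟩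
        rw [hΨ j hj, hs]
        split_ifs with hd
        · rw [← map_mul, mul_assoc]
        · rw [mul_zero, mul_zero, mul_zero, map_zero]
    obtain ⟨t, ht⟩ := hsum
    refine ⟨t, ?_⟩
    rw [h00, one_mul, hΨ n (le_refl n), ht]
  -- Step 3
  have step3 : ∃ s : WittVector p l, (F₀ ^ p).coeff n
      = (if p ∣ n then WittVector.frobenius (r (n / p)) else 0) + (p : WittVector p l) * s := by
    set I : Ideal (WittVector p l) := Ideal.span {((p : ℕ) : WittVector p l)} with hI
    have hInotTop : I ≠ ⊤ := by
      rw [hI, Ne, Ideal.span_singleton_eq_top]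
      exact (WittVector.irreducible p).not_isUnit
    haveI : Nontrivial (WittVector p l ⧸ I) := Ideal.Quotient.nontrivial_iff.mpr hInotTop
    have hpzero : ((p : ℕ) : WittVector p l ⧸ I) = 0 := by
      rw [← map_natCast (Ideal.Quotient.mk I), Ideal.Quotient.eq_zero_iff_mem]
      exact Ideal.subset_span rfl
    haveI hchar : CharP (WittVector p l ⧸ I) p :=
      (CharP.charP_iff_prime_eq_zero hp.out).mpr hpzero
    haveI : ExpChar (WittVector p l ⧸ I) p := ExpChar.prime hp.out
    have hcongr : Ideal.Quotient.mk I ((F₀ ^ p).coeff n)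
        = Ideal.Quotient.mk I (if p ∣ n then WittVector.frobenius (r (n / p)) else 0) := by
      have h1 : (F₀.map (Ideal.Quotient.mk I)) ^ p
          = Polynomial.map (frobenius (WittVector p l ⧸ I) p)
              (Polynomial.expand _ p (F₀.map (Ideal.Quotient.mk I))) :=
        (Polynomial.map_frobenius_expand p (F₀.map (Ideal.Quotient.mk I))).symm
      have h2 : Ideal.Quotient.mk I ((F₀ ^ p).coeff n)
          = ((F₀.map (Ideal.Quotient.mk I)) ^ p).coeff n := by
        rw [← Polynomial.coeff_map, Polynomial.map_pow]
      rw [h2, h1, Polynomial.coeff_map, Polynomial.coeff_expand hp.out.pos]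
      split_ifs with hd
      · rw [frobenius_def, Polynomial.coeff_map]
        have hnp : n / p < n := Nat.div_lt_self hn0 hp1
        rw [hF₀, if_pos hnp]
        obtain ⟨s₀, hs₀⟩ := frob_congr p l (r (n / p))
        rw [hs₀, map_add, map_mul, map_natCast, hpzero, zero_mul, add_zero, map_pow]
      · rw [map_zero, map_zero]
    have hmem : (F₀ ^ p).coeff n
        - (if p ∣ n then WittVector.frobenius (r (n / p)) else 0) ∈ I := by
      have h3 : Ideal.Quotient.mk I ((F₀ ^ p).coeff n
          - (if p ∣ n then WittVector.frobenius (r (n / p)) else 0)) = 0 := by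
        rw [map_sub, hcongr, sub_self]
      exact Ideal.Quotient.eq_zero_iff_mem.mp h3
    obtain ⟨s, hs⟩ := Ideal.mem_span_singleton'.mp hmem
    exact ⟨s, by linear_combination -hs⟩
  -- assemble
  have heqn := congrArg (PowerSeries.coeff (R := (FractionRing (WittVector p l))) n) heq
  rw [step1] at heqn
  obtain ⟨t, ht⟩ := step2
  obtain ⟨s, hs⟩ := step3
  rw [ht, hs] at heqn
  rw [map_add, map_mul, map_natCast, apply_ite (algebraMap (WittVector p l) (FractionRing (WittVector p l))), map_zero, map_mul, map_natCast] at heqn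
  refine ⟨t - s, ?_⟩
  have hpK : (p : (FractionRing (WittVector p l))) ≠ 0 := Nat.cast_ne_zero.mpr hp.out.ne_zero
  have hkey : PowerSeries.coeff (R := (FractionRing (WittVector p l))) n f * (p : (FractionRing (WittVector p l))) = ((algebraMap (WittVector p l) (FractionRing (WittVector p l))) t - (algebraMap (WittVector p l) (FractionRing (WittVector p l))) s) * (p : (FractionRing (WittVector p l))) := by
    linear_combination heqn
  rw [map_sub]
  exact mul_right_cancel₀ hpK hkey

lemma fact_val (n : ℕ) (hn : n ≠ 0) :
    ∃ r : WittVector p l,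
      algebraMap (WittVector p l) (FractionRing (WittVector p l)) r
          * (n.factorial : FractionRing (WittVector p l))
        = (p : FractionRing (WittVector p l)) ^ (n - 1) := by
  set v := (n.factorial).factorization p with hv
  have hfac : p ^ v * (n.factorial / p ^ v) = n.factorial :=
    Nat.ordProj_mul_ordCompl_eq_self _ p
  set m := n.factorial / p ^ v with hm
  have hmd : ¬ p ∣ m := Nat.not_dvd_ordCompl hp.out (Nat.factorial_ne_zero n)
  have hvle : v ≤ n - 1 := by
    have hleg := sub_one_mul_padicValNat_factorial (p := p) n
    have hfactz : v = padicValNat p (n.factorial) := by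
      rw [hv, Nat.factorization_def _ hp.out]
    have hs : 1 ≤ (p.digits n).sum := by
      have hne : p.digits n ≠ [] := Nat.digits_ne_nil_iff_ne_zero.mpr hn
      have hlast := Nat.getLast_digit_ne_zero p hn
      have hmem := List.getLast_mem hne
      have hle := List.single_le_sum (l := p.digits n) (fun x _ => Nat.zero_le x) _ hmem
      omega
    have hvv : padicValNat p (n.factorial) ≤ (p - 1) * padicValNat p (n.factorial) :=
      Nat.le_mul_of_pos_left _ (by have := hp.out.two_le; omega)
    rw [hfactz]
    omega
  obtain ⟨u, hu⟩ := isUnit_natCast_W p l m hmd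
  refine ⟨(p : WittVector p l) ^ (n - 1 - v) * ↑u⁻¹, ?_⟩
  rw [show ((n.factorial : ℕ) : FractionRing (WittVector p l))
      = algebraMap (WittVector p l) _ ((n.factorial : ℕ) : WittVector p l) from
    (map_natCast _ _).symm]
  rw [show ((p : ℕ) : FractionRing (WittVector p l)) ^ (n - 1)
      = algebraMap (WittVector p l) _ ((p : WittVector p l) ^ (n - 1)) from by
    rw [map_pow, map_natCast]]
  rw [← map_mul]
  congr 1
  have hcast : ((n.factorial : ℕ) : WittVector p l)
      = (p : WittVector p l) ^ v * ((m : ℕ) : WittVector p l) := by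
    rw [← Nat.cast_pow, ← Nat.cast_mul, hfac]
  rw [hcast]
  calc (p : WittVector p l) ^ (n - 1 - v) * ↑u⁻¹
        * ((p : WittVector p l) ^ v * ((m : ℕ) : WittVector p l))
      = (p : WittVector p l) ^ (n - 1 - v) * (p : WittVector p l) ^ v
          * (↑u⁻¹ * ((m : ℕ) : WittVector p l)) := by ring
    _ = (p : WittVector p l) ^ (n - 1) * 1 := by
        rw [← pow_add, Nat.sub_add_cancel hvle, ← hu, Units.inv_mul]
    _ = (p : WittVector p l) ^ (n - 1) := mul_one _

lemma main_integral (w : WittVector p l) (n : ℕ) :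
    ∃ r : WittVector p l,
      PowerSeries.coeff (R := _) n (pexp (Lser p l w))
        = algebraMap (WittVector p l) (FractionRing (WittVector p l)) r := by
  have hLc := constantCoeff_Lser p l w
  have hf0 : PowerSeries.constantCoeff (R := _) (pexp (Lser p l w)) = 1 := constantCoeff_pexp hLc
  have hg0 : PowerSeries.constantCoeff (R := _)
      (pexp (PowerSeries.C (R := _) (algebraMap (WittVector p l) (FractionRing (WittVector p l))
        ((p : WittVector p l) * w)) * PowerSeries.X)) = 1 :=
    constantCoeff_pexp (by rw [map_mul, PowerSeries.constantCoeff_X, mul_zero])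
  have hgn : ∀ k : ℕ, k ≠ 0 → ∃ s : WittVector p l,
      PowerSeries.coeff (R := _) k (pexp (PowerSeries.C (R := _)
          (algebraMap (WittVector p l) (FractionRing (WittVector p l))
            ((p : WittVector p l) * w)) * PowerSeries.X))
        = algebraMap (WittVector p l) _ ((p : WittVector p l) * s) := by
    intro k hk
    rw [coeff_pexp_CX]
    obtain ⟨r, hr⟩ := fact_val p l k hk
    refine ⟨w ^ k * r, ?_⟩
    have hfne : ((k.factorial : ℕ) : FractionRing (WittVector p l)) ≠ 0 :=
      Nat.cast_ne_zero.mpr (Nat.factorial_ne_zero k)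
    have hkk : k - 1 + 1 = k := by omega
    have hps : (p : FractionRing (WittVector p l)) ^ k
        = (p : FractionRing (WittVector p l)) ^ (k - 1)
            * (p : FractionRing (WittVector p l)) := by
      rw [← pow_succ, hkk]
    have key : algebraMap (WittVector p l) (FractionRing (WittVector p l))
          ((p : WittVector p l) * (w ^ k * r)) * (k.factorial : FractionRing (WittVector p l))
        = (algebraMap (WittVector p l) (FractionRing (WittVector p l))
            ((p : WittVector p l) * w)) ^ k := by
      rw [map_mul, map_mul, map_pow, map_natCast, map_mul, map_natCast, mul_pow]
      calc (p : FractionRing (WittVector p l))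
            * ((algebraMap (WittVector p l) _ w) ^ k * algebraMap (WittVector p l) _ r)
            * (k.factorial : FractionRing (WittVector p l))
          = (p : FractionRing (WittVector p l)) * (algebraMap (WittVector p l) _ w) ^ k
              * (algebraMap (WittVector p l) _ r
                  * (k.factorial : FractionRing (WittVector p l))) := by ring
        _ = (p : FractionRing (WittVector p l)) * (algebraMap (WittVector p l) _ w) ^ k
              * (p : FractionRing (WittVector p l)) ^ (k - 1) := by rw [hr]
        _ = (p : FractionRing (WittVector p l)) ^ k
              * (algebraMap (WittVector p l) _ w) ^ k := by rw [hps]; ring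
    rw [← key, mul_assoc, mul_inv_cancel₀ hfne, mul_one]
  have hmapc : PowerSeries.constantCoeff (R := _)
      (PowerSeries.map (sigmaK p l) (Lser p l w)) = 0 := by
    rw [← PowerSeries.coeff_zero_eq_constantCoeff_apply, PowerSeries.coeff_map,
      PowerSeries.coeff_zero_eq_constantCoeff_apply, hLc, map_zero]
  have heq : pexp (Lser p l w) ^ p
      = pexp (PowerSeries.C (R := _) (algebraMap (WittVector p l) (FractionRing (WittVector p l))
            ((p : WittVector p l) * w)) * PowerSeries.X)
          * expandF p (PowerSeries.map (sigmaK p l) (pexp (Lser p l w))) := by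
    rw [← pexp_nsmul hLc p, Lser_key p l w,
      pexp_add (by rw [map_mul, PowerSeries.constantCoeff_X, mul_zero])
        (by rw [constantCoeff_expandF, hmapc]),
      pexp_expandF hp.out.pos hmapc, ← pexp_map (sigmaK p l)]
  exact dwork p l _ _ hf0 hg0 hgn heq n

lemma Lser_one :
    Lser p l 1
      = PowerSeries.map (algebraMap ℚ (FractionRing (WittVector p l))) (artinHasseLog p) := by
  have h := Lser_teichmuller p l 1
  rwa [map_one, map_one, PowerSeries.rescale_one, RingHom.id_apply] at h

lemma coeff_pexp_AH (n : ℕ) :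
    PowerSeries.coeff (R := _) n (pexp (PowerSeries.map
        (algebraMap ℚ (FractionRing (WittVector p l))) (artinHasseLog p)))
      = algebraMap ℚ (FractionRing (WittVector p l)) (artinHasseCoeff p n) := by
  rw [pexp, PowerSeries.coeff_mk, artinHasseCoeff, map_sum]
  refine Finset.sum_congr rfl fun k _ => ?_
  rw [map_mul, map_inv₀, map_natCast, ← map_pow, PowerSeries.coeff_map]

lemma AH_coeff_int (n : ℕ) : ∃ r : WittVector p l,
    algebraMap ℚ (FractionRing (WittVector p l)) (artinHasseCoeff p n)
      = algebraMap (WittVector p l) (FractionRing (WittVector p l)) r := by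
  obtain ⟨r, hr⟩ := main_integral p l 1 n
  rw [Lser_one, coeff_pexp_AH] at hr
  exact ⟨r, hr⟩

include l in
lemma den_not_dvd (n : ℕ) : ¬ (p ∣ (artinHasseCoeff p n).den) := by
  intro hdvd
  obtain ⟨r, hr⟩ := AH_coeff_int p l n
  have hmain : r * (((artinHasseCoeff p n).den : ℕ) : WittVector p l)
      = ((artinHasseCoeff p n).num : WittVector p l) := by
    apply IsFractionRing.injective (WittVector p l) (FractionRing (WittVector p l))
    rw [map_mul, map_natCast, map_intCast, ← hr,
      ← map_natCast (algebraMap ℚ (FractionRing (WittVector p l))) (artinHasseCoeff p n).den,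
      ← map_mul, Rat.mul_den_eq_num, map_intCast]
  have hl := congrArg (WittVector.constantCoeff (p := p) (R := l)) hmain
  rw [map_mul, map_natCast, map_intCast,
    (CharP.cast_eq_zero_iff l p (artinHasseCoeff p n).den).mpr hdvd, mul_zero] at hl
  have hnum : ((p : ℕ) : ℤ) ∣ (artinHasseCoeff p n).num :=
    (CharP.intCast_eq_zero_iff l p _).mp hl.symm
  have hnatAbs : p ∣ (artinHasseCoeff p n).num.natAbs := Int.natCast_dvd.mp hnum
  have hgcd : p ∣ Nat.gcd (artinHasseCoeff p n).num.natAbs (artinHasseCoeff p n).den :=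
    Nat.dvd_gcd hnatAbs hdvd
  have hred : Nat.gcd (artinHasseCoeff p n).num.natAbs (artinHasseCoeff p n).den = 1 :=
    (artinHasseCoeff p n).reduced
  rw [hred] at hgcd
  have h1 := Nat.le_of_dvd Nat.one_pos hgcd
  have h2 := hp.out.one_lt
  omega

lemma map_AHW :
    PowerSeries.map (algebraMap (WittVector p l) (FractionRing (WittVector p l)))
        (artinHasseW p (WittVector p l))
      = pexp (PowerSeries.map (algebraMap ℚ (FractionRing (WittVector p l)))
          (artinHasseLog p)) := by
  ext n
  rw [PowerSeries.coeff_map, coeff_pexp_AH, artinHasseW, PowerSeries.coeff_mk]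
  have hdvd := den_not_dvd p l n
  have hu : IsUnit (((artinHasseCoeff p n).den : ℕ) : WittVector p l) :=
    isUnit_natCast_W p l _ hdvd
  have hdenK : (((artinHasseCoeff p n).den : ℕ) : FractionRing (WittVector p l)) ≠ 0 :=
    Nat.cast_ne_zero.mpr (artinHasseCoeff p n).den_nz
  apply mul_right_cancel₀ hdenK
  rw [show (((artinHasseCoeff p n).den : ℕ) : FractionRing (WittVector p l))
      = algebraMap (WittVector p l) (FractionRing (WittVector p l))
          (((artinHasseCoeff p n).den : ℕ) : WittVector p l) from (map_natCast _ _).symm]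
  rw [← map_mul, mul_assoc, Ring.inverse_mul_cancel _ hu, mul_one, map_intCast,
    map_natCast (algebraMap (WittVector p l) (FractionRing (WittVector p l))),
    ← map_natCast (algebraMap ℚ (FractionRing (WittVector p l))) (artinHasseCoeff p n).den,
    ← map_mul, Rat.mul_den_eq_num, map_intCast]

lemma map_rescale_comm (c : WittVector p l) (A : PowerSeries (WittVector p l)) :
    PowerSeries.map (algebraMap (WittVector p l) (FractionRing (WittVector p l)))
        (PowerSeries.rescale c A)
      = PowerSeries.rescale (algebraMap (WittVector p l) (FractionRing (WittVector p l)) c)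
          (PowerSeries.map (algebraMap (WittVector p l) (FractionRing (WittVector p l))) A) := by
  ext n
  rw [PowerSeries.coeff_map, PowerSeries.coeff_rescale, PowerSeries.coeff_rescale,
    PowerSeries.coeff_map, map_mul, map_pow]

lemma map_rescale_AHW (a : l) :
    PowerSeries.map (algebraMap (WittVector p l) (FractionRing (WittVector p l)))
        (PowerSeries.rescale (WittVector.teichmuller p a) (artinHasseW p (WittVector p l)))
      = pexp (Lser p l (WittVector.teichmuller p a)) := by
  rw [map_rescale_comm, map_AHW, pexp_rescale, ← Lser_teichmuller]
end Witt
end AH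

/-- First multiplicativity lemma for the Artin--Hasse exponential: for a finite
field `l` of characteristic `p` and `a, b ∈ l`, the series
`E_p([a]x) ⬝ E_p([b]x) ⬝ E_p([a+b]x)⁻¹` lies in `(W(l)[[x]]^×)^p`; equivalently
there is a unit `u` of `W(l)[[x]]` with
`E_p([a]x) ⬝ E_p([b]x) = E_p([a+b]x) ⬝ u^p`.  Here `[·]` is the Teichmüller lift
and `E_p(cx)` is obtained from `E_p` by rescaling `x ↦ cx`. -/
theorem artinHasse_teichmuller_mul (p : ℕ) [hp : Fact p.Prime] (l : Type*) [Field l]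
    [Finite l] [CharP l p] (a b : l) :
    ∃ u : (PowerSeries (WittVector p l))ˣ,
      PowerSeries.rescale (WittVector.teichmuller p a) (artinHasseW p (WittVector p l)) *
          PowerSeries.rescale (WittVector.teichmuller p b) (artinHasseW p (WittVector p l)) =
        PowerSeries.rescale (WittVector.teichmuller p (a + b))
            (artinHasseW p (WittVector p l)) *
          (u : PowerSeries (WittVector p l)) ^ p := by
  have hι : Function.Injective
      (PowerSeries.map (algebraMap (WittVector p l) (FractionRing (WittVector p l)))) := by
    intro F G h
    refine PowerSeries.ext fun n => ?_
    apply IsFractionRing.injective (WittVector p l) (FractionRing (WittVector p l))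
    have h' := congrArg (PowerSeries.coeff (R := _) n) h
    rwa [PowerSeries.coeff_map, PowerSeries.coeff_map] at h'
  have h0 : (WittVector.teichmuller p a + WittVector.teichmuller p b
      - WittVector.teichmuller p (a + b)).coeff 0 = 0 := by
    have h := map_sub (WittVector.constantCoeff (p := p) (R := l))
      (WittVector.teichmuller p a + WittVector.teichmuller p b)
      (WittVector.teichmuller p (a + b))
    rw [map_add (WittVector.constantCoeff (p := p) (R := l)), AH.constantCoeff_teichmuller,
      AH.constantCoeff_teichmuller, AH.constantCoeff_teichmuller] at h
    have h2 : WittVector.constantCoeff (WittVector.teichmuller p a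
        + WittVector.teichmuller p b - WittVector.teichmuller p (a + b)) = 0 := by
      rw [h, sub_self]
    exact h2
  obtain ⟨e, he⟩ := AH.exists_mul_p p l _ h0
  set u₀ : PowerSeries (WittVector p l) :=
    PowerSeries.mk fun n => (AH.main_integral p l e n).choose with hu₀def
  have hmapu : PowerSeries.map (algebraMap (WittVector p l) (FractionRing (WittVector p l))) u₀
      = AH.pexp (AH.Lser p l e) := by
    ext n
    rw [hu₀def, PowerSeries.coeff_map, PowerSeries.coeff_mk]
    exact ((AH.main_integral p l e n).choose_spec).symm
  have hcc : PowerSeries.constantCoeff (R := _) u₀ = 1 := by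
    apply IsFractionRing.injective (WittVector p l) (FractionRing (WittVector p l))
    have h1 := congrArg (PowerSeries.constantCoeff (R := (FractionRing (WittVector p l)))) hmapu
    rw [AH.constantCoeff_pexp (AH.constantCoeff_Lser p l e)] at h1
    rw [← PowerSeries.coeff_zero_eq_constantCoeff_apply, PowerSeries.coeff_map,
      PowerSeries.coeff_zero_eq_constantCoeff_apply] at h1
    rw [map_one]
    exact h1
  have hUnit : IsUnit u₀ :=
    PowerSeries.isUnit_iff_constantCoeff.mpr (by rw [hcc]; exact isUnit_one)
  obtain ⟨U, hUeq⟩ := hUnit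
  refine ⟨U, ?_⟩
  apply hι
  rw [map_mul, map_mul, map_pow, hUeq, hmapu]
  rw [AH.map_rescale_AHW p l a, AH.map_rescale_AHW p l b, AH.map_rescale_AHW p l (a + b)]
  rw [← AH.pexp_nsmul (AH.constantCoeff_Lser p l e) p, ← AH.Lser_nsmul]
  rw [← AH.pexp_add (AH.constantCoeff_Lser p l _) (AH.constantCoeff_Lser p l _),
    ← AH.Lser_add]
  rw [← AH.pexp_add (AH.constantCoeff_Lser p l _) (AH.constantCoeff_Lser p l _),
    ← AH.Lser_add]
  suffices hsuff : WittVector.teichmuller p a + WittVector.teichmuller p b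
      = WittVector.teichmuller p (a + b) + p • e by rw [hsuff]
  rw [nsmul_eq_mul, ← he]
  ring
end

section
/- Let p be a prime, l a finite field of characteristic p, and a, b ∈ l. Then [a] + [b] − [a+b] is divisible by p in W(l), and there exists a (necessarily unique) sequence (δ_n)_{n≥0} of elements of W(l) such that p·δ_0 = [a] + [b] − [a+b] and, for every n ≥ 1, p^n·δ_n = φ^n(δ_0) − ∑_{i=0}^{n−1} p^i δ_i^{p^{n−i}}; in particular, for each n ≥ 1 the element φ^n(δ_0) − ∑_{i=0}^{n−1} p^i δ_i^{p^{n−i}} is divisible by p^n in W(l). -/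
open WittVector Finset

section Aux

variable (p : ℕ) [hp : Fact p.Prime] (l : Type*) [Field l] [Finite l] [CharP l p]

local notation "W" => WittVector p l

/-- The expression whose `p^n`-divisibility drives the recursion. -/
noncomputable def Eseq (δ : ℕ → W) (n : ℕ) : W :=
  (⇑(WittVector.frobenius : W →+* W))^[n] (δ 0) -
    ∑ i ∈ Finset.range n, (p : W) ^ i * δ i ^ p ^ (n - i)

variable {p l}

lemma Eseq_zero (δ : ℕ → W) : Eseq p l δ 0 = δ 0 := by
  simp [Eseq]

lemma Eseq_congr {δ δ' : ℕ → W} {n : ℕ} (h0 : δ 0 = δ' 0) (h : ∀ i < n, δ i = δ' i) :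
    Eseq p l δ n = Eseq p l δ' n := by
  unfold Eseq
  rw [h0]
  congr 1
  exact Finset.sum_congr rfl fun i hi => by rw [h i (Finset.mem_range.mp hi)]

lemma p_dvd_of_coeff_zero {x : W} (h : x.coeff 0 = 0) : (p : W) ∣ x := by
  have hx : x = verschiebung (x.shift 1) := by
    have := eq_iterate_verschiebung (x := x) (n := 1) (by
      intro i hi; interval_cases i; exact h)
    simpa using this
  obtain ⟨y, hy⟩ := (frobenius_bijective p l).surjective (x.shift 1)
  refine ⟨y, ?_⟩
  rw [hx, ← hy, verschiebung_frobenius, mul_comm]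

lemma p_dvd_frobenius_sub_pow (x : W) : (p : W) ∣ WittVector.frobenius x - x ^ p := by
  apply p_dvd_of_coeff_zero
  have h1 : (WittVector.frobenius x).coeff 0 = x.coeff 0 ^ p := by
    rw [coeff_frobenius_charP]
  have h2 : (x ^ p).coeff 0 = x.coeff 0 ^ p := by
    have := map_pow (WittVector.constantCoeff : W →+* l) x p
    simpa [constantCoeff_apply] using this
  have h3 : (WittVector.frobenius x - x ^ p).coeff 0 =
      (WittVector.frobenius x).coeff 0 - (x ^ p).coeff 0 := by
    have := map_sub (WittVector.constantCoeff : W →+* l) (WittVector.frobenius x) (x ^ p)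
    simpa [constantCoeff_apply] using this
  rw [h3, h1, h2, sub_self]

lemma teichmuller_dvd (a b : l) :
    (p : W) ∣ (WittVector.teichmuller p a + WittVector.teichmuller p b -
      WittVector.teichmuller p (a + b)) := by
  apply p_dvd_of_coeff_zero
  have := map_sub (WittVector.constantCoeff : W →+* l)
    (WittVector.teichmuller p a + WittVector.teichmuller p b) (WittVector.teichmuller p (a + b))
  have h2 := map_add (WittVector.constantCoeff : W →+* l)
    (WittVector.teichmuller p a) (WittVector.teichmuller p b)
  simp only [constantCoeff_apply, teichmuller_coeff_zero] at this h2
  rw [this, h2, sub_self]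

/-- The key inductive divisibility step. -/
lemma key_step (δ : ℕ → W) (N : ℕ) (hN : (p : W) ^ N * δ N = Eseq p l δ N) :
    (p : W) ^ (N + 1) ∣ Eseq p l δ (N + 1) := by
  have hfrob : WittVector.frobenius (Eseq p l δ N) =
      (⇑(WittVector.frobenius : W →+* W))^[N + 1] (δ 0) -
        ∑ i ∈ Finset.range N, (p : W) ^ i * (WittVector.frobenius (δ i)) ^ p ^ (N - i) := by
    unfold Eseq
    rw [map_sub, map_sum]
    congr 1
    · exact (Function.iterate_succ_apply' (⇑(WittVector.frobenius : W →+* W)) N (δ 0)).symm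
    · refine Finset.sum_congr rfl fun i _ => ?_
      rw [map_mul, map_pow, map_pow, map_natCast]
  have hfrob2 : WittVector.frobenius (Eseq p l δ N) = (p : W) ^ N * WittVector.frobenius (δ N) := by
    rw [← hN, map_mul, map_pow, map_natCast]
  have key : Eseq p l δ (N + 1) =
      (∑ i ∈ Finset.range N,
        (p : W) ^ i * ((WittVector.frobenius (δ i)) ^ p ^ (N - i) - (δ i ^ p) ^ p ^ (N - i)))
      + (p : W) ^ N * (WittVector.frobenius (δ N) - δ N ^ p) := by
    have hexp : ∀ i, i < N → δ i ^ p ^ (N + 1 - i) = (δ i ^ p) ^ p ^ (N - i) := by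
      intro i hi
      have hNi : N + 1 - i = (N - i) + 1 := by omega
      rw [hNi, ← pow_mul]
      congr 1
      rw [pow_succ, mul_comm]
    unfold Eseq
    rw [Finset.sum_range_succ]
    have h1 : (⇑(WittVector.frobenius : W →+* W))^[N + 1] (δ 0) =
        (p : W) ^ N * WittVector.frobenius (δ N) +
          ∑ i ∈ Finset.range N, (p : W) ^ i * (WittVector.frobenius (δ i)) ^ p ^ (N - i) := by
      have := hfrob
      rw [hfrob2] at this
      linear_combination -this
    rw [h1]
    have h2 : ∑ i ∈ Finset.range N, (p : W) ^ i * δ i ^ p ^ (N + 1 - i) =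
        ∑ i ∈ Finset.range N, (p : W) ^ i * (δ i ^ p) ^ p ^ (N - i) :=
      Finset.sum_congr rfl fun i hi => by rw [hexp i (Finset.mem_range.mp hi)]
    have h3 : N + 1 - N = 1 := by omega
    rw [h2, h3, pow_one]
    simp only [mul_sub, Finset.sum_sub_distrib]
    ring
  rw [key]
  apply dvd_add
  · apply Finset.dvd_sum
    intro i hi
    have hiN : i < N := Finset.mem_range.mp hi
    have hdvd : (p : W) ^ (N - i + 1) ∣
        (WittVector.frobenius (δ i)) ^ p ^ (N - i) - (δ i ^ p) ^ p ^ (N - i) := by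
      exact_mod_cast dvd_sub_pow_of_dvd_sub (p_dvd_frobenius_sub_pow (δ i)) (N - i)
    have : (p : W) ^ (N + 1) = (p : W) ^ i * (p : W) ^ (N - i + 1) := by
      rw [← pow_add]; congr 1; omega
    rw [this]
    exact mul_dvd_mul_left _ hdvd
  · have : (p : W) ^ (N + 1) = (p : W) ^ N * (p : W) := by ring
    rw [this]
    exact mul_dvd_mul_left _ (p_dvd_frobenius_sub_pow (δ N))

lemma pow_p_cancel {n : ℕ} {x y : W} (h : (p : W) ^ n * x = (p : W) ^ n * y) : x = y :=
  mul_left_cancel₀ (pow_ne_zero n (p_nonzero p l)) h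

/-- One step of the construction. -/
noncomputable def segStep (d0 : W) (N : ℕ)
    (fp : { f : ℕ → W // f 0 = d0 ∧ ∀ m, 1 ≤ m → m ≤ N → (p : W) ^ m * f m = Eseq p l f m }) :
    { f : ℕ → W // f 0 = d0 ∧ ∀ m, 1 ≤ m → m ≤ N + 1 → (p : W) ^ m * f m = Eseq p l f m } :=
  have hEq : (p : W) ^ N * fp.1 N = Eseq p l fp.1 N := by
    rcases Nat.eq_zero_or_pos N with h | h
    · subst h; simp [Eseq_zero]
    · exact fp.2.2 N h le_rfl
  have hdvd : (p : W) ^ (N + 1) ∣ Eseq p l fp.1 (N + 1) := key_step fp.1 N hEq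
  ⟨Function.update fp.1 (N + 1) (Classical.choose hdvd), by
    rw [show Function.update fp.1 (N + 1) (Classical.choose hdvd) 0 = fp.1 0 by
      apply Function.update_of_ne; omega]
    exact fp.2.1, by
    intro m hm hm'
    have hc : Eseq p l fp.1 (N + 1) = (p : W) ^ (N + 1) * Classical.choose hdvd :=
      Classical.choose_spec hdvd
    have hagree : ∀ i < m,
        Function.update fp.1 (N + 1) (Classical.choose hdvd) i = fp.1 i := by
      intro i hi
      apply Function.update_of_ne
      omega
    have h0 : Function.update fp.1 (N + 1) (Classical.choose hdvd) 0 = fp.1 0 := by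
      apply Function.update_of_ne
      omega
    rw [Eseq_congr h0 hagree]
    rcases Nat.lt_or_ge m (N + 1) with h | h
    · rw [show Function.update fp.1 (N + 1) (Classical.choose hdvd) m = fp.1 m by
        apply Function.update_of_ne; omega]
      exact fp.2.2 m hm (by omega)
    · have hmN : m = N + 1 := by omega
      subst hmN
      rw [Function.update_self, ← hc]⟩

/-- Existence of the sequence of segments. -/
noncomputable def segSeq (d0 : W) : (N : ℕ) →
    { f : ℕ → W // f 0 = d0 ∧ ∀ m, 1 ≤ m → m ≤ N → (p : W) ^ m * f m = Eseq p l f m } :=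
  fun N => Nat.rec
    ⟨fun _ => d0, rfl, fun m hm hm' => absurd (hm.trans hm') (by decide)⟩
    (fun N prev => segStep d0 N prev) N

lemma segSeq_succ (d0 : W) (N : ℕ) : segSeq d0 (N + 1) = segStep d0 N (segSeq d0 N) := rfl

lemma segStep_apply_of_ne (d0 : W) (N : ℕ)
    (fp : { f : ℕ → W // f 0 = d0 ∧ ∀ m, 1 ≤ m → m ≤ N → (p : W) ^ m * f m = Eseq p l f m })
    {i : ℕ} (hi : i ≠ N + 1) : (segStep d0 N fp).1 i = fp.1 i := by
  show Function.update fp.1 (N + 1) _ i = fp.1 i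
  exact Function.update_of_ne hi _ _

lemma segSeq_agree (d0 : W) : ∀ N i : ℕ, i ≤ N → (segSeq d0 N).1 i = (segSeq d0 i).1 i := by
  intro N
  induction N with
  | zero =>
    intro i hi
    have : i = 0 := Nat.le_zero.mp hi
    subst this; rfl
  | succ N ih =>
    intro i hi
    rcases Nat.lt_or_ge i (N + 1) with h | h
    · rw [segSeq_succ, segStep_apply_of_ne d0 N _ (by omega), ih i (by omega)]
    · have : i = N + 1 := by omega
      subst this; rfl

end Aux

/-- Let `p` be a prime, `l` a finite field of characteristic `p`, and `a, b ∈ l`.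
Then `[a] + [b] − [a+b]` is divisible by `p` in `W(l)`, and there exists a
(necessarily unique) sequence `(δ_n)_{n≥0}` in `W(l)` such that
`p·δ_0 = [a] + [b] − [a+b]` and, for every `n ≥ 1`,
`p^n·δ_n = φ^n(δ_0) − ∑_{i=0}^{n−1} p^i δ_i^{p^{n−i}}`;
in particular, for each `n ≥ 1` the element
`φ^n(δ_0) − ∑_{i=0}^{n−1} p^i δ_i^{p^{n−i}}` is divisible by `p^n` in `W(l)`.
Here `[·]` is the Teichmüller lift and `φ` the Frobenius of `W(l)`. -/
theorem wittVector_delta_sequence (p : ℕ) [hp : Fact p.Prime] (l : Type*) [Field l]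
    [Finite l] [CharP l p] (a b : l) :
    ((p : WittVector p l) ∣
        (WittVector.teichmuller p a + WittVector.teichmuller p b -
          WittVector.teichmuller p (a + b))) ∧
      (∃! δ : ℕ → WittVector p l,
        (p : WittVector p l) * δ 0 =
            WittVector.teichmuller p a + WittVector.teichmuller p b -
              WittVector.teichmuller p (a + b) ∧
          ∀ n : ℕ, 1 ≤ n →
            (p : WittVector p l) ^ n * δ n =
              (⇑(WittVector.frobenius : WittVector p l →+* WittVector p l))^[n] (δ 0) -
                ∑ i ∈ Finset.range n, (p : WittVector p l) ^ i * δ i ^ p ^ (n - i)) ∧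
      ∀ δ : ℕ → WittVector p l,
        ((p : WittVector p l) * δ 0 =
            WittVector.teichmuller p a + WittVector.teichmuller p b -
              WittVector.teichmuller p (a + b) ∧
          ∀ n : ℕ, 1 ≤ n →
            (p : WittVector p l) ^ n * δ n =
              (⇑(WittVector.frobenius : WittVector p l →+* WittVector p l))^[n] (δ 0) -
                ∑ i ∈ Finset.range n, (p : WittVector p l) ^ i * δ i ^ p ^ (n - i)) →
        ∀ n : ℕ, 1 ≤ n →
          (p : WittVector p l) ^ n ∣
            ((⇑(WittVector.frobenius : WittVector p l →+* WittVector p l))^[n] (δ 0) -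
              ∑ i ∈ Finset.range n, (p : WittVector p l) ^ i * δ i ^ p ^ (n - i)) := by
  set T : WittVector p l := WittVector.teichmuller p a + WittVector.teichmuller p b -
    WittVector.teichmuller p (a + b) with hT
  have hTdvd : (p : WittVector p l) ∣ T := teichmuller_dvd a b
  obtain ⟨d0, hd0⟩ := hTdvd
  -- the candidate sequence
  set δ : ℕ → WittVector p l := fun n => (segSeq d0 n).1 n with hδdef
  have hδ0 : δ 0 = d0 := (segSeq d0 0).2.1
  have hδeq : ∀ n, 1 ≤ n → (p : WittVector p l) ^ n * δ n = Eseq p l δ n := by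
    intro n hn
    have h1 : (p : WittVector p l) ^ n * (segSeq d0 n).1 n = Eseq p l (segSeq d0 n).1 n :=
      (segSeq d0 n).2.2 n hn le_rfl
    have h0 : (segSeq d0 n).1 0 = δ 0 := by
      rw [segSeq_agree d0 n 0 (by omega)]
    have hi : ∀ i < n, (segSeq d0 n).1 i = δ i := fun i hi =>
      segSeq_agree d0 n i (by omega)
    rw [show δ n = (segSeq d0 n).1 n from rfl, h1, Eseq_congr h0 hi]
  refine ⟨⟨d0, hd0⟩, ⟨⟨δ, ⟨?_, ?_⟩, ?_⟩, ?_⟩⟩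
  · rw [hδ0, hd0]
  · intro n hn
    exact hδeq n hn
  · -- uniqueness
    rintro g ⟨hg0, hg⟩
    have key : ∀ n, g n = δ n := by
      intro n
      induction n using Nat.strong_induction_on with
      | _ n ih =>
        rcases Nat.eq_zero_or_pos n with h | h
        · subst h
          have : (p : WittVector p l) * g 0 = (p : WittVector p l) * δ 0 := by
            rw [hg0, hδ0, hd0]
          have := mul_left_cancel₀ (p_nonzero p l) this
          exact this
        · have h1 : (p : WittVector p l) ^ n * g n = Eseq p l g n := hg n h
          have h2 : (p : WittVector p l) ^ n * δ n = Eseq p l δ n := hδeq n h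
          have h3 : Eseq p l g n = Eseq p l δ n :=
            Eseq_congr (ih 0 h) (fun i hin => ih i hin)
          exact pow_p_cancel (by rw [h1, h3, ← h2])
    funext n
    exact key n
  · -- divisibility for any sequence satisfying the conditions
    rintro g ⟨-, hg⟩ n hn
    exact ⟨g n, (hg n hn).symm⟩
end

section
/- Let p be a prime, M a finite extension of ℚ_p, and m a positive integer with p ∤ m and m < pe/(p−1). Then every p-th power in M^× that lies in 1 + π^m O_M already lies in 1 + π^{m+1} O_M; that is, (M^×)^p ∩ (1 + π^m O_M) ⊆ 1 + π^{m+1} O_M. -/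
private lemma pow_eq_pow_iff_of_lt_one {r : ℝ} (h0 : 0 < r) (h1 : r < 1) {m n : ℕ}
    (h : r ^ m = r ^ n) : m = n := by
  rcases lt_trichotomy m n with hc | hc | hc
  · exact absurd h.symm (ne_of_lt (pow_lt_pow_right_of_lt_one₀ h0 h1 hc))
  · exact hc
  · exact absurd h (ne_of_lt (pow_lt_pow_right_of_lt_one₀ h0 h1 hc))

private lemma le_of_pow_le_pow_of_lt_one {r : ℝ} (h0 : 0 < r) (h1 : r < 1) {m n : ℕ}
    (h : r ^ m ≤ r ^ n) : n ≤ m := by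
  by_contra hc
  exact absurd h (not_le.mpr (pow_lt_pow_right_of_lt_one₀ h0 h1 (not_le.mp hc)))

/-- If `‖π‖^(n+1) < ‖z‖ ≤ ‖π‖^n` and `π` is a uniformizer, then `‖z‖ = ‖π‖^n`. -/
private lemma norm_eq_pow_of_annulus {M : Type*} [NormedField M] (π : M) (hπ0 : π ≠ 0)
    (hπmax : ∀ y : M, ‖y‖ < 1 → ‖y‖ ≤ ‖π‖) {z : M} {n : ℕ}
    (h1 : ‖π‖ ^ (n + 1) < ‖z‖) (h2 : ‖z‖ ≤ ‖π‖ ^ n) : ‖z‖ = ‖π‖ ^ n := by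
  have hπpos : (0:ℝ) < ‖π‖ := norm_pos_iff.mpr hπ0
  have hπn : (0:ℝ) < ‖π‖ ^ n := pow_pos hπpos n
  have hw : ‖z / π ^ n‖ = ‖z‖ / ‖π‖ ^ n := by
    rw [norm_div, norm_pow]
  have hwle : ‖z / π ^ n‖ ≤ 1 := by
    rw [hw]; exact div_le_one_of_le₀ h2 hπn.le
  have hwgt : ‖π‖ < ‖z / π ^ n‖ := by
    rw [hw, lt_div_iff₀ hπn]
    calc ‖π‖ * ‖π‖ ^ n = ‖π‖ ^ (n + 1) := by ring
    _ < ‖z‖ := h1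
  have hwe : ‖z / π ^ n‖ = 1 := by
    rcases lt_or_eq_of_le hwle with hlt | heq
    · exact absurd (hπmax _ hlt) (not_le.mpr hwgt)
    · exact heq
  have hz : ‖z‖ = ‖z / π ^ n‖ * ‖π‖ ^ n := by
    rw [hw, div_mul_cancel₀]
    exact hπn.ne'
  rw [hz, hwe, one_mul]

/-- Discreteness: a nonzero element of norm `≤ ‖π‖` has norm a positive power of `‖π‖`. -/
private lemma exists_norm_eq_pow {M : Type*} [NormedField M] (π : M) (hπ0 : π ≠ 0)
    (hπ1 : ‖π‖ < 1) (hπmax : ∀ y : M, ‖y‖ < 1 → ‖y‖ ≤ ‖π‖) {z : M} (hz0 : z ≠ 0)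
    (hz : ‖z‖ ≤ ‖π‖) : ∃ a : ℕ, 1 ≤ a ∧ ‖z‖ = ‖π‖ ^ a := by
  have hπpos : (0:ℝ) < ‖π‖ := norm_pos_iff.mpr hπ0
  have hzpos : (0:ℝ) < ‖z‖ := norm_pos_iff.mpr hz0
  have hex : ∃ n : ℕ, ‖π‖ ^ n < ‖z‖ := exists_pow_lt_of_lt_one hzpos hπ1
  classical
  have hfind : ‖π‖ ^ (Nat.find hex) < ‖z‖ := Nat.find_spec hex
  have h0 : ¬ ‖π‖ ^ 0 < ‖z‖ := by
    simp only [pow_zero, not_lt]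
    exact hz.trans hπ1.le
  have h1 : ¬ ‖π‖ ^ 1 < ‖z‖ := by
    simp only [pow_one, not_lt]
    exact hz
  have hn02 : 2 ≤ Nat.find hex := by
    rcases Nat.lt_or_ge (Nat.find hex) 2 with h | h
    · have h' : Nat.find hex = 0 ∨ Nat.find hex = 1 := by omega
      rcases h' with h' | h' <;> rw [h'] at hfind
      · exact absurd hfind h0
      · exact absurd hfind h1
    · exact h
  obtain ⟨a, hae⟩ : ∃ a, Nat.find hex = a + 1 := ⟨Nat.find hex - 1, by omega⟩
  have ha1 : 1 ≤ a := by omega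
  have hnota : ¬ ‖π‖ ^ a < ‖z‖ := Nat.find_min hex (by omega)
  rw [hae] at hfind
  exact ⟨a, ha1, norm_eq_pow_of_annulus π hπ0 hπmax hfind (not_lt.mp hnota)⟩

/-- Let `M` be a finite extension of `ℚ_p` with the unique absolute value extending the
`p`-adic one, `π` a uniformizer and `e` the absolute ramification index (`‖p‖ = ‖π‖^e`).
Let `m` be a positive integer with `p ∤ m` and `m < pe/(p-1)` (i.e. `(p-1)m < pe`).
Then every `p`-th power in `M^×` lying in `1 + π^m O_M` already lies in
`1 + π^{m+1} O_M`; membership in `1 + π^k O_M` is expressed as `‖x - 1‖ ≤ ‖π‖^k`. -/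
theorem pth_power_congruence_improves (p : ℕ) [hp : Fact p.Prime] (M : Type*) [NormedField M]
    [Algebra ℚ_[p] M] [FiniteDimensional ℚ_[p] M]
    (hnorm : ∀ y : ℚ_[p], ‖algebraMap ℚ_[p] M y‖ = ‖y‖)
    (π : M) (hπ0 : π ≠ 0) (hπ1 : ‖π‖ < 1) (hπmax : ∀ y : M, ‖y‖ < 1 → ‖y‖ ≤ ‖π‖)
    (e : ℕ) (he : ‖(p : M)‖ = ‖π‖ ^ e)
    (m : ℕ) (hm0 : 0 < m) (hmp : ¬ p ∣ m) (hm : (p - 1) * m < p * e)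
    (x : M) (hxp : ∃ y : M, y ≠ 0 ∧ x = y ^ p) (hxm : ‖x - 1‖ ≤ ‖π‖ ^ m) :
    ‖x - 1‖ ≤ ‖π‖ ^ (m + 1) := by
  have hπpos : (0:ℝ) < ‖π‖ := norm_pos_iff.mpr hπ0
  -- the norm is ultrametric
  have hult : IsUltrametricDist M := by
    apply IsUltrametricDist.isUltrametricDist_of_forall_norm_natCast_le_one
    intro n
    rw [← map_natCast (algebraMap ℚ_[p] M), hnorm]
    exact_mod_cast Padic.norm_int_le_one (n : ℤ)
  -- `‖p‖ < 1` hence `1 ≤ e`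
  have hpM : ‖(p : M)‖ < 1 := by
    rw [← map_natCast (algebraMap ℚ_[p] M), hnorm]
    exact Padic.norm_p_lt_one
  have he1 : 1 ≤ e := by
    by_contra hc
    have h0 : e = 0 := by omega
    rw [h0, pow_zero] at he
    exact absurd he (ne_of_lt hpM)
  have hp2 : 2 ≤ p := hp.out.two_le
  have hpp : p - 1 + 1 = p := by omega
  by_contra hcon
  push_neg at hcon
  -- then `‖x - 1‖ = ‖π‖ ^ m` exactly
  have heq : ‖x - 1‖ = ‖π‖ ^ m := norm_eq_pow_of_annulus π hπ0 hπmax hcon hxm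
  obtain ⟨y, hy0, rfl⟩ := hxp
  have hπm1 : ‖π‖ ^ m < 1 := pow_lt_one₀ hπpos.le hπ1 hm0.ne'
  have hx1 : ‖y ^ p - 1‖ < 1 := by rw [heq]; exact hπm1
  -- `‖y‖ = 1`
  have hyp1 : ‖y ^ p‖ = 1 := by
    have hsplit : y ^ p = (y ^ p - 1) + 1 := by ring
    rw [hsplit, IsUltrametricDist.norm_add_eq_max_of_norm_ne_norm
      (by rw [norm_one]; exact hx1.ne), norm_one]
    exact max_eq_right hx1.le
  have hy1 : ‖y‖ = 1 := by
    rw [norm_pow] at hyp1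
    rcases lt_trichotomy ‖y‖ 1 with h | h | h
    · exact absurd hyp1 (ne_of_lt (pow_lt_one₀ (norm_nonneg y) h hp.out.pos.ne'))
    · exact h
    · exact absurd hyp1.symm (ne_of_lt (one_lt_pow₀ h hp.out.pos.ne'))
  set t := y - 1 with ht_def
  have hyt : y = t + 1 := by rw [ht_def]; ring
  -- binomial expansion
  have hbin : y ^ p - 1 = (∑ k ∈ Finset.Ico 1 p, t ^ k * (p.choose k : M)) + t ^ p := by
    have h1 : y ^ p = ∑ k ∈ Finset.range (p + 1), t ^ k * 1 ^ (p - k) * (p.choose k : M) := by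
      rw [hyt, add_pow]
    simp only [one_pow, mul_one] at h1
    rw [h1, Finset.range_eq_Ico, Finset.sum_eq_sum_Ico_succ_bot (by omega),
      Finset.sum_Ico_succ_top (by omega)]
    simp [Nat.choose_self]
  have ht1 : ‖t‖ ≤ 1 := by
    rw [ht_def, sub_eq_add_neg]
    refine le_trans (IsUltrametricDist.norm_add_le_max y (-1)) ?_
    rw [norm_neg, norm_one, hy1]
    simp
  -- bound on middle terms
  have hmid : ∀ k ∈ Finset.Ico 1 p, ‖t ^ k * (p.choose k : M)‖ ≤ ‖(p : M)‖ * ‖t‖ ^ k := by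
    intro k hk
    simp only [Finset.mem_Ico] at hk
    obtain ⟨c, hc⟩ := hp.out.dvd_choose_self (by omega) hk.2
    rw [norm_mul, norm_pow, hc]
    push_cast
    rw [norm_mul]
    have hc1 : ‖(c : M)‖ ≤ 1 := IsUltrametricDist.norm_natCast_le_one M c
    calc ‖t‖ ^ k * (‖(p:M)‖ * ‖(c:M)‖) ≤ ‖t‖ ^ k * (‖(p:M)‖ * 1) := by
          apply mul_le_mul_of_nonneg_left _ (by positivity)
          exact mul_le_mul_of_nonneg_left hc1 (norm_nonneg _)
    _ = ‖(p:M)‖ * ‖t‖ ^ k := by ring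
  -- `‖t‖ < 1`
  have ht : ‖t‖ < 1 := by
    by_contra htc
    have hte : ‖t‖ = 1 := le_antisymm ht1 (not_lt.mp htc)
    have hSb : ‖∑ k ∈ Finset.Ico 1 p, t ^ k * (p.choose k : M)‖ ≤ ‖(p : M)‖ := by
      apply IsUltrametricDist.norm_sum_le_of_forall_le_of_nonneg (norm_nonneg _)
      intro k hk
      refine (hmid k hk).trans ?_
      rw [hte, one_pow, mul_one]
    have htpeq : t ^ p = (y ^ p - 1) - ∑ k ∈ Finset.Ico 1 p, t ^ k * (p.choose k : M) := by
      rw [hbin]; ring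
    have htpn : ‖t ^ p‖ < 1 := by
      rw [htpeq, sub_eq_add_neg]
      refine lt_of_le_of_lt (IsUltrametricDist.norm_add_le_max _ _) ?_
      rw [norm_neg]
      exact max_lt hx1 (lt_of_le_of_lt hSb hpM)
    rw [norm_pow, hte, one_pow] at htpn
    exact absurd htpn (lt_irrefl 1)
  -- `t ≠ 0`
  have ht0 : t ≠ 0 := by
    intro h0
    have : y = 1 := by rw [← sub_eq_zero]; exact h0
    rw [this, one_pow, sub_self, norm_zero] at heq
    exact absurd heq.symm (ne_of_gt (pow_pos hπpos m))
  obtain ⟨a, ha1, hta⟩ := exists_norm_eq_pow π hπ0 hπ1 hπmax ht0 (hπmax t ht)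
  -- bound on sum of middle terms
  have hS : ‖∑ k ∈ Finset.Ico 1 p, t ^ k * (p.choose k : M)‖ ≤ ‖π‖ ^ (e + a) := by
    apply IsUltrametricDist.norm_sum_le_of_forall_le_of_nonneg (by positivity)
    intro k hk
    refine (hmid k hk).trans ?_
    rw [he, hta, ← pow_mul, ← pow_add]
    apply pow_le_pow_of_le_one hπpos.le hπ1.le
    have hk1 : 1 ≤ k := (Finset.mem_Ico.mp hk).1
    exact Nat.add_le_add_left (Nat.le_mul_of_pos_right a (by omega)) e
  have htp : ‖t ^ p‖ = ‖π‖ ^ (a * p) := by rw [norm_pow, hta, ← pow_mul]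
  have hap : (p - 1) * a + a = a * p := by
    calc (p - 1) * a + a = a * ((p - 1) + 1) := by ring
    _ = a * p := by rw [hpp]
  rcases le_or_gt e ((p - 1) * a) with hcase | hcase
  · -- case `e ≤ (p-1) a`: then `m ≥ e + a` and `(p-1) m ≥ p e`, contradiction
    have h1 : ‖t ^ p‖ ≤ ‖π‖ ^ (e + a) := by
      rw [htp]
      apply pow_le_pow_of_le_one hπpos.le hπ1.le
      omega
    have h2 : ‖π‖ ^ m ≤ ‖π‖ ^ (e + a) := by
      rw [← heq, hbin]
      exact le_trans (IsUltrametricDist.norm_add_le_max _ _) (max_le hS h1)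
    have hma : e + a ≤ m := le_of_pow_le_pow_of_lt_one hπpos hπ1 h2
    have k1 : (p - 1) * (e + a) ≤ (p - 1) * m := Nat.mul_le_mul_left _ hma
    have k2 : (p - 1) * e + e ≤ (p - 1) * (e + a) := by
      rw [Nat.mul_add]
      exact Nat.add_le_add_left hcase _
    have k3 : (p - 1) * e + e = p * e := by
      calc (p - 1) * e + e = ((p - 1) + 1) * e := by ring
      _ = p * e := by rw [hpp]
    have : p * e ≤ (p - 1) * m := by rw [← k3]; exact le_trans k2 k1
    exact absurd hm (not_lt.mpr this)
  · -- case `(p-1) a < e`: then `m = p a`, contradicting `p ∤ m`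
    have hlt : a * p < e + a := by omega
    have hSlt : ‖∑ k ∈ Finset.Ico 1 p, t ^ k * (p.choose k : M)‖ < ‖t ^ p‖ := by
      refine lt_of_le_of_lt hS ?_
      rw [htp]
      exact pow_lt_pow_right_of_lt_one₀ hπpos hπ1 hlt
    have hmain : ‖π‖ ^ m = ‖π‖ ^ (a * p) := by
      rw [← htp, ← heq, hbin,
        IsUltrametricDist.norm_add_eq_max_of_norm_ne_norm hSlt.ne]
      exact max_eq_right hSlt.le
    have hmeq : m = a * p := pow_eq_pow_iff_of_lt_one hπpos hπ1 hmain
    exact hmp ⟨a, by rw [hmeq]; ring⟩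
end

section
/- Let p be an odd prime and M a finite extension of ℚ_p that is tamely ramified over ℚ_p (its absolute ramification index e is prime to p) and contains an element δ with δ^{p−1} = −p (equivalently, M contains a primitive p-th root of unity). Let l be the residue field of O_M. Then for every β ∈ O_M with image β̄ ∈ l, one has 1 + βδ^p ∈ (M^×)^p if and only if Tr_{l/𝔽_p}(β̄) = 0. -/
lemma trace_frob (p : ℕ) [hp : Fact p.Prime] (l : Type*) [Field l] [Finite l] [CharP l p]
    [Algebra (ZMod p) l] (y : l) :
    Algebra.trace (ZMod p) l (y ^ p) = Algebra.trace (ZMod p) l y := by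
  let e : l ≃ₐ[ZMod p] l :=
    { frobeniusEquiv l p with
      commutes' := fun c => by
        show frobenius l p (algebraMap (ZMod p) l c) = algebraMap (ZMod p) l c
        rw [frobenius_def, ← map_pow, ZMod.pow_card] }
  have h := Algebra.trace_eq_of_algEquiv e y
  have he : e y = y ^ p := by
    show frobenius l p y = y ^ p
    rw [frobenius_def]
  rw [he] at h
  exact h

lemma artin_schreier_surj (p : ℕ) [hp : Fact p.Prime] (l : Type*) [Field l] [Finite l]
    [CharP l p] [Algebra (ZMod p) l] (c : l) (hc : Algebra.trace (ZMod p) l c = 0) :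
    ∃ x : l, x ^ p - x = c := by
  classical
  have hp0 : 0 < p := hp.out.pos
  have hF : ∀ a b : l, (a + b) ^ p - (a + b) = (a ^ p - a) + (b ^ p - b) := by
    intro a b; rw [add_pow_char]; ring
  let F : l →+ l := AddMonoidHom.mk' (fun x => x ^ p - x) hF
  let Tr : l →+ ZMod p := (Algebra.trace (ZMod p) l).toAddMonoidHom
  have hTr : Function.Surjective Tr := Algebra.trace_surjective (ZMod p) l
  have hsub : F.range ≤ Tr.ker := by
    rintro _ ⟨x, rfl⟩
    show Algebra.trace (ZMod p) l (x ^ p - x) = 0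
    rw [map_sub, trace_frob, sub_self]
  -- card of kernel of F is at most p
  have hkerF : Nat.card F.ker ≤ p := by
    set f : Polynomial l := Polynomial.X ^ p - Polynomial.X with hf
    have hdeg : f.natDegree = p := by
      rw [hf, Polynomial.natDegree_sub_eq_left_of_natDegree_lt] <;>
        simp [Polynomial.natDegree_X_pow, hp0, hp.out.one_lt]
    have hf0 : f ≠ 0 := fun h => by simp [h] at hdeg; omega
    have hroots : ∀ x : l, x ∈ F.ker → x ∈ f.roots.toFinset := by
      intro x hx
      have : x ^ p - x = 0 := hx
      simp only [Multiset.mem_toFinset, Polynomial.mem_roots hf0, Polynomial.IsRoot.def, hf]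
      simp [this]
      exact hf0
    have hinj : Function.Injective
        (fun x : F.ker => (⟨(x : l), hroots x x.2⟩ : f.roots.toFinset)) := by
      intro a b hab
      have : (a : l) = (b : l) := by simpa using hab
      exact Subtype.ext this
    calc Nat.card F.ker ≤ Nat.card f.roots.toFinset := Nat.card_le_card_of_injective _ hinj
      _ = f.roots.toFinset.card := Nat.card_eq_finsetCard _
      _ ≤ Multiset.card f.roots := f.roots.toFinset_card_le
      _ ≤ f.natDegree := f.card_roots'
      _ = p := hdeg
  have h1 : Nat.card l = Nat.card F.ker * Nat.card F.range := by
    rw [AddSubgroup.card_eq_card_quotient_mul_card_addSubgroup F.ker,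
      Nat.card_congr (QuotientAddGroup.quotientKerEquivRange F).toEquiv, mul_comm]
  have h2 : Nat.card l = Nat.card Tr.ker * p := by
    rw [AddSubgroup.card_eq_card_quotient_mul_card_addSubgroup Tr.ker, mul_comm]
    congr 1
    rw [Nat.card_congr (QuotientAddGroup.quotientKerEquivRange Tr).toEquiv]
    rw [AddMonoidHom.range_eq_top_of_surjective Tr hTr,
      Nat.card_congr AddSubgroup.topEquiv.toEquiv, Nat.card_zmod]
  have hpos : 0 < Nat.card F.range := Nat.card_pos
  have h4 : Nat.card Tr.ker ≤ Nat.card F.range := by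
    have : Nat.card Tr.ker * p ≤ p * Nat.card F.range := by
      calc Nat.card Tr.ker * p = Nat.card F.ker * Nat.card F.range := by rw [← h2, h1]
        _ ≤ p * Nat.card F.range := Nat.mul_le_mul_right _ hkerF
    rw [mul_comm (Nat.card ↥Tr.ker) p] at this
    exact Nat.le_of_mul_le_mul_left this hp0
  have heq : (F.range : Set l) = (Tr.ker : Set l) := by
    refine Set.eq_of_subset_of_ncard_le hsub ?_ (Set.toFinite _)
    rw [← Nat.card_coe_set_eq, ← Nat.card_coe_set_eq]
    exact h4
  have hcmem : c ∈ F.range := by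
    have : c ∈ (Tr.ker : Set l) := hc
    rw [← heq] at this
    exact this
  obtain ⟨x, hx⟩ := hcmem
  exact ⟨x, hx⟩

open Finset in
lemma binom_exp {M : Type*} [CommRing M] (p : ℕ) (hp : 2 ≤ p) (t : M) :
    (1 + t) ^ p = 1 + p * t +
      (∑ i ∈ Finset.range (p - 2), (p.choose (i + 2) : M) * t ^ (i + 2)) + t ^ p := by
  obtain ⟨n, rfl⟩ : ∃ n, p = n + 2 := ⟨p - 2, by omega⟩
  rw [add_comm (1 : M) t, add_pow]
  rw [show n + 2 + 1 = (n + 1) + 1 + 1 by omega]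
  rw [Finset.sum_range_succ', Finset.sum_range_succ', Finset.sum_range_succ]
  simp only [Nat.add_sub_cancel, pow_zero, one_mul, mul_one, Nat.choose_zero_right,
    Nat.choose_one_right, Nat.choose_self, Nat.cast_one, Nat.cast_ofNat, one_pow]
  rw [Finset.sum_congr rfl (fun i _ => by rw [show i + 1 + 1 = i + 2 by omega, mul_comm])]
  rw [show n + 1 + 1 = n + 2 by omega, Nat.choose_one_right]
  push_cast
  ring

lemma exists_pth_root (p : ℕ) [hp : Fact p.Prime] (M : Type*) [NormedField M]
    [CompleteSpace M] [IsUltrametricDist M] (s q : ℝ)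
    (hs0 : 0 < s) (hs1 : s ≤ 1) (hq0 : 0 < q) (hq1 : q < 1)
    (hps : ‖(p : M)‖ = s ^ (p - 1))
    (u : M) (hu : ‖u - 1‖ ≤ s ^ (p - 1) * (s * q)) :
    ∃ t : M, ‖t‖ ≤ s * q ∧ (1 + t) ^ p = u := by
  have hp2 : 2 ≤ p := hp.out.two_le
  have nsub : ∀ a b : M, ‖a - b‖ ≤ max ‖a‖ ‖b‖ := fun a b => by
    rw [sub_eq_add_neg]
    simpa [norm_neg] using IsUltrametricDist.norm_add_le_max a (-b)
  set c : ℝ := s * q with hc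
  have hc0 : 0 ≤ c := by positivity
  have hc1 : c ≤ 1 := by nlinarith
  have hcs : c ≤ s := by nlinarith
  have hcq : c ≤ q := by nlinarith
  have hsp : (0:ℝ) < s ^ (p - 1) := by positivity
  have hpM : (p : M) ≠ 0 := by
    intro h
    rw [h, norm_zero] at hps
    exact absurd hps.symm (ne_of_gt hsp)
  -- the binomial tail
  set D : M → M := fun t => ∑ i ∈ Finset.range (p - 2), (p.choose (i + 2) : M) * t ^ (i + 2)
    with hD
  have hchoose : ∀ i, i ∈ Finset.range (p - 2) → ‖(p.choose (i + 2) : M)‖ ≤ s ^ (p - 1) := by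
    intro i hi
    rw [Finset.mem_range] at hi
    obtain ⟨m, hm⟩ := hp.out.dvd_choose_self (k := i + 2) (by omega) (by omega)
    rw [hm]
    push_cast
    rw [norm_mul, hps.symm]
    calc ‖(p : M)‖ * ‖(m : M)‖ ≤ ‖(p : M)‖ * 1 :=
          mul_le_mul_of_nonneg_left (IsUltrametricDist.norm_natCast_le_one M m) (norm_nonneg _)
      _ = ‖(p : M)‖ := mul_one _
  -- bound on D
  have hDbound : ∀ t : M, ‖t‖ ≤ c → ‖D t‖ ≤ s ^ (p - 1) * c ^ 2 := by
    intro t ht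
    apply IsUltrametricDist.norm_sum_le_of_forall_le_of_nonneg (by positivity)
    intro i hi
    rw [norm_mul, norm_pow]
    calc ‖(p.choose (i + 2) : M)‖ * ‖t‖ ^ (i + 2)
        ≤ s ^ (p - 1) * c ^ (i + 2) := by
          apply mul_le_mul (hchoose i hi) (pow_le_pow_left₀ (norm_nonneg t) ht _)
            (by positivity) (le_of_lt hsp)
      _ ≤ s ^ (p - 1) * c ^ 2 :=
          mul_le_mul_of_nonneg_left (pow_le_pow_of_le_one hc0 hc1 (by omega)) (le_of_lt hsp)
  -- Lipschitz-type bound on differences of powers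
  have hpowdiff : ∀ (k : ℕ) (t t' : M), ‖t‖ ≤ c → ‖t'‖ ≤ c →
      ‖t ^ k - t' ^ k‖ ≤ c ^ (k - 1) * ‖t - t'‖ := by
    intro k t t' ht ht'
    rw [← geom_sum₂_mul t t' k, norm_mul]
    apply mul_le_mul_of_nonneg_right _ (norm_nonneg _)
    apply IsUltrametricDist.norm_sum_le_of_forall_le_of_nonneg (by positivity)
    intro i hi
    rw [Finset.mem_range] at hi
    rw [norm_mul, norm_pow, norm_pow]
    calc ‖t‖ ^ i * ‖t'‖ ^ (k - 1 - i)
        ≤ c ^ i * c ^ (k - 1 - i) := by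
          apply mul_le_mul (pow_le_pow_left₀ (norm_nonneg _) ht _)
            (pow_le_pow_left₀ (norm_nonneg _) ht' _) (by positivity) (by positivity)
      _ = c ^ (i + (k - 1 - i)) := (pow_add c i _).symm
      _ = c ^ (k - 1) := by congr 1; omega
  have hDlip : ∀ t t' : M, ‖t‖ ≤ c → ‖t'‖ ≤ c →
      ‖D t - D t'‖ ≤ s ^ (p - 1) * c * ‖t - t'‖ := by
    intro t t' ht ht'
    rw [hD]
    simp only
    rw [← Finset.sum_sub_distrib]
    apply IsUltrametricDist.norm_sum_le_of_forall_le_of_nonneg (by positivity)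
    intro i hi
    rw [← mul_sub, norm_mul]
    calc ‖(p.choose (i + 2) : M)‖ * ‖t ^ (i + 2) - t' ^ (i + 2)‖
        ≤ s ^ (p - 1) * (c ^ (i + 2 - 1) * ‖t - t'‖) :=
          mul_le_mul (hchoose i hi) (hpowdiff _ t t' ht ht') (norm_nonneg _) (le_of_lt hsp)
      _ ≤ s ^ (p - 1) * (c * ‖t - t'‖) := by
          apply mul_le_mul_of_nonneg_left _ (le_of_lt hsp)
          apply mul_le_mul_of_nonneg_right _ (norm_nonneg _)
          calc c ^ (i + 2 - 1) ≤ c ^ 1 := pow_le_pow_of_le_one hc0 hc1 (by omega)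
            _ = c := pow_one c
      _ = s ^ (p - 1) * c * ‖t - t'‖ := by ring
  -- the contraction map
  set φ : M → M := fun t => (u - 1 - (D t + t ^ p)) / (p : M) with hφ
  have hφmaps : ∀ t : M, ‖t‖ ≤ c → ‖φ t‖ ≤ c := by
    intro t ht
    rw [hφ]
    simp only
    rw [norm_div, hps]
    rw [div_le_iff₀ hsp, mul_comm c _]
    calc ‖u - 1 - (D t + t ^ p)‖ ≤ max ‖u - 1‖ ‖D t + t ^ p‖ := nsub _ _
      _ ≤ s ^ (p - 1) * c := by
          apply max_le (by rw [hc]; exact hu)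
          calc ‖D t + t ^ p‖ ≤ max ‖D t‖ ‖t ^ p‖ := IsUltrametricDist.norm_add_le_max _ _
            _ ≤ s ^ (p - 1) * c := by
                apply max_le
                · calc ‖D t‖ ≤ s ^ (p - 1) * c ^ 2 := hDbound t ht
                    _ ≤ s ^ (p - 1) * c := by
                        have hcc : c ^ 2 ≤ c := by nlinarith
                        exact mul_le_mul_of_nonneg_left hcc hsp.le
                · rw [norm_pow]
                  calc ‖t‖ ^ p ≤ c ^ p := pow_le_pow_left₀ (norm_nonneg _) ht _
                    _ = c ^ (p - 1) * c := by
                        rw [← pow_succ]; congr 1; omega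
                    _ ≤ s ^ (p - 1) * c :=
                        mul_le_mul_of_nonneg_right (pow_le_pow_left₀ hc0 hcs _) hc0
  have hφlip : ∀ t t' : M, ‖t‖ ≤ c → ‖t'‖ ≤ c → ‖φ t - φ t'‖ ≤ q * ‖t - t'‖ := by
    intro t t' ht ht'
    have : φ t - φ t' = ((D t' + t' ^ p) - (D t + t ^ p)) / (p : M) := by
      rw [hφ]; simp only; field_simp
      ring
    rw [this, norm_div, hps, div_le_iff₀ hsp]
    calc ‖D t' + t' ^ p - (D t + t ^ p)‖ = ‖(D t' - D t) + (t' ^ p - t ^ p)‖ := by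
          rw [show D t' + t' ^ p - (D t + t ^ p) = (D t' - D t) + (t' ^ p - t ^ p) by ring]
      _ ≤ max ‖D t' - D t‖ ‖t' ^ p - t ^ p‖ := IsUltrametricDist.norm_add_le_max _ _
      _ ≤ q * ‖t - t'‖ * s ^ (p - 1) := by
          have hnn : ‖t - t'‖ = ‖t' - t‖ := by rw [norm_sub_rev]
          apply max_le
          · rw [hnn]
            calc ‖D t' - D t‖ ≤ s ^ (p - 1) * c * ‖t' - t‖ := hDlip t' t ht' ht
              _ = (c * ‖t' - t‖) * s ^ (p - 1) := by ring
              _ ≤ (q * ‖t' - t‖) * s ^ (p - 1) := by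
                  apply mul_le_mul_of_nonneg_right _ hsp.le
                  exact mul_le_mul_of_nonneg_right hcq (norm_nonneg _)
              _ = q * ‖t' - t‖ * s ^ (p - 1) := by ring
          · rw [hnn]
            calc ‖t' ^ p - t ^ p‖ ≤ c ^ (p - 1) * ‖t' - t‖ := hpowdiff p t' t ht' ht
              _ ≤ q * ‖t' - t‖ * s ^ (p - 1) := by
                  have h1 : c ^ (p - 1) = s ^ (p - 1) * q ^ (p - 1) := by
                    rw [hc, mul_pow]
                  have h2 : q ^ (p - 1) ≤ q := by
                    calc q ^ (p - 1) ≤ q ^ 1 := pow_le_pow_of_le_one hq0.le hq1.le (by omega)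
                      _ = q := pow_one q
                  rw [h1]
                  calc s ^ (p - 1) * q ^ (p - 1) * ‖t' - t‖
                      = (q ^ (p - 1) * ‖t' - t‖) * s ^ (p - 1) := by ring
                    _ ≤ (q * ‖t' - t‖) * s ^ (p - 1) := by
                        apply mul_le_mul_of_nonneg_right _ hsp.le
                        exact mul_le_mul_of_nonneg_right h2 (norm_nonneg _)
                    _ = q * ‖t' - t‖ * s ^ (p - 1) := by ring
  -- set up the contraction on the closed ball
  have hball : IsClosed (Metric.closedBall (0 : M) c) := Metric.isClosed_closedBall
  haveI : CompleteSpace (Metric.closedBall (0 : M) c) := hball.completeSpace_coe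
  haveI : Nonempty (Metric.closedBall (0 : M) c) :=
    ⟨⟨0, by simpa using hc0⟩⟩
  set f : Metric.closedBall (0 : M) c → Metric.closedBall (0 : M) c :=
    fun x => ⟨φ x.val, by
      rw [mem_closedBall_zero_iff]
      exact hφmaps x.val (mem_closedBall_zero_iff.mp x.2)⟩
    with hf
  set K : NNReal := ⟨q, hq0.le⟩ with hK
  have hcontr : ContractingWith K f := by
    constructor
    · exact_mod_cast hq1
    · apply LipschitzWith.of_dist_le_mul
      intro x y
      rw [Subtype.dist_eq, Subtype.dist_eq, dist_eq_norm, dist_eq_norm]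
      simp only [hf]
      exact hφlip x.val y.val (mem_closedBall_zero_iff.mp x.2) (mem_closedBall_zero_iff.mp y.2)
  let t₀ := hcontr.fixedPoint f
  have hfix : f t₀ = t₀ := hcontr.fixedPoint_isFixedPt
  set t : M := (t₀ : M) with htdef
  have htc : ‖t‖ ≤ c := mem_closedBall_zero_iff.mp t₀.2
  have hphit : φ t = t := congrArg Subtype.val hfix
  refine ⟨t, htc, ?_⟩
  have hkey : u - 1 - (D t + t ^ p) = t * (p : M) := by
    have h1 : (u - 1 - (D t + t ^ p)) / (p : M) = t := hphit
    rwa [div_eq_iff hpM] at h1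
  rw [binom_exp p hp2 t]
  have : (p : M) * t = u - 1 - (D t + t ^ p) := by rw [hkey]; ring
  rw [this]
  ring

/-- Let `p` be an odd prime and `M` a finite extension of `ℚ_p` (with the unique
absolute value extending the `p`-adic one) which is tamely ramified, i.e. whose
absolute ramification index `e` (defined by `‖p‖ = ‖π‖^e` for a uniformizer `π`)
is prime to `p`, and which contains an element `δ` with `δ^{p-1} = -p`.  Let `l`
be the residue field of `O_M`, formalized by a reduction map `ρ : M → l` which is
additive and multiplicative on `O_M = {x : ‖x‖ ≤ 1}`, sends `1` to `1`, is
surjective onto `l`, and whose kernel on `O_M` is the maximal ideal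
`{x : ‖x‖ < 1}`.  Then for every `β ∈ O_M`, one has `1 + βδ^p ∈ (M^×)^p` if and
only if `Tr_{l/𝔽_p}(ρ β) = 0`. -/
theorem pth_power_iff_trace_zero (p : ℕ) [hp : Fact p.Prime] (hp2 : p ≠ 2) (M : Type*)
    [NormedField M] [Algebra ℚ_[p] M] [FiniteDimensional ℚ_[p] M]
    (hnorm : ∀ y : ℚ_[p], ‖algebraMap ℚ_[p] M y‖ = ‖y‖)
    (π : M) (hπ0 : π ≠ 0) (hπ1 : ‖π‖ < 1) (hπmax : ∀ y : M, ‖y‖ < 1 → ‖y‖ ≤ ‖π‖)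
    (e : ℕ) (he : ‖(p : M)‖ = ‖π‖ ^ e) (htame : ¬ p ∣ e)
    (δ : M) (hδ : δ ^ (p - 1) = -(p : M))
    (l : Type*) [Field l] [Finite l] [CharP l p] [Algebra (ZMod p) l]
    (ρ : M → l)
    (hadd : ∀ x y : M, ‖x‖ ≤ 1 → ‖y‖ ≤ 1 → ρ (x + y) = ρ x + ρ y)
    (hmul : ∀ x y : M, ‖x‖ ≤ 1 → ‖y‖ ≤ 1 → ρ (x * y) = ρ x * ρ y)
    (hone : ρ 1 = 1)
    (hsurj : ∀ c : l, ∃ x : M, ‖x‖ ≤ 1 ∧ ρ x = c)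
    (hker : ∀ x : M, ‖x‖ ≤ 1 → (ρ x = 0 ↔ ‖x‖ < 1)) :
    ∀ β : M, ‖β‖ ≤ 1 →
      ((∃ z : M, z ≠ 0 ∧ 1 + β * δ ^ p = z ^ p) ↔
        Algebra.trace (ZMod p) l (ρ β) = 0) := by
  intro β hβ
  letI : NormedSpace ℚ_[p] M :=
    { norm_smul_le := fun c x => le_of_eq (by rw [Algebra.smul_def, norm_mul, hnorm]) }
  haveI : CompleteSpace M := FiniteDimensional.complete ℚ_[p] M
  haveI : IsUltrametricDist M := by
    apply IsUltrametricDist.isUltrametricDist_of_forall_norm_natCast_le_one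
    intro n
    rw [show ((n : M)) = algebraMap ℚ_[p] M (n : ℚ_[p]) from (map_natCast _ n).symm, hnorm]
    rw [show ((n : ℚ_[p])) = ((n : ℤ) : ℚ_[p]) by push_cast; ring]
    exact Padic.norm_int_le_one _
  have hp2 : 2 ≤ p := hp.out.two_le
  have hp1 : p - 1 ≠ 0 := by omega
  have hppos : p ≠ 0 := by omega
  -- ultrametric helpers
  have nadd : ∀ a b : M, ‖a + b‖ ≤ max ‖a‖ ‖b‖ := fun a b =>
    IsUltrametricDist.norm_add_le_max a b
  have nsub : ∀ a b : M, ‖a - b‖ ≤ max ‖a‖ ‖b‖ := fun a b => by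
    rw [sub_eq_add_neg]
    simpa [norm_neg] using IsUltrametricDist.norm_add_le_max a (-b)
  have naddeq : ∀ a : M, ‖a‖ < 1 → ‖1 + a‖ = 1 := by
    intro a ha
    have h := IsUltrametricDist.norm_add_eq_max_of_norm_ne_norm (x := (1 : M)) (y := a)
      (by rw [norm_one]; exact fun h => absurd h.symm (ne_of_lt ha))
    rw [h, norm_one, max_eq_left ha.le]
  -- basic norm facts
  have hpnorm : ‖(p : M)‖ = (p : ℝ)⁻¹ := by
    rw [show ((p : M)) = algebraMap ℚ_[p] M (p : ℚ_[p]) from (map_natCast _ p).symm, hnorm,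
      Padic.norm_p]
  have hpM : (p : M) ≠ 0 := by
    intro h
    rw [h, norm_zero] at hpnorm
    have h2 : (0:ℝ) < (p : ℝ)⁻¹ := by
      have : (0:ℝ) < (p:ℝ) := by exact_mod_cast hp.out.pos
      positivity
    rw [← hpnorm] at h2
    exact lt_irrefl _ h2
  have hδ0 : δ ≠ 0 := by
    intro h
    rw [h, zero_pow hp1] at hδ
    exact hpM (neg_eq_zero.mp hδ.symm)
  set s : ℝ := ‖δ‖ with hsdef
  have hs0 : 0 < s := norm_pos_iff.mpr hδ0
  have hps : ‖(p : M)‖ = s ^ (p - 1) := by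
    rw [← norm_pow, hδ, norm_neg]
  have hplt1 : ‖(p : M)‖ < 1 := by
    rw [hpnorm, inv_lt_one_iff₀]
    right
    exact_mod_cast hp.out.one_lt
  have hs1 : s < 1 := by
    by_contra hc
    push_neg at hc
    have h2 : (1:ℝ) ≤ s ^ (p - 1) := one_le_pow₀ hc
    rw [← hps] at h2
    linarith
  set r : ℝ := ‖π‖ with hrdef
  have hr0 : 0 < r := norm_pos_iff.mpr hπ0
  set q : ℝ := max r s with hqdef
  have hq0 : 0 < q := lt_of_lt_of_le hr0 (le_max_left _ _)
  have hq1 : q < 1 := max_lt hπ1 hs1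
  have hsp : (0:ℝ) < s ^ (p - 1) := by positivity
  have hδp : δ ^ p = -((p : M) * δ) := by
    have h1 : δ ^ p = δ ^ (p - 1) * δ := by
      rw [← pow_succ]
      congr 1
      omega
    rw [h1, hδ]
    ring
  have hspow : s ^ p = s ^ (p - 1) * s := by
    rw [← pow_succ]
    congr 1
    omega
  -- residue map facts
  have hρ0 : ρ 0 = 0 := by
    have h := hadd 0 0 (by simp) (by simp)
    simp only [add_zero] at h
    exact (left_eq_add.mp h)
  have hρn1 : ρ (-1) = -1 := by
    have h := hadd (-1) 1 (by simp) (by simp)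
    rw [neg_add_cancel, hρ0, hone] at h
    exact eq_neg_of_add_eq_zero_left h.symm
  have hρneg : ∀ b : M, ‖b‖ ≤ 1 → ρ (-b) = -(ρ b) := by
    intro b hb
    rw [show (-b : M) = (-1) * b by ring, hmul (-1) b (by simp) hb, hρn1]
    ring
  have hρsub : ∀ a b : M, ‖a‖ ≤ 1 → ‖b‖ ≤ 1 → ρ (a - b) = ρ a - ρ b := by
    intro a b ha hb
    rw [sub_eq_add_neg, hadd a (-b) ha (by simpa using hb), hρneg b hb]
    ring
  have hρpow : ∀ x : M, ‖x‖ ≤ 1 → ∀ n : ℕ, ρ (x ^ n) = (ρ x) ^ n := by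
    intro x hx n
    induction n with
    | zero => simpa using hone
    | succ n ih =>
        have hxn : ‖x ^ n‖ ≤ 1 := by
          rw [norm_pow]
          exact pow_le_one₀ (norm_nonneg x) hx
        rw [pow_succ, pow_succ, hmul _ _ hxn hx, ih]
  -- the binomial tail and its bound
  set D : M → M := fun t => ∑ i ∈ Finset.range (p - 2), (p.choose (i + 2) : M) * t ^ (i + 2)
    with hD
  have hchoose : ∀ i, i ∈ Finset.range (p - 2) → ‖(p.choose (i + 2) : M)‖ ≤ s ^ (p - 1) := by
    intro i hi
    rw [Finset.mem_range] at hi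
    obtain ⟨m, hm⟩ := hp.out.dvd_choose_self (k := i + 2) (by omega) (by omega)
    rw [hm]
    push_cast
    rw [norm_mul, ← hps]
    calc ‖(p : M)‖ * ‖(m : M)‖ ≤ ‖(p : M)‖ * 1 :=
          mul_le_mul_of_nonneg_left (IsUltrametricDist.norm_natCast_le_one M m) (norm_nonneg _)
      _ = ‖(p : M)‖ := mul_one _
  have hDbound : ∀ t : M, ‖t‖ ≤ 1 → ‖D t‖ ≤ s ^ (p - 1) * ‖t‖ ^ 2 := by
    intro t ht
    apply IsUltrametricDist.norm_sum_le_of_forall_le_of_nonneg (by positivity)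
    intro i hi
    rw [norm_mul, norm_pow]
    calc ‖(p.choose (i + 2) : M)‖ * ‖t‖ ^ (i + 2)
        ≤ s ^ (p - 1) * ‖t‖ ^ (i + 2) :=
          mul_le_mul_of_nonneg_right (hchoose i hi) (by positivity)
      _ ≤ s ^ (p - 1) * ‖t‖ ^ 2 :=
          mul_le_mul_of_nonneg_left
            (pow_le_pow_of_le_one (norm_nonneg t) ht (by omega)) hsp.le
  -- norm of β δ^p
  have hβδ : ‖β * δ ^ p‖ ≤ s ^ p := by
    rw [norm_mul, norm_pow]
    calc ‖β‖ * s ^ p ≤ 1 * s ^ p := mul_le_mul_of_nonneg_right hβ (by positivity)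
      _ = s ^ p := one_mul _
  have hsplt1 : s ^ p < 1 := pow_lt_one₀ hs0.le hs1 hppos
  have hβδ1 : ‖β * δ ^ p‖ < 1 := lt_of_le_of_lt hβδ hsplt1
  constructor
  · -- z exists → trace zero
    rintro ⟨z, hz0, hz⟩
    have hz1 : ‖z‖ = 1 := by
      have h1 : ‖z ^ p‖ = 1 := by
        rw [← hz]
        exact naddeq _ hβδ1
      rw [norm_pow] at h1
      rcases lt_trichotomy ‖z‖ 1 with h | h | h
      · exact absurd h1 (ne_of_lt (pow_lt_one₀ (norm_nonneg z) h hppos))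
      · exact h
      · exact absurd h1.symm (ne_of_lt (one_lt_pow₀ h hppos))
    have hzle : ‖z‖ ≤ 1 := hz1.le
    have hρδ : ρ δ = 0 := (hker δ hs1.le).mpr hs1
    have hρz : ρ z = 1 := by
      have h2 : (ρ z) ^ p = 1 := by
        rw [← hρpow z hzle p, ← hz, hadd 1 (β * δ ^ p) (by simp) hβδ1.le, hone,
          hmul β (δ ^ p) hβ (by rw [norm_pow]; exact (pow_le_one₀ hs0.le hs1.le)),
          hρpow δ hs1.le p, hρδ]
        simp [hppos]
      have h3 : (ρ z - 1) ^ p = 0 := by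
        rw [sub_pow_char, h2, one_pow, sub_self]
      have h4 : ρ z - 1 = 0 := pow_eq_zero_iff hppos |>.mp h3
      linear_combination h4
    set w : M := z - 1 with hwdef
    have hzw : z = 1 + w := by rw [hwdef]; ring
    have hwle : ‖w‖ ≤ 1 := by
      rw [hwdef]
      exact le_trans (nsub z 1) (by rw [hz1, norm_one]; simp)
    have hw1 : ‖w‖ < 1 := by
      apply (hker w hwle).mp
      rw [hwdef, hρsub z 1 hzle (by simp), hρz, hone, sub_self]
    have hexp : β * δ ^ p = (p : M) * w + D w + w ^ p := by
      have hb := binom_exp p hp2 w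
      rw [← hzw] at hb
      rw [hb] at hz
      linear_combination hz
    have hws : ‖w‖ ≤ s := by
      by_contra hgt
      push_neg at hgt
      have hw0 : 0 < ‖w‖ := hs0.trans hgt
      have hspow_lt : s ^ (p - 1) < ‖w‖ ^ (p - 1) := pow_lt_pow_left₀ hgt hs0.le hp1
      have h5 : ‖β * δ ^ p - w ^ p‖ < ‖w‖ ^ p := by
        rw [show β * δ ^ p - w ^ p = (p : M) * w + D w by linear_combination hexp]
        apply lt_of_le_of_lt (nadd _ _)
        apply max_lt
        · rw [norm_mul, hps]
          calc s ^ (p - 1) * ‖w‖ < ‖w‖ ^ (p - 1) * ‖w‖ :=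
                mul_lt_mul_of_pos_right hspow_lt hw0
            _ = ‖w‖ ^ p := by rw [← pow_succ]; congr 1; omega
        · calc ‖D w‖ ≤ s ^ (p - 1) * ‖w‖ ^ 2 := hDbound w hwle
            _ < ‖w‖ ^ (p - 1) * ‖w‖ ^ 2 := mul_lt_mul_of_pos_right hspow_lt (by positivity)
            _ = ‖w‖ ^ (p + 1) := by rw [← pow_add]; congr 1; omega
            _ ≤ ‖w‖ ^ p := pow_le_pow_of_le_one hw0.le hw1.le (by omega)
      have h6 : ‖β * δ ^ p‖ < ‖w‖ ^ p :=
        lt_of_le_of_lt hβδ (pow_lt_pow_left₀ hgt hs0.le hppos)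
      have h7 : ‖w ^ p‖ < ‖w‖ ^ p := by
        rw [show w ^ p = β * δ ^ p - (β * δ ^ p - w ^ p) by ring]
        exact lt_of_le_of_lt (nsub _ _) (max_lt h6 h5)
      rw [norm_pow] at h7
      exact lt_irrefl _ h7
    set x : M := w / δ with hxdef
    have hwx : w = x * δ := by
      rw [hxdef]
      field_simp
    have hx1 : ‖x‖ ≤ 1 := by
      rw [hxdef, norm_div]
      exact div_le_one_of_le₀ hws (norm_nonneg δ)
    have hxδs : ‖x * δ‖ ≤ s := by rw [← hwx]; exact hws
    have hxδ1 : ‖x * δ‖ ≤ 1 := le_trans hxδs hs1.le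
    have hδpne : δ ^ p ≠ 0 := pow_ne_zero p hδ0
    have hkey : β + x - x ^ p = D (x * δ) / δ ^ p := by
      rw [eq_div_iff hδpne]
      rw [hwx, mul_pow] at hexp
      have hpx : (p : M) * (x * δ) = -(x * δ ^ p) := by rw [hδp]; ring
      rw [hpx] at hexp
      linear_combination hexp
    have hgnorm : ‖β + x - x ^ p‖ ≤ s := by
      rw [hkey, norm_div, norm_pow]
      rw [div_le_iff₀ (by positivity)]
      calc ‖D (x * δ)‖ ≤ s ^ (p - 1) * ‖x * δ‖ ^ 2 := hDbound (x * δ) hxδ1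
        _ ≤ s ^ (p - 1) * s ^ 2 := by
            apply mul_le_mul_of_nonneg_left _ hsp.le
            exact pow_le_pow_left₀ (norm_nonneg _) hxδs 2
        _ = s * s ^ p := by
            rw [hspow]
            ring
    have hg1 : ‖β + x - x ^ p‖ < 1 := lt_of_le_of_lt hgnorm hs1
    have hxp1 : ‖x ^ p‖ ≤ 1 := by
      rw [norm_pow]
      exact pow_le_one₀ (norm_nonneg x) hx1
    have hρβ : ρ β = (ρ x) ^ p - ρ x := by
      have hsplit : β = (x ^ p - x) + (β + x - x ^ p) := by ring
      have hxpx : ‖x ^ p - x‖ ≤ 1 := le_trans (nsub _ _) (max_le hxp1 hx1)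
      calc ρ β = ρ ((x ^ p - x) + (β + x - x ^ p)) := by rw [← hsplit]
        _ = ρ (x ^ p - x) + ρ (β + x - x ^ p) := hadd _ _ hxpx hg1.le
        _ = ρ (x ^ p - x) + 0 := by rw [(hker _ hg1.le).mpr hg1]
        _ = (ρ x) ^ p - ρ x := by
            rw [add_zero, hρsub (x ^ p) x hxp1 hx1, hρpow x hx1 p]
    rw [hρβ, map_sub, trace_frob, sub_self]
  · -- trace zero → z exists
    intro htr
    obtain ⟨xb, hxb⟩ := artin_schreier_surj p l (ρ β) htr
    obtain ⟨x, hx1, hρx⟩ := hsurj xb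
    have hxδs : ‖x * δ‖ ≤ s := by
      rw [norm_mul]
      calc ‖x‖ * s ≤ 1 * s := mul_le_mul_of_nonneg_right hx1 hs0.le
        _ = s := one_mul _
    have hxδ1 : ‖x * δ‖ < 1 := lt_of_le_of_lt hxδs hs1
    set A : M := 1 + x * δ with hAdef
    have hAnorm : ‖A‖ = 1 := naddeq _ hxδ1
    have hA0 : A ≠ 0 := by
      intro h
      rw [h, norm_zero] at hAnorm
      exact one_ne_zero hAnorm.symm
    have hAp : A ^ p = 1 + (x ^ p - x) * δ ^ p + D (x * δ) := by
      rw [hAdef, binom_exp p hp2 (x * δ)]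
      have hpx : (p : M) * (x * δ) = -(x * δ ^ p) := by rw [hδp]; ring
      rw [hpx, mul_pow]
      ring
    have hxp1 : ‖x ^ p‖ ≤ 1 := by
      rw [norm_pow]
      exact pow_le_one₀ (norm_nonneg x) hx1
    have hxpx : ‖x ^ p - x‖ ≤ 1 := le_trans (nsub _ _) (max_le hxp1 hx1)
    have hρg : ρ (β - (x ^ p - x)) = 0 := by
      rw [hρsub β (x ^ p - x) hβ hxpx, hρsub (x ^ p) x hxp1 hx1, hρpow x hx1 p, hρx, hxb,
        sub_self]
    have hgle : ‖β - (x ^ p - x)‖ ≤ 1 := le_trans (nsub _ _) (max_le hβ hxpx)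
    have hgr : ‖β - (x ^ p - x)‖ ≤ r := hπmax _ ((hker _ hgle).mp hρg)
    have hdiff : ‖(1 + β * δ ^ p) - A ^ p‖ ≤ s ^ (p - 1) * (s * q) := by
      rw [show (1 + β * δ ^ p) - A ^ p = (β - (x ^ p - x)) * δ ^ p - D (x * δ) by
        rw [hAp]; ring]
      apply le_trans (nsub _ _)
      apply max_le
      · rw [norm_mul, norm_pow]
        calc ‖β - (x ^ p - x)‖ * s ^ p ≤ r * s ^ p :=
              mul_le_mul_of_nonneg_right hgr (by positivity)
          _ = s ^ (p - 1) * (s * r) := by rw [hspow]; ring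
          _ ≤ s ^ (p - 1) * (s * q) := by
              apply mul_le_mul_of_nonneg_left _ hsp.le
              exact mul_le_mul_of_nonneg_left (le_max_left r s) hs0.le
      · calc ‖D (x * δ)‖ ≤ s ^ (p - 1) * ‖x * δ‖ ^ 2 := hDbound (x * δ) hxδ1.le
          _ ≤ s ^ (p - 1) * s ^ 2 := by
              apply mul_le_mul_of_nonneg_left _ hsp.le
              exact pow_le_pow_left₀ (norm_nonneg _) hxδs 2
          _ = s ^ (p - 1) * (s * s) := by ring
          _ ≤ s ^ (p - 1) * (s * q) := by
              apply mul_le_mul_of_nonneg_left _ hsp.le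
              exact mul_le_mul_of_nonneg_left (le_max_right r s) hs0.le
    have hApnorm : ‖A ^ p‖ = 1 := by rw [norm_pow, hAnorm, one_pow]
    have hApne : A ^ p ≠ 0 := pow_ne_zero p hA0
    set u : M := (1 + β * δ ^ p) / A ^ p with hudef
    have hu : ‖u - 1‖ ≤ s ^ (p - 1) * (s * q) := by
      rw [show u - 1 = ((1 + β * δ ^ p) - A ^ p) / A ^ p by rw [hudef]; field_simp]
      rw [norm_div, hApnorm, div_one]
      exact hdiff
    obtain ⟨t, htc, htp⟩ := exists_pth_root p M s q hs0 hs1.le hq0 hq1 hps u hu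
    have ht1 : ‖t‖ < 1 := by
      apply lt_of_le_of_lt htc
      calc s * q ≤ 1 * q := mul_le_mul_of_nonneg_right hs1.le hq0.le
        _ = q := one_mul _
        _ < 1 := hq1
    have h1t : (1 + t) ≠ 0 := by
      intro h
      have := naddeq t ht1
      rw [h, norm_zero] at this
      exact one_ne_zero this.symm
    refine ⟨(1 + t) * A, mul_ne_zero h1t hA0, ?_⟩
    rw [mul_pow, htp, hudef]
    field_simp
end

section
/- Let (a_0, …, a_{f−1}) be a tame signature for a prime p and integer f ≥ 1. Then for every subset J ⊆ ℤ/fℤ, the set μ(J) is admissible. -/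
open scoped Classical

/-- `a : ℤ → ℕ` represents a tame signature `(a_0, …, a_{f−1}) ∈ {1,…,p}^f` (not all
entries equal to `p`), with the indices extended to all of `ℤ` by `f`-periodicity. -/
def IsTameSignature (p f : ℕ) (a : ℤ → ℕ) : Prop :=
  0 < f ∧ (∀ j : ℤ, a (j + f) = a j) ∧ (∀ j : ℤ, 1 ≤ a j ∧ a j ≤ p) ∧ ∃ j : ℤ, a j ≠ p

/-- `([i], [i+t])` with `1 ≤ t ≤ f−1` is a dependent pair if `a_{i+1} = p`,
`a_{i+t+1} ≠ p`, and for some `s ∈ {1,…,t}` one has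
`a_{i+2} = ⋯ = a_{i+s} = p−1` and `a_{i+s+1} = ⋯ = a_{i+t} = p`. -/
def IsDependentPair (p f : ℕ) (a : ℤ → ℕ) (x y : ZMod f) : Prop :=
  ∃ i t : ℤ, 1 ≤ t ∧ t ≤ (f : ℤ) - 1 ∧ x = (i : ZMod f) ∧ y = ((i + t : ℤ) : ZMod f) ∧
    a (i + 1) = p ∧ a (i + t + 1) ≠ p ∧
    ∃ s : ℤ, 1 ≤ s ∧ s ≤ t ∧
      (∀ m : ℤ, i + 2 ≤ m → m ≤ i + s → a m = p - 1) ∧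
      (∀ m : ℤ, i + s + 1 ≤ m → m ≤ i + t → a m = p)

/-- A subset `J ⊆ ℤ/fℤ` is admissible if for every dependent pair `([j],[i])` with
`[i] ∈ J` one also has `[j] ∈ J`. -/
def SigAdmissible (p f : ℕ) (a : ℤ → ℕ) (J : Set (ZMod f)) : Prop :=
  ∀ x y : ZMod f, IsDependentPair p f a x y → y ∈ J → x ∈ J

/-- The shifting function `δ : ℤ → ℤ`: `δ(j) = j` unless
`(a_{i+1}, a_{i+2}, …, a_j) = (p, p−1, …, p−1)` for some (necessarily unique) `i < j`,
in which case `δ(j) = i`. -/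
noncomputable def sigDelta (p : ℕ) (a : ℤ → ℕ) (j : ℤ) : ℤ :=
  if h : ∃ i : ℤ, i < j ∧ a (i + 1) = p ∧ ∀ m : ℤ, i + 1 < m → m ≤ j → a m = p - 1
  then h.choose else j

/-- The map `ℤ/fℤ → ℤ/fℤ` induced by `δ`. -/
noncomputable def sigDeltaBar (p f : ℕ) (a : ℤ → ℕ) (x : ZMod f) : ZMod f :=
  ((sigDelta p a (x.val : ℤ) : ℤ) : ZMod f)

/-- witness predicate -/
def SigW (p : ℕ) (a : ℤ → ℕ) (j i : ℤ) : Prop :=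
  i < j ∧ a (i + 1) = p ∧ ∀ m : ℤ, i + 1 < m → m ≤ j → a m = p - 1

lemma sigW_unique {p : ℕ} {a : ℤ → ℕ} (hp1 : 0 < p) {j i i' : ℤ}
    (h : SigW p a j i) (h' : SigW p a j i') : i = i' := by
  rcases lt_trichotomy i i' with hlt | he | hlt
  · have h1 := h.2.2 (i' + 1) (by linarith) (by linarith [h'.1])
    have h2 := h'.2.1
    omega
  · exact he
  · have h1 := h'.2.2 (i + 1) (by linarith) (by linarith [h.1])
    have h2 := h.2.1
    omega

lemma sigDelta_eq_of {p : ℕ} {a : ℤ → ℕ} (hp1 : 0 < p) {j i : ℤ} (h : SigW p a j i) :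
    sigDelta p a j = i := by
  have hex : ∃ i : ℤ, i < j ∧ a (i + 1) = p ∧ ∀ m : ℤ, i + 1 < m → m ≤ j → a m = p - 1 :=
    ⟨i, h⟩
  unfold sigDelta
  rw [dif_pos hex]
  exact sigW_unique hp1 hex.choose_spec h

lemma sigDelta_cases (p : ℕ) (a : ℤ → ℕ) (j : ℤ) :
    sigDelta p a j = j ∨ SigW p a j (sigDelta p a j) := by
  unfold sigDelta
  split_ifs with h
  · exact Or.inr h.choose_spec
  · exact Or.inl rfl

lemma sigDelta_le (p : ℕ) (a : ℤ → ℕ) (j : ℤ) : sigDelta p a j ≤ j := by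
  rcases sigDelta_cases p a j with h | h
  · exact h.le
  · exact h.1.le

section periodic
variable {p f : ℕ} {a : ℤ → ℕ} (hper : ∀ j : ℤ, a (j + f) = a j)

include hper

lemma sig_a_shift (k j : ℤ) : a (j + k * f) = a j := by
  induction k using Int.induction_on with
  | zero => simp
  | succ k ih => have := hper (j + k * f); rw [show ((k : ℤ) + 1) * f = k * f + f by ring,
      ← add_assoc, this, ih]
  | pred k ih => have := hper (j + (-(k : ℤ) - 1) * f)
                 rw [show j + (-(k:ℤ) - 1) * f + f = j + -(k:ℤ) * f by ring] at this
                 rw [show (-(k:ℤ) - 1) * f = (-(k:ℤ) - 1) * f by ring, ← this, ih]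

lemma sig_a_congr {c c' : ℤ} (h : (c : ZMod f) = (c' : ZMod f)) : a c = a c' := by
  have hd : (f : ℤ) ∣ c' - c := ((ZMod.intCast_eq_intCast_iff c c' f).mp h).dvd
  obtain ⟨k, hk⟩ := hd
  have : c' = c + k * f := by linarith
  rw [this, sig_a_shift hper]

lemma sigW_shift (k : ℤ) {j i : ℤ} (h : SigW p a j i) : SigW p a (j + k * f) (i + k * f) := by
  refine ⟨by linarith [h.1], ?_, ?_⟩
  · rw [show i + k * f + 1 = (i + 1) + k * f by ring, sig_a_shift hper]; exact h.2.1
  · intro m hm1 hm2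
    rw [show m = (m - k * f) + k * f by ring, sig_a_shift hper]
    exact h.2.2 (m - k * f) (by linarith) (by linarith)

lemma sigDelta_shift (hp1 : 0 < p) (k j : ℤ) :
    sigDelta p a (j + k * f) = sigDelta p a j + k * f := by
  rcases sigDelta_cases p a j with h | h
  · rcases sigDelta_cases p a (j + k * f) with h' | h'
    · rw [h', h]
    · have hw : SigW p a j (sigDelta p a (j + k * f) + (-k) * f) := by
        have := sigW_shift hper (-k) h'
        rwa [show j + k * f + -k * f = j by ring] at this
      have := sigDelta_eq_of hp1 hw
      have hlt := hw.1
      rw [h] at this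
      omega
  · exact sigDelta_eq_of hp1 (sigW_shift hper k h)
end periodic

section bar
variable {p f : ℕ} {a : ℤ → ℕ}

lemma int_cast_val_eq [NeZero f] (x : ZMod f) : ((x.val : ℤ) : ZMod f) = x := by
  push_cast
  exact ZMod.natCast_rightInverse x

lemma sigDeltaBar_intCast [NeZero f] (hp1 : 0 < p) (hper : ∀ j : ℤ, a (j + f) = a j) (m : ℤ) :
    sigDeltaBar p f a (m : ZMod f) = ((sigDelta p a m : ℤ) : ZMod f) := by
  unfold sigDeltaBar
  set v : ℤ := (((m : ZMod f)).val : ℤ) with hv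
  have h1 : (v : ZMod f) = (m : ZMod f) := int_cast_val_eq _
  have hd : (f : ℤ) ∣ m - v := ((ZMod.intCast_eq_intCast_iff v m f).mp h1).dvd
  obtain ⟨k, hk⟩ := hd
  have hveq : v = m + (-k) * f := by linarith
  rw [hveq, sigDelta_shift hper hp1]
  push_cast
  simp [ZMod.natCast_self]

/-- structure lemma, low range -/
lemma sig_delta_low (hp1 : 0 < p) {c s : ℤ} (h1 : a (c + 1) = p)
    (hmid : ∀ m : ℤ, c + 2 ≤ m → m ≤ c + s → a m = p - 1)
    {j : ℤ} (hj1 : c < j) (hj2 : j ≤ c + s) : sigDelta p a j = c :=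
  sigDelta_eq_of hp1 ⟨hj1, h1, fun m hm1 hm2 => hmid m (by linarith) (by linarith)⟩

/-- structure lemma, high range -/
lemma sig_delta_high (hp1 : 0 < p) {c s t : ℤ}
    (htail : ∀ m : ℤ, c + s + 1 ≤ m → m ≤ c + t → a m = p)
    {j : ℤ} (hj1 : c + s < j) (hj2 : j ≤ c + t) : sigDelta p a j = j - 1 := by
  refine sigDelta_eq_of hp1 ⟨by linarith, ?_, fun m hm1 hm2 => absurd (by linarith : m ≤ j) (by omega)⟩
  rw [sub_add_cancel]
  exact htail j (by linarith) hj2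
end bar


lemma sig_admissible_of_subset {p f : ℕ} {a : ℤ → ℕ} [NeZero f] (hp1 : 0 < p)
    (hper : ∀ j : ℤ, a (j + f) = a j) (K : Set (ZMod f))
    (hK : sigDeltaBar p f a '' K ⊆ K) : SigAdmissible p f a K := by
  rintro x y ⟨c, t, ht1, htf, hx, hy, h1, hne, s, hs1, hst, hmid, htail⟩ hyK
  have key : ∀ k : ℕ, ((k : ℤ)) ≤ t → (((c + (k : ℤ)) : ℤ) : ZMod f) ∈ K → (c : ZMod f) ∈ K := by
    intro k
    induction k with
    | zero => intro _ h; simpa using h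
    | succ k ih =>
      intro hk hmem
      have hj : sigDeltaBar p f a (((c + ((k : ℤ) + 1)) : ℤ) : ZMod f) ∈ K := by
        apply hK; exact ⟨_, by push_cast at hmem ⊢; exact hmem, rfl⟩
      rw [sigDeltaBar_intCast hp1 hper] at hj
      have hck : (0 : ℤ) ≤ (k : ℤ) := Int.natCast_nonneg k
      push_cast at hk
      rcases le_or_gt (c + ((k : ℤ) + 1)) (c + s) with h | h
      · rwa [sig_delta_low hp1 h1 hmid (by linarith) h] at hj
      · rw [sig_delta_high hp1 htail (by linarith) (by linarith)] at hj
        exact ih (by linarith) (by rw [show c + (k:ℤ) = c + ((k:ℤ)+1) - 1 by ring]; exact hj)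
  rw [hx]
  refine key t.toNat (by rw [Int.toNat_of_nonneg (by linarith)]) ?_
  rw [Int.toNat_of_nonneg (by linarith : (0:ℤ) ≤ t), ← hy]
  exact hyK


/-- The set `μ(J) = {[i_1], …, [i_r]}` produced by the construction from a chosen
starting integer `i₁` (whose class lies in `δ(J) ∖ J`): `j₁` is the least integer with
`j₁ > i₁`, `[j₁] ∈ J` and `δ(j₁) = i₁`; writing `J = {[j_1],…,[j_r]}` with
`j_1 < ⋯ < j_r < j_1 + f`, one sets inductively `i_κ = δ(j_κ)` if `i_{κ−1} < δ(j_κ)`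
and `i_κ = j_κ` otherwise. -/
noncomputable def sigMuFrom (p f : ℕ) (a : ℤ → ℕ) (J : Set (ZMod f)) (i₁ : ℤ) :
    Set (ZMod f) :=
  let j₁ : ℤ :=
    if h : ∃ j : ℤ, (i₁ < j ∧ (j : ZMod f) ∈ J ∧ sigDelta p a j = i₁) ∧
        ∀ j' : ℤ, (i₁ < j' ∧ (j' : ZMod f) ∈ J ∧ sigDelta p a j' = i₁) → j ≤ j'
    then h.choose else i₁ + 1
  -- the representatives of `J` in the window `[j₁, j₁ + f)`, in increasing order:
  -- `jSeq κ` is the `(κ+1)`-st smallest, i.e. `j_{κ+1}` in the notation above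
  let jSeq : ℕ → ℤ := fun κ =>
    j₁ + (Nat.nth (fun v : ℕ => ∃ x ∈ J, (x - (j₁ : ZMod f)).val = v) κ : ℤ)
  let iSeq : ℕ → ℤ := fun κ =>
    Nat.rec (motive := fun _ => ℤ) i₁
      (fun κ' ih =>
        if ih < sigDelta p a (jSeq (κ' + 1)) then sigDelta p a (jSeq (κ' + 1))
        else jSeq (κ' + 1)) κ
  { y : ZMod f | ∃ κ : ℕ, κ < J.ncard ∧ y = (Int.cast (iSeq κ) : ZMod f) }

/-- The set `μ(J)`: if `δ(J) ⊆ J` then `μ(J) = J`; otherwise it is produced by the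
construction `sigMuFrom` applied to a choice of `[i₁] ∈ δ(J) ∖ J`. -/
noncomputable def sigMu (p f : ℕ) (a : ℤ → ℕ) (J : Set (ZMod f)) : Set (ZMod f) :=
  if sigDeltaBar p f a '' J ⊆ J then J
  else if h : ∃ i : ℤ, (i : ZMod f) ∈ (sigDeltaBar p f a '' J) \ J
    then sigMuFrom p f a J h.choose else J

/-- mirror of the first `let` of `sigMuFrom` -/
noncomputable def sigJ1 (p f : ℕ) (a : ℤ → ℕ) (J : Set (ZMod f)) (i₁ : ℤ) : ℤ :=
  if h : ∃ j : ℤ, (i₁ < j ∧ (j : ZMod f) ∈ J ∧ sigDelta p a j = i₁) ∧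
      ∀ j' : ℤ, (i₁ < j' ∧ (j' : ZMod f) ∈ J ∧ sigDelta p a j' = i₁) → j ≤ j'
  then h.choose else i₁ + 1

noncomputable def sigjS (p f : ℕ) (a : ℤ → ℕ) (J : Set (ZMod f)) (i₁ : ℤ) (κ : ℕ) : ℤ :=
  sigJ1 p f a J i₁ +
    (Nat.nth (fun v : ℕ => ∃ x ∈ J, (x - (sigJ1 p f a J i₁ : ZMod f)).val = v) κ : ℤ)

noncomputable def sigiS (p f : ℕ) (a : ℤ → ℕ) (J : Set (ZMod f)) (i₁ : ℤ) (κ : ℕ) : ℤ :=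
  Nat.rec (motive := fun _ => ℤ) i₁
    (fun κ' ih =>
      if ih < sigDelta p a (sigjS p f a J i₁ (κ' + 1)) then sigDelta p a (sigjS p f a J i₁ (κ' + 1))
      else sigjS p f a J i₁ (κ' + 1)) κ

lemma sigMuFrom_eq (p f : ℕ) (a : ℤ → ℕ) (J : Set (ZMod f)) (i₁ : ℤ) :
    sigMuFrom p f a J i₁ =
      { y : ZMod f | ∃ κ : ℕ, κ < J.ncard ∧ y = ((sigiS p f a J i₁ κ : ℤ) : ZMod f) } := rfl

lemma sigiS_zero (p f : ℕ) (a : ℤ → ℕ) (J : Set (ZMod f)) (i₁ : ℤ) :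
    sigiS p f a J i₁ 0 = i₁ := rfl

lemma sigiS_succ (p f : ℕ) (a : ℤ → ℕ) (J : Set (ZMod f)) (i₁ : ℤ) (κ : ℕ) :
    sigiS p f a J i₁ (κ + 1) =
      if sigiS p f a J i₁ κ < sigDelta p a (sigjS p f a J i₁ (κ + 1))
      then sigDelta p a (sigjS p f a J i₁ (κ + 1)) else sigjS p f a J i₁ (κ + 1) := rfl

/-- The abstract descent argument. -/
lemma sig_descent {c s t : ℤ} {r : ℕ} {iS jS : ℕ → ℤ} {D : ℤ → ℤ}
    (hs1 : 1 ≤ s) (hst : s ≤ t)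
    (hdlow : ∀ j : ℤ, c < j → j ≤ c + s → D j = c)
    (hdhigh : ∀ j : ℤ, c + s < j → j ≤ c + t → D j = j - 1)
    (hDle : ∀ j : ℤ, D j ≤ j)
    (hjmono : ∀ κ κ' : ℕ, κ < κ' → κ' < r → jS κ < jS κ')
    (hile : ∀ κ : ℕ, iS κ ≤ jS κ)
    (histep : ∀ κ : ℕ, κ + 1 < r → iS κ < iS (κ + 1))
    (hi0 : D (jS 0) = iS 0) (hi0lt : iS 0 < jS 0)
    (hisucc : ∀ κ : ℕ, iS (κ + 1) =
      if iS κ < D (jS (κ + 1)) then D (jS (κ + 1)) else jS (κ + 1)) :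
    ∀ L : ℕ, L + 1 < r → c ≤ iS L →
      (iS L = c ∨ (jS (L + 1) ≤ c + s ∧ iS L < jS (L + 1)) ∨
        (iS L = jS (L + 1) - 1 ∧ c + s ≤ iS L ∧ jS (L + 1) ≤ c + t)) →
      ∃ L' : ℕ, L' ≤ L ∧ iS L' = c := by
  intro L
  induction L with
  | zero =>
    intro hr hcle hdisj
    refine ⟨0, le_refl 0, ?_⟩
    by_contra hne0
    have hclt : c < iS 0 := lt_of_le_of_ne hcle (Ne.symm hne0)
    have hj01 : jS 0 < jS 1 := hjmono 0 1 (by omega) (by omega)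
    have hjn : jS (0 + 1) = jS 1 := by norm_num
    rcases hdisj with h | ⟨h2a, h2b⟩ | ⟨h3a, h3b, h3c⟩
    · exact hne0 h
    · have hd := hdlow (jS 0) (by omega) (by omega)
      omega
    · omega
  | succ L ih =>
    intro hr hcle hdisj
    by_cases hceq : iS (L + 1) = c
    · exact ⟨L + 1, le_refl _, hceq⟩
    have hclt : c < iS (L + 1) := lt_of_le_of_ne hcle (Ne.symm hceq)
    have hmono12 : jS (L + 1) < jS (L + 2) := hjmono (L + 1) (L + 2) (by omega) hr
    have hjn : jS (L + 1 + 1) = jS (L + 2) := by norm_num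
    have histp : iS L < iS (L + 1) := histep L (by omega)
    rcases hdisj with h | ⟨h2a, h2b⟩ | ⟨h3a, h3b, h3c⟩
    · exact absurd h hceq
    · by_cases hif : iS L < D (jS (L + 1))
      · have he : iS (L + 1) = D (jS (L + 1)) := by rw [hisucc, if_pos hif]
        have hDl := hDle (jS (L + 1))
        have hd := hdlow (jS (L + 1)) (by omega) (by omega)
        omega
      · have he : iS (L + 1) = jS (L + 1) := by rw [hisucc, if_neg hif]
        have hAle : D (jS (L + 1)) ≤ iS L := not_lt.mp hif
        have hdel : D (jS (L + 1)) = c := hdlow _ (by omega) (by omega)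
        obtain ⟨L', hL', hLc⟩ := ih (by omega) (by omega)
          (Or.inr (Or.inl ⟨by omega,
            lt_of_le_of_lt (hile L) (hjmono L (L + 1) (by omega) (by omega))⟩))
        exact ⟨L', by omega, hLc⟩
    · by_cases hif : iS L < D (jS (L + 1))
      · have he : iS (L + 1) = D (jS (L + 1)) := by rw [hisucc, if_pos hif]
        have hle1 := hDle (jS (L + 1))
        rcases le_or_gt (jS (L + 1)) (c + s) with hlo | hhi
        · have hd := hdlow (jS (L + 1)) (by omega) hlo
          omega
        · have hd := hdhigh (jS (L + 1)) hhi (by omega)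
          omega
      · have he : iS (L + 1) = jS (L + 1) := by rw [hisucc, if_neg hif]
        have hAle : D (jS (L + 1)) ≤ iS L := not_lt.mp hif
        rcases le_or_gt (jS (L + 1)) (c + s) with hlo | hhi
        · have hdel : D (jS (L + 1)) = c := hdlow _ (by omega) hlo
          obtain ⟨L', hL', hLc⟩ := ih (by omega) (by omega)
            (Or.inr (Or.inl ⟨hlo,
              lt_of_le_of_lt (hile L) (hjmono L (L + 1) (by omega) (by omega))⟩))
          exact ⟨L', by omega, hLc⟩
        · have hdel : D (jS (L + 1)) = jS (L + 1) - 1 := hdhigh _ hhi (by omega)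
          obtain ⟨L', hL', hLc⟩ := ih (by omega) (by omega)
            (Or.inr (Or.inr ⟨by omega, by omega, by omega⟩))
          exact ⟨L', by omega, hLc⟩

/-- For every tame signature `(a_0,…,a_{f−1})` and every subset `J ⊆ ℤ/fℤ`, the set
`μ(J)` is admissible. -/
theorem sigMu_admissible (p f : ℕ) (a : ℤ → ℕ) (hp : p.Prime)
    (hsig : IsTameSignature p f a) (J : Set (ZMod f)) :
    SigAdmissible p f a (sigMu p f a J) := by
  obtain ⟨hf, hper, hbnd, -⟩ := hsig
  have hp1 : 0 < p := hp.pos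
  haveI : NeZero f := ⟨hf.ne'⟩
  unfold sigMu
  split_ifs with hsub hex
  · exact sig_admissible_of_subset hp1 hper J hsub
  · -- main case
    set i₁ := hex.choose with hi₁def
    rw [sigMuFrom_eq]
    have hi₁spec : (↑i₁ : ZMod f) ∈ (sigDeltaBar p f a '' J) \ J := hex.choose_spec
    obtain ⟨hmemI, hnotI⟩ := hi₁spec
    -- there exists j > i₁ with [j] ∈ J and δ j = i₁
    have hexP : ∃ j : ℤ, i₁ < j ∧ (j : ZMod f) ∈ J ∧ sigDelta p a j = i₁ := by
      obtain ⟨x, hxJ, hxd⟩ := hmemI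
      have hx : ((x.val : ℤ) : ZMod f) = x := int_cast_val_eq x
      rw [← hx, sigDeltaBar_intCast hp1 hper] at hxd
      have hd : (f : ℤ) ∣ i₁ - sigDelta p a (x.val : ℤ) :=
        ((ZMod.intCast_eq_intCast_iff _ _ f).mp hxd).dvd
      obtain ⟨k, hk⟩ := hd
      have hdj : sigDelta p a ((x.val : ℤ) + k * f) = i₁ := by
        rw [sigDelta_shift hper hp1]; linarith
      have hxx : (((x.val : ℤ) + k * (f : ℤ) : ℤ) : ZMod f) = x := by
        push_cast
        rw [ZMod.natCast_self, mul_zero, add_zero]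
        exact ZMod.natCast_rightInverse x
      have hle := sigDelta_le p a ((x.val : ℤ) + k * f)
      have hne' : i₁ ≠ (x.val : ℤ) + k * f := by
        intro h
        exact hnotI (by rw [h]; rw [hxx]; exact hxJ)
      exact ⟨(x.val : ℤ) + k * f, by omega, by rw [hxx]; exact hxJ, hdj⟩
    have hexL : ∃ j : ℤ, (i₁ < j ∧ (j : ZMod f) ∈ J ∧ sigDelta p a j = i₁) ∧
        ∀ j' : ℤ, (i₁ < j' ∧ (j' : ZMod f) ∈ J ∧ sigDelta p a j' = i₁) → j ≤ j' := by
      obtain ⟨lb, h1, h2⟩ := Int.exists_least_of_bdd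
        (P := fun j => i₁ < j ∧ (j : ZMod f) ∈ J ∧ sigDelta p a j = i₁)
        ⟨i₁ + 1, fun z hz => by linarith [hz.1]⟩ hexP
      exact ⟨lb, h1, h2⟩
    have hJ1def : sigJ1 p f a J i₁ = hexL.choose := by unfold sigJ1; rw [dif_pos hexL]
    have hj₁lt : i₁ < sigJ1 p f a J i₁ := by rw [hJ1def]; exact hexL.choose_spec.1.1
    have hj₁J : ((sigJ1 p f a J i₁ : ℤ) : ZMod f) ∈ J := by
      rw [hJ1def]; exact hexL.choose_spec.1.2.1
    have hj₁d : sigDelta p a (sigJ1 p f a J i₁) = i₁ := by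
      rw [hJ1def]; exact hexL.choose_spec.1.2.2
    -- the predicate Q
    have hjSeq : ∀ κ : ℕ, sigjS p f a J i₁ κ = sigJ1 p f a J i₁ +
        (Nat.nth (fun v : ℕ => ∃ x ∈ J, (x - ((sigJ1 p f a J i₁ : ℤ) : ZMod f)).val = v) κ : ℤ) :=
      fun _ => rfl
    have hQfin : {v : ℕ | ∃ x ∈ J, (x - ((sigJ1 p f a J i₁ : ℤ) : ZMod f)).val = v}.Finite := by
      apply Set.Finite.subset (Set.finite_Iio f)
      rintro v ⟨x, _, he⟩
      simpa [← he] using ZMod.val_lt _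
    have hinj : Function.Injective
        (fun x : ZMod f => (x - ((sigJ1 p f a J i₁ : ℤ) : ZMod f)).val) := by
      intro x y h
      have h2 : x - ((sigJ1 p f a J i₁ : ℤ) : ZMod f) = y - ((sigJ1 p f a J i₁ : ℤ) : ZMod f) :=
        ZMod.val_injective f h
      exact sub_left_injective h2
    have hQim : {v : ℕ | ∃ x ∈ J, (x - ((sigJ1 p f a J i₁ : ℤ) : ZMod f)).val = v} =
        (fun x : ZMod f => (x - ((sigJ1 p f a J i₁ : ℤ) : ZMod f)).val) '' J := by
      ext v
      constructor
      · rintro ⟨x, hx, he⟩; exact ⟨x, hx, he⟩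
      · rintro ⟨x, hx, he⟩; exact ⟨x, hx, he⟩
    have hcard : hQfin.toFinset.card = J.ncard := by
      rw [← Set.ncard_eq_toFinset_card _ hQfin, hQim, Set.ncard_image_of_injective J hinj]
    have hjmem : ∀ κ : ℕ, κ < J.ncard → ((sigjS p f a J i₁ κ : ℤ) : ZMod f) ∈ J := by
      intro κ hκ
      have hQ := Nat.nth_mem_of_lt_card hQfin (by rw [hcard]; exact hκ)
      obtain ⟨x, hxJ, hval⟩ := hQ
      have h6 : (((x - ((sigJ1 p f a J i₁ : ℤ) : ZMod f)).val : ℕ) : ZMod f) =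
          x - ((sigJ1 p f a J i₁ : ℤ) : ZMod f) := ZMod.natCast_rightInverse _
      have h7 : ((sigjS p f a J i₁ κ : ℤ) : ZMod f) = x := by
        rw [hjSeq κ]
        push_cast
        rw [← hval, h6]
        ring
      rw [h7]; exact hxJ
    have hjmono : ∀ κ κ' : ℕ, κ < κ' → κ' < J.ncard →
        sigjS p f a J i₁ κ < sigjS p f a J i₁ κ' := by
      intro κ κ' h hr'
      rw [hjSeq, hjSeq]
      have := Nat.nth_lt_nth_of_lt_card hQfin h (by rw [hcard]; exact hr')
      omega
    have hj0 : sigjS p f a J i₁ 0 = sigJ1 p f a J i₁ := by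
      rw [hjSeq]
      have hQ0 : (fun v : ℕ => ∃ x ∈ J, (x - ((sigJ1 p f a J i₁ : ℤ) : ZMod f)).val = v) 0 :=
        ⟨((sigJ1 p f a J i₁ : ℤ) : ZMod f), hj₁J, by rw [sub_self, ZMod.val_zero]⟩
      rw [Nat.nth_zero_of_zero hQ0]
      simp
    have hile : ∀ κ : ℕ, sigiS p f a J i₁ κ ≤ sigjS p f a J i₁ κ := by
      intro κ
      cases κ with
      | zero => rw [sigiS_zero, hj0]; exact hj₁lt.le
      | succ κ =>
        rw [sigiS_succ]
        split_ifs
        · exact sigDelta_le p a _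
        · exact le_refl _
    have histep : ∀ κ : ℕ, κ + 1 < J.ncard → sigiS p f a J i₁ κ < sigiS p f a J i₁ (κ + 1) := by
      intro κ hr'
      rw [sigiS_succ]
      split_ifs with h
      · exact h
      · exact lt_of_le_of_lt (hile κ) (hjmono κ (κ + 1) (by omega) hr')
    -- now the dependent pair
    intro x y hdep hyM
    obtain ⟨c₀, t, ht1, htf, hx, hy, h1₀, hne₀, s, hs1, hst, hmid₀, htail₀⟩ := hdep
    obtain ⟨κ, hκ, hyv⟩ := hyM
    obtain ⟨c, hiκ⟩ : ∃ c : ℤ, sigiS p f a J i₁ κ = c + t :=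
      ⟨sigiS p f a J i₁ κ - t, by ring⟩
    have h5 : ((c₀ + t : ℤ) : ZMod f) = ((c + t : ℤ) : ZMod f) := by
      rw [← hy, hyv, hiκ]
    push_cast at h5
    have hcc : (c : ZMod f) = (c₀ : ZMod f) := (add_right_cancel h5).symm
    have hshift : ∀ m m' : ℤ, m - c = m' - c₀ → a m = a m' := by
      intro m m' hm
      apply sig_a_congr hper
      have hm2 : m = m' + c - c₀ := by omega
      rw [hm2]
      push_cast
      rw [hcc]
      ring_nf
    have h1 : a (c + 1) = p := by rw [hshift (c + 1) (c₀ + 1) (by ring)]; exact h1₀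
    have hne : a (c + t + 1) ≠ p := by
      rw [hshift (c + t + 1) (c₀ + t + 1) (by ring)]; exact hne₀
    have hmid : ∀ m : ℤ, c + 2 ≤ m → m ≤ c + s → a m = p - 1 := by
      intro m hm1 hm2
      rw [hshift m (m - c + c₀) (by ring)]
      exact hmid₀ _ (by omega) (by omega)
    have htail : ∀ m : ℤ, c + s + 1 ≤ m → m ≤ c + t → a m = p := by
      intro m hm1 hm2
      rw [hshift m (m - c + c₀) (by ring)]
      exact htail₀ _ (by omega) (by omega)
    have hdlow : ∀ j : ℤ, c < j → j ≤ c + s → sigDelta p a j = c :=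
      fun j hj1 hj2 => sig_delta_low hp1 h1 hmid hj1 hj2
    have hdhigh : ∀ j : ℤ, c + s < j → j ≤ c + t → sigDelta p a j = j - 1 :=
      fun j hj1 hj2 => sig_delta_high hp1 htail hj1 hj2
    have hdlt : ∀ j : ℤ, c < j → j ≤ c + t → sigDelta p a j < j := by
      intro j hj1 hj2
      rcases le_or_gt j (c + s) with h | h
      · rw [hdlow j hj1 h]; exact hj1
      · rw [hdhigh j h hj2]; omega
    have hwitP : ∀ j : ℤ, sigDelta p a j < j → a (sigDelta p a j + 1) = p := by
      intro j hlt
      rcases sigDelta_cases p a j with h | h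
      · exact absurd h (ne_of_lt hlt)
      · exact h.2.1
    -- κ must be a successor
    obtain ⟨κ', rfl⟩ : ∃ κ', κ = κ' + 1 := by
      cases κ with
      | zero =>
        exfalso
        have hz : sigiS p f a J i₁ 0 = i₁ := sigiS_zero p f a J i₁
        have hw := hwitP (sigJ1 p f a J i₁) (by rw [hj₁d]; exact hj₁lt)
        rw [hj₁d] at hw
        apply hne
        rw [show c + t + 1 = i₁ + 1 by omega]
        exact hw
      | succ κ' => exact ⟨κ', rfl⟩
    -- i_κ = j_κ and case A
    have hA : sigiS p f a J i₁ (κ' + 1) = sigjS p f a J i₁ (κ' + 1) ∧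
        sigDelta p a (sigjS p f a J i₁ (κ' + 1)) ≤ sigiS p f a J i₁ κ' := by
      by_cases hif : sigiS p f a J i₁ κ' < sigDelta p a (sigjS p f a J i₁ (κ' + 1))
      · exfalso
        have he : sigiS p f a J i₁ (κ' + 1) = sigDelta p a (sigjS p f a J i₁ (κ' + 1)) := by
          rw [sigiS_succ, if_pos hif]
        rcases sigDelta_cases p a (sigjS p f a J i₁ (κ' + 1)) with hcase | hcase
        · have hj : sigjS p f a J i₁ (κ' + 1) = c + t := by omega
          rw [hj] at hcase
          have := hdlt (c + t) (by omega) (le_refl _)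
          omega
        · have hdc : sigDelta p a (sigjS p f a J i₁ (κ' + 1)) = c + t := by omega
          rw [hdc] at hcase
          exact hne hcase.2.1
      · exact ⟨by rw [sigiS_succ, if_neg hif], not_lt.mp hif⟩
    have hjc : sigjS p f a J i₁ (κ' + 1) = c + t := by
      rw [← hA.1]; exact hiκ
    have hd_ct : sigDelta p a (c + t) ≤ sigiS p f a J i₁ κ' := by
      rw [← hjc]; exact hA.2
    have histp : sigiS p f a J i₁ κ' < sigiS p f a J i₁ (κ' + 1) := histep κ' hκ
    have hi0 : sigDelta p a (sigjS p f a J i₁ 0) = sigiS p f a J i₁ 0 := by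
      rw [hj0, sigiS_zero]; exact hj₁d
    have hi0lt : sigiS p f a J i₁ 0 < sigjS p f a J i₁ 0 := by
      rw [hj0, sigiS_zero]; exact hj₁lt
    have hdescent := sig_descent hs1 hst hdlow hdhigh (sigDelta_le p a) hjmono hile histep
      hi0 hi0lt (sigiS_succ p f a J i₁) κ' hκ
    have hmain : ∃ L' : ℕ, L' ≤ κ' ∧ sigiS p f a J i₁ L' = c := by
      rcases eq_or_lt_of_le hst with hseq | hslt
      · -- s = t
        have hdel : sigDelta p a (c + t) = c := hdlow (c + t) (by omega) (by omega)
        exact hdescent (by omega)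
          (Or.inr (Or.inl ⟨by omega, by omega⟩))
      · -- s < t
        have hdel : sigDelta p a (c + t) = c + t - 1 := hdhigh (c + t) (by omega) (le_refl _)
        exact hdescent (by omega)
          (Or.inr (Or.inr ⟨by omega, by omega, by omega⟩))
    obtain ⟨L', hL', hLc⟩ := hmain
    refine ⟨L', by omega, ?_⟩
    rw [hx, hLc]
    exact hcc.symm
  · -- the non-existence branch is impossible
    exfalso
    apply hex
    obtain ⟨x, hx1, hx2⟩ := Set.not_subset.mp hsub
    refine ⟨(x.val : ℤ), ?_⟩
    rw [int_cast_val_eq]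
    exact ⟨hx1, hx2⟩
end
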